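/- arXiv:1603.09695 — 13 statements merged into one kernel-verified Lean document; each statement's English description precedes it below -/
import Mathlib

section
/- Let M be an abelian monoid and μ ∈ M. Then μ does not have Unbounded Generating Number if and only if there exists a positive integer n such that nμ is properly infinite. -/
private lemma iter_le {M : Type} [AddCommMonoid M] (a b : M)
    (h : ∃ z, a + b + z = a) : ∀ m : ℕ, ∃ z, a + m • b + z = a := by
  intro m
  induction m with
  | zero => exact ⟨0, by simp⟩
  | succ m ih =>
    obtain ⟨w, hw⟩ := ih
    obtain ⟨z, hz⟩ := h
    refine ⟨w + z, ?_⟩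
    rw [succ_nsmul]
    calc a + (m • b + b) + (w + z) = (a + m • b + w) + b + z := by abel
      _ = a + b + z := by rw [hw]
      _ = a := hz

/-- Let `M` be an abelian monoid and `μ ∈ M`, where `x ≤ y` means
`∃ z, x + z = y`, an element `u` is properly infinite iff `2 • u ≤ u`, and `μ` has
Unbounded Generating Number iff for all positive `n, n'`, `n • μ ≤ n' • μ → n ≤ n'`.
Then `μ` does not have UGN iff `n • μ` is properly infinite for some positive integer
`n`. -/
theorem stmt_4 (M : Type) [AddCommMonoid M] (μ : M) :
    (¬ ∀ n n' : ℕ, 0 < n → 0 < n' → (∃ z : M, n • μ + z = n' • μ) → n ≤ n') ↔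
      ∃ n : ℕ, 0 < n ∧ ∃ z : M, 2 • (n • μ) + z = n • μ := by
  constructor
  · intro h
    push_neg at h
    obtain ⟨n, n', hn, hn', ⟨z, hz⟩, hlt⟩ := h
    set k := n - n' with hk
    have hkpos : 0 < k := Nat.sub_pos_of_lt hlt
    have hnk : n = n' + k := by omega
    -- a + k•μ ≤ a with a = n'•μ
    have hbase : ∃ w, n' • μ + k • μ + w = n' • μ := by
      refine ⟨z, ?_⟩
      rw [← add_nsmul, ← hnk, hz]
    obtain ⟨w, hw⟩ := iter_le (n' • μ) (k • μ) hbase n'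
    rw [smul_smul] at hw
    set N := n' * k with hN
    have hNpos : 0 < N := Nat.mul_pos hn' hkpos
    have hn'N : n' ≤ N := Nat.le_mul_of_pos_right n' hkpos
    refine ⟨N, hNpos, ⟨w, ?_⟩⟩
    have hsplit : N • μ = n' • μ + (N - n') • μ := by
      rw [← add_nsmul, Nat.add_sub_cancel' hn'N]
    calc 2 • (N • μ) + w = (n' • μ + N • μ + w) + (N - n') • μ := by
          rw [two_nsmul]; nth_rewrite 2 [hsplit]; abel
      _ = n' • μ + (N - n') • μ := by rw [hw]
      _ = N • μ := hsplit.symm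
  · rintro ⟨n, hn, z, hz⟩ h
    have := h (2 * n) n (by omega) hn ⟨z, by rw [mul_comm, mul_nsmul]; exact hz⟩
    omega
end

section
/- Let M be an abelian monoid and let d₁ and d₂ be order-units in M. Then d₁ has Unbounded Generating Number if and only if d₂ has Unbounded Generating Number. -/
section Aux

variable {M : Type} [AddCommMonoid M]

private lemma leM_trans {x y w : M} (h1 : ∃ z, x + z = y) (h2 : ∃ z, y + z = w) :
    ∃ z, x + z = w := by
  obtain ⟨z1, hz1⟩ := h1
  obtain ⟨z2, hz2⟩ := h2
  exact ⟨z1 + z2, by rw [← add_assoc, hz1, hz2]⟩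

private lemma leM_smul_mono (d : M) {m m' : ℕ} (h : m ≤ m') :
    ∃ z, m • d + z = m' • d :=
  ⟨(m' - m) • d, by rw [← add_nsmul, Nat.add_sub_cancel' h]⟩

private lemma leM_smul {x y : M} (k : ℕ) (h : ∃ z, x + z = y) :
    ∃ z, k • x + z = k • y := by
  obtain ⟨z, hz⟩ := h
  exact ⟨k • z, by rw [← smul_add, hz]⟩

private lemma key (d₁ d₂ : M) (a b : ℕ) (ha : 0 < a) (hb : 0 < b)
    (hda : ∃ z, d₂ + z = a • d₁) (hdb : ∃ z, d₁ + z = b • d₂)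
    (H : ∀ n n' : ℕ, 0 < n → 0 < n' → (∃ z : M, n • d₁ + z = n' • d₁) → n ≤ n') :
    ∀ n n' : ℕ, 0 < n → 0 < n' → (∃ z : M, n • d₂ + z = n' • d₂) → n ≤ n' := by
  intro n n' hn hn' hle
  by_contra hlt
  push_neg at hlt
  obtain ⟨z, hz⟩ := hle
  set c := n - n' with hc
  have hc1 : 1 ≤ c := by omega
  -- claim: (n' + k*c) • d₂ ≤ n' • d₂ for all k
  have claim : ∀ k : ℕ, ∃ w, (n' + k * c) • d₂ + w = n' • d₂ := by
    intro k
    induction k with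
    | zero => exact ⟨0, by simp⟩
    | succ k ih =>
      obtain ⟨w, hw⟩ := ih
      refine ⟨z + w, ?_⟩
      have hnc : n' + c = n := by omega
      have he : n' + (k + 1) * c = n + k * c := by rw [← hnc]; ring
      rw [he, add_nsmul]
      calc n • d₂ + (k * c) • d₂ + (z + w)
          = (n • d₂ + z) + ((k * c) • d₂ + w) := by
            rw [add_assoc, add_assoc]
            congr 1
            rw [← add_assoc, ← add_assoc, add_comm z ((k * c) • d₂)]
        _ = n' • d₂ + (k * c) • d₂ + w := by rw [hz, ← add_assoc]
        _ = (n' + k * c) • d₂ + w := by rw [add_nsmul]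
        _ = n' • d₂ := hw
  -- hence any multiple of d₂ is ≤ n' • d₂
  have all_le : ∀ m : ℕ, ∃ w, m • d₂ + w = n' • d₂ := by
    intro m
    refine leM_trans (leM_smul_mono d₂ (m' := n' + m * c) ?_) (claim m)
    calc m ≤ m * c := Nat.le_mul_of_pos_right m (by omega)
      _ ≤ n' + m * c := Nat.le_add_left _ _
  set N := n' * a + 1 with hN
  have step1 : ∃ w, N • d₁ + w = (N * b) • d₂ := by
    have := leM_smul N hdb
    rwa [smul_smul] at this
  have step2 : ∃ w, n' • d₂ + w = (n' * a) • d₁ := by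
    have := leM_smul n' hda
    rwa [smul_smul] at this
  have final : ∃ w, N • d₁ + w = (n' * a) • d₁ :=
    leM_trans step1 (leM_trans (all_le (N * b)) step2)
  have := H N (n' * a) (by omega) (by positivity) final
  omega

end Aux

/-- Let `M` be an abelian monoid and `d₁`, `d₂` order-units of `M`
(`d` is an order-unit iff every `x ∈ M` satisfies `x ≤ n • d` for some positive `n`,
where `x ≤ y` means `∃ z, x + z = y`).  Then `d₁` has Unbounded Generating Number
(for all positive `n, n'`, `n • d₁ ≤ n' • d₁ → n ≤ n'`) iff `d₂` does. -/
theorem stmt_5 (M : Type) [AddCommMonoid M] (d₁ d₂ : M)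
    (h₁ : ∀ x : M, ∃ n : ℕ, 0 < n ∧ ∃ z : M, x + z = n • d₁)
    (h₂ : ∀ x : M, ∃ n : ℕ, 0 < n ∧ ∃ z : M, x + z = n • d₂) :
    ((∀ n n' : ℕ, 0 < n → 0 < n' → (∃ z : M, n • d₁ + z = n' • d₁) → n ≤ n') ↔
      (∀ n n' : ℕ, 0 < n → 0 < n' → (∃ z : M, n • d₂ + z = n' • d₂) → n ≤ n')) := by
  obtain ⟨a, ha, hda⟩ := h₁ d₂
  obtain ⟨b, hb, hdb⟩ := h₂ d₁
  exact ⟨key d₁ d₂ a b ha hb hda hdb, key d₂ d₁ b a hb ha hdb hda⟩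
end

section
/- Let R and S be Morita equivalent unital rings (i.e., the categories of right R-modules and right S-modules are equivalent). Then R has Unbounded Generating Number if and only if S has Unbounded Generating Number. -/
open MulOpposite

section SD
variable (W : Type) [Ring W]

/-- `M` is a direct summand of `N` (split mono from M to N). -/
def SD (M N : Type) [AddCommGroup M] [AddCommGroup N] [Module W M] [Module W N] : Prop :=
  ∃ (i : M →ₗ[W] N) (r : N →ₗ[W] M), r.comp i = LinearMap.id

variable {W}
variable {M N P : Type} [AddCommGroup M] [AddCommGroup N] [AddCommGroup P]
  [Module W M] [Module W N] [Module W P]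

theorem SD.refl : SD W M M := ⟨LinearMap.id, LinearMap.id, rfl⟩

theorem SD.trans (h1 : SD W M N) (h2 : SD W N P) : SD W M P := by
  obtain ⟨i1, r1, h1⟩ := h1
  obtain ⟨i2, r2, h2⟩ := h2
  refine ⟨i2.comp i1, r1.comp r2, ?_⟩
  apply LinearMap.ext; intro x
  simp only [LinearMap.comp_apply, LinearMap.id_apply]
  rw [show r2 (i2 (i1 x)) = i1 x from LinearMap.ext_iff.1 h2 (i1 x),
    show r1 (i1 x) = x from LinearMap.ext_iff.1 h1 x]

theorem SD.of_equiv (e : M ≃ₗ[W] N) : SD W M N :=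
  ⟨e.toLinearMap, e.symm.toLinearMap, by apply LinearMap.ext; intro x; simp⟩

theorem SD.congr_left (e : M ≃ₗ[W] N) (h : SD W M P) : SD W N P :=
  (SD.of_equiv e.symm).trans h

theorem SD.congr_right (e : N ≃ₗ[W] P) (h : SD W M N) : SD W M P :=
  h.trans (SD.of_equiv e)

theorem SD.pi (ι : Type) (h : SD W M N) : SD W (ι → M) (ι → N) := by
  obtain ⟨i, r, hir⟩ := h
  refine ⟨LinearMap.pi (fun j => i.comp (LinearMap.proj j)),
    LinearMap.pi (fun j => r.comp (LinearMap.proj j)), ?_⟩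
  apply LinearMap.ext; intro v; funext j
  simpa [LinearMap.pi_apply] using LinearMap.ext_iff.1 hir (v j)

theorem SD.prod (h : SD W M N) : SD W (M × P) (N × P) := by
  obtain ⟨i, r, hir⟩ := h
  refine ⟨i.prodMap LinearMap.id, r.prodMap LinearMap.id, ?_⟩
  apply LinearMap.ext; intro v
  have := LinearMap.ext_iff.1 hir v.1
  simp only [LinearMap.comp_apply, LinearMap.id_apply] at this ⊢
  simp [LinearMap.prodMap_apply, this]

theorem SD.le {a b : ℕ} (hab : a ≤ b) : SD W (Fin a → M) (Fin b → M) := by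
  refine ⟨LinearMap.pi (fun k : Fin b => if h : (k : ℕ) < a then LinearMap.proj (⟨k, h⟩ : Fin a) else 0),
    LinearMap.funLeft W M (Fin.castLE hab), ?_⟩
  apply LinearMap.ext; intro v; funext j
  simp [LinearMap.funLeft, LinearMap.pi_apply, j.isLt]

theorem SD.append {a b : ℕ} (c : ℕ) (h : SD W (Fin a → M) (Fin b → M)) :
    SD W (Fin (a + c) → M) (Fin (b + c) → M) := by
  have e1 : (Fin (a + c) → M) ≃ₗ[W] (Fin a → M) × (Fin c → M) :=
    (LinearEquiv.funCongrLeft W M finSumFinEquiv).trans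
      (LinearEquiv.sumArrowLequivProdArrow (Fin a) (Fin c) W M)
  have e2 : (Fin (b + c) → M) ≃ₗ[W] (Fin b → M) × (Fin c → M) :=
    (LinearEquiv.funCongrLeft W M finSumFinEquiv).trans
      (LinearEquiv.sumArrowLequivProdArrow (Fin b) (Fin c) W M)
  exact ((h.prod).congr_left e1.symm).congr_right e2.symm

theorem SD.uncurry {a b : ℕ} : SD W (Fin a → Fin b → M) (Fin (a * b) → M) := by
  refine SD.of_equiv ?_
  exact ((LinearEquiv.curry W M (Fin a) (Fin b)).symm).trans
    (LinearEquiv.funCongrLeft W M finProdFinEquiv.symm)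

end SD


variable (W : Type) [Ring W]

def MatC (m n : ℕ) : Prop :=
  ∃ (A : Matrix (Fin m) (Fin n) W) (B : Matrix (Fin n) (Fin m) W), A * B = 1

variable {W}

theorem matC_op {m n : ℕ} (h : MatC W m n) : MatC Wᵐᵒᵖ m n := by
  obtain ⟨A, B, hAB⟩ := h
  refine ⟨B.transpose.map op, A.transpose.map op, ?_⟩
  ext i j
  have : (B.transpose.map op * A.transpose.map op) i j = op ((A * B) j i) := by
    simp only [Matrix.mul_apply, Matrix.map_apply, Matrix.transpose_apply, ← op_mul]
    exact (map_sum (opAddEquiv : W ≃+ Wᵐᵒᵖ) _ _).symm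
  rw [this, hAB]
  rcases eq_or_ne i j with hij | hij
  · subst hij; simp [Matrix.one_apply]
  · simp [Matrix.one_apply, hij, hij.symm]

theorem matC_unop {m n : ℕ} (h : MatC Wᵐᵒᵖ m n) : MatC W m n := by
  obtain ⟨A, B, hAB⟩ := h
  refine ⟨B.transpose.map unop, A.transpose.map unop, ?_⟩
  ext i j
  have : (B.transpose.map unop * A.transpose.map unop) i j = unop ((A * B) j i) := by
    simp only [Matrix.mul_apply, Matrix.map_apply, Matrix.transpose_apply, ← unop_mul]
    exact (map_sum (opAddEquiv : W ≃+ Wᵐᵒᵖ).symm _ _).symm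
  rw [this, hAB]
  rcases eq_or_ne i j with hij | hij
  · subst hij; simp [Matrix.one_apply]
  · simp [Matrix.one_apply, hij, hij.symm]


theorem matC_iff_SD {m n : ℕ} : MatC W m n ↔ SD W (Fin m → W) (Fin n → W) := by
  constructor
  · rintro ⟨A, B, hAB⟩
    refine ⟨Matrix.toLinearMapRight' A, Matrix.toLinearMapRight' B, ?_⟩
    rw [← Matrix.toLinearMapRight'_mul, hAB, Matrix.toLinearMapRight'_one]
  · rintro ⟨i, r, hir⟩
    refine ⟨(Matrix.toLinearMapRight' (R := W)).symm i,
      (Matrix.toLinearMapRight' (R := W)).symm r, ?_⟩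
    apply (Matrix.toLinearMapRight' (R := W) (m := Fin m) (n := Fin m)).injective
    rw [Matrix.toLinearMapRight'_mul, Matrix.toLinearMapRight'_one]
    simp only [LinearEquiv.apply_symm_apply]
    exact hir

section Cat
open CategoryTheory CategoryTheory.Limits
open scoped DirectSum
variable {T U : Type} [Ring T] [Ring U]

theorem SD_map (F : ModuleCat.{0} T ⥤ ModuleCat.{0} U) {X Y : ModuleCat.{0} T}
    (h : SD T X Y) : SD U (F.obj X) (F.obj Y) := by
  obtain ⟨i, r, hir⟩ := h
  refine ⟨(F.map (ModuleCat.ofHom i)).hom, (F.map (ModuleCat.ofHom r)).hom, ?_⟩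
  rw [← ModuleCat.hom_comp, ← F.map_comp,
    show ModuleCat.ofHom i ≫ ModuleCat.ofHom r = 𝟙 X from ModuleCat.hom_ext hir, F.map_id]
  rfl

theorem equivFunctorAdditive (e : ModuleCat.{0} T ≌ ModuleCat.{0} U) : e.functor.Additive :=
  Functor.additive_of_preserves_binary_products e.functor

noncomputable def powIso (F : ModuleCat.{0} T ⥤ ModuleCat.{0} U) [F.Additive]
    (X : ModuleCat.{0} T) (n : ℕ) :
    F.obj (ModuleCat.of T (Fin n → X)) ≅ ModuleCat.of U (Fin n → F.obj X) :=
  F.mapIso (ModuleCat.biproductIsoPi (fun _ : Fin n => X)).symm ≪≫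
    F.mapBiproduct _ ≪≫ ModuleCat.biproductIsoPi _

theorem SD_restrict {W : Type} [Ring W] {ι M : Type} [AddCommGroup M] [Module W M]
    (h : SD W W (⨁ _ : ι, M)) : ∃ k : ℕ, SD W W (Fin k → M) := by
  classical
  obtain ⟨i, r, hir⟩ := h
  set x : ⨁ _ : ι, M := i 1 with hx
  set Sp : Finset ι := DFinsupp.support x with hSp
  refine ⟨Sp.card, ?_⟩
  let eqv : {j // j ∈ Sp} ≃ Fin Sp.card := Sp.equivFin
  let pr : (⨁ _ : ι, M) →ₗ[W] (Fin Sp.card → M) :=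
    LinearMap.pi (fun j => DirectSum.component W ι (fun _ => M) ((eqv.symm j) : ι))
  let inc : (Fin Sp.card → M) →ₗ[W] (⨁ _ : ι, M) :=
    ∑ j : Fin Sp.card, (DirectSum.lof W ι (fun _ => M) ((eqv.symm j) : ι)).comp
      (LinearMap.proj j)
  refine ⟨pr.comp i, r.comp inc, ?_⟩
  apply LinearMap.ext_ring
  simp only [LinearMap.comp_apply, LinearMap.id_apply, ← hx]
  have key : inc (pr x) = x := by
    have h1 : inc (pr x) = ∑ j : Fin Sp.card,
        DirectSum.lof W ι (fun _ => M) ((eqv.symm j) : ι) (x ((eqv.symm j) : ι)) := by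
      simp [inc, pr, LinearMap.sum_apply, LinearMap.pi_apply,
        ← DirectSum.apply_eq_component]
    rw [h1]
    rw [Equiv.sum_comp eqv.symm (fun s : {j // j ∈ Sp} =>
      DirectSum.lof W ι (fun _ => M) (s : ι) (x (s : ι)))]
    rw [Finset.sum_coe_sort Sp (fun a => DirectSum.lof W ι (fun _ => M) a (x a))]
    simp only [DirectSum.lof_eq_of]
    exact DirectSum.sum_support_of x
  rw [key]
  exact LinearMap.ext_iff.1 hir 1

theorem gen (e : ModuleCat.{0} T ≌ ModuleCat.{0} U) :
    ∃ k : ℕ, SD T T (Fin k → (e.inverse.obj (ModuleCat.of U U))) := by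
  classical
  set Q : ModuleCat.{0} U := e.functor.obj (ModuleCat.of T T) with hQ
  set P : ModuleCat.{0} T := e.inverse.obj (ModuleCat.of U U) with hP
  -- projectivity of Q
  haveI hTproj : Projective (ModuleCat.of T T) :=
    ModuleCat.projective_of_free (M := ModuleCat.of T T) (Module.Basis.singleton PUnit.{1} T)
  haveI hQproj : Projective Q := (e.map_projective_iff (ModuleCat.of T T)).mpr hTproj
  -- free cover of Q
  let p : (⨁ _ : (Q : Type), U) →ₗ[U] (Q : Type) :=
    DirectSum.toModule U (Q : Type) (Q : Type) (fun q => LinearMap.toSpanSingleton U _ q)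
  let πhom : ModuleCat.of U (⨁ _ : (Q : Type), U) ⟶ Q := ModuleCat.ofHom p
  haveI : Epi πhom := by
    rw [ModuleCat.epi_iff_surjective]
    intro q
    refine ⟨DirectSum.lof U (Q : Type) (fun _ => U) q 1, ?_⟩
    show p _ = q
    simp [p, DirectSum.toModule_lof, LinearMap.toSpanSingleton_apply]
  let s : Q ⟶ ModuleCat.of U (⨁ _ : (Q : Type), U) := Projective.factorThru (𝟙 Q) πhom
  have hs : s ≫ πhom = 𝟙 Q := Projective.factorThru_comp _ _
  have hSDQ : SD U Q (ModuleCat.of U (⨁ _ : (Q : Type), U)) :=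
    ⟨s.hom, πhom.hom, by rw [← ModuleCat.hom_comp, hs]; rfl⟩
  -- transport along e.inverse
  have hSD2 := SD_map e.inverse hSDQ
  -- iso : e.inverse.obj (of U (⨁ _ : Q, U)) ≅ of T (⨁ _ : Q, P)
  let c1 : ∐ (fun _ : (Q : Type) => ModuleCat.of U U) ≅ ModuleCat.of U (⨁ _ : (Q : Type), U) :=
    ModuleCat.coprodIsoDirectSum _
  let c2 : e.inverse.obj (∐ (fun _ : (Q : Type) => ModuleCat.of U U)) ≅
      ∐ (fun _ : (Q : Type) => P) :=
    PreservesCoproduct.iso e.inverse _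
  let c3 : ∐ (fun _ : (Q : Type) => P) ≅ ModuleCat.of T (⨁ _ : (Q : Type), (P : Type)) :=
    ModuleCat.coprodIsoDirectSum _
  let ψ : e.inverse.obj (ModuleCat.of U (⨁ _ : (Q : Type), U)) ≅
      ModuleCat.of T (⨁ _ : (Q : Type), (P : Type)) :=
    e.inverse.mapIso c1.symm ≪≫ c2 ≪≫ c3
  have hSD3 : SD T (e.inverse.obj Q) (⨁ _ : (Q : Type), (P : Type)) :=
    SD.congr_right ψ.toLinearEquiv hSD2
  have hSD4 : SD T T (e.inverse.obj Q) :=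
    SD.of_equiv (e.unitIso.app (ModuleCat.of T T)).toLinearEquiv
  obtain ⟨k, hk⟩ := SD_restrict (hSD4.trans hSD3)
  exact ⟨k, hk⟩

end Cat

section Transfer
open CategoryTheory
variable {T U : Type} [Ring T] [Ring U]

theorem matC_transfer (e : ModuleCat.{0} T ≌ ModuleCat.{0} U)
    (hT : ∀ m n : ℕ, 0 < m → 0 < n → MatC T m n → m ≤ n)
    {m n : ℕ} (hm : 0 < m) (hn : 0 < n) (h : MatC U m n) : m ≤ n := by
  by_contra hlt
  push_neg at hlt
  have h0 : SD U (Fin m → U) (Fin n → U) := matC_iff_SD.mp h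
  set d := m - n with hd
  have hdpos : 0 < d := by omega
  have pump : ∀ t : ℕ, SD U (Fin (n + t * d) → U) (Fin n → U) := by
    intro t
    induction t with
    | zero => exact SD.le (by omega)
    | succ t ih =>
      have step : SD U (Fin (m + t * d) → U) (Fin (n + t * d) → U) := SD.append _ h0
      have harith : n + (t + 1) * d ≤ m + t * d := by
        have h' : (t + 1) * d = t * d + d := by ring
        omega
      exact (SD.le harith).trans (step.trans ih)
  -- generator facts
  haveI : e.functor.Additive := equivFunctorAdditive e
  haveI : e.inverse.Additive := equivFunctorAdditive e.symm
  set P : ModuleCat.{0} T := e.inverse.obj (ModuleCat.of U U) with hP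
  set Q : ModuleCat.{0} U := e.functor.obj (ModuleCat.of T T) with hQ
  obtain ⟨k₀, hk₀⟩ := gen e
  set k := k₀ + 1 with hk
  have hkP : SD T T (Fin k → (P : Type)) := hk₀.trans (SD.le (by omega))
  obtain ⟨l₀, hl₀⟩ := gen e.symm
  set l := l₀ + 1 with hl
  have hlQ : SD U U (Fin l → (Q : Type)) := hl₀.trans (SD.le (by omega))
  -- P is a summand of T^l
  have hPl : SD T (P : Type) (Fin l → T) := by
    have h1 : SD U (ModuleCat.of U U) (ModuleCat.of U (Fin l → (Q : Type))) := hlQ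
    have h2 := SD_map e.inverse h1
    have h3 := h2.congr_right (powIso e.inverse Q l).toLinearEquiv
    exact h3.congr_right (LinearEquiv.piCongrRight (fun _ : Fin l =>
      (e.unitIso.app (ModuleCat.of T T)).toLinearEquiv.symm))
  -- pumped facts transported to T
  have pumpT : ∀ t : ℕ, SD T (Fin (n + t * d) → (P : Type)) (Fin n → (P : Type)) := by
    intro t
    have h1 : SD U (ModuleCat.of U (Fin (n + t * d) → U)) (ModuleCat.of U (Fin n → U)) :=
      pump t
    have h2 := SD_map e.inverse h1
    exact ((h2.congr_left (powIso e.inverse (ModuleCat.of U U) (n + t * d)).toLinearEquiv).congr_right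
      (powIso e.inverse (ModuleCat.of U U) n).toLinearEquiv)
  -- final chain
  set a := n * l + 1 with ha
  have c1 : SD T (Fin a → T) (Fin a → (Fin k → (P : Type))) := SD.pi _ hkP
  have c2 : SD T (Fin a → T) (Fin (a * k) → (P : Type)) := c1.trans SD.uncurry
  have c3 : SD T (Fin (a * k) → (P : Type)) (Fin (n + (a * k) * d) → (P : Type)) :=
    SD.le (le_trans (Nat.le_mul_of_pos_right _ hdpos) (Nat.le_add_left _ _))
  have c4 : SD T (Fin a → T) (Fin n → (P : Type)) := (c2.trans c3).trans (pumpT (a * k))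
  have c5 : SD T (Fin n → (P : Type)) (Fin n → (Fin l → T)) := SD.pi _ hPl
  have c6 : SD T (Fin a → T) (Fin (n * l) → T) := (c4.trans c5).trans SD.uncurry
  have : a ≤ n * l := hT a (n * l) (by omega) (by positivity) (matC_iff_SD.mpr c6)
  omega

end Transfer

/-- If `R` and `S` are Morita equivalent unital (nonzero) rings — i.e. the
categories of right `R`-modules and right `S`-modules are equivalent — then `R` has
Unbounded Generating Number if and only if `S` does.  (Right modules over `R` are modules
over `Rᵐᵒᵖ`; UGN is formulated via matrices: whenever `A ∈ M_{m×n}`, `B ∈ M_{n×m}` with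
`A * B = I_m`, then `n ≥ m`.) -/
theorem stmt_6 (R S : Type) [Ring R] [Ring S] [Nontrivial R] [Nontrivial S]
    (h : Nonempty (CategoryTheory.Equivalence (ModuleCat.{0} Rᵐᵒᵖ) (ModuleCat.{0} Sᵐᵒᵖ))) :
    ((∀ m n : ℕ, 0 < m → 0 < n →
        (∃ (A : Matrix (Fin m) (Fin n) R) (B : Matrix (Fin n) (Fin m) R), A * B = 1) →
          m ≤ n) ↔
      (∀ m n : ℕ, 0 < m → 0 < n →
        (∃ (A : Matrix (Fin m) (Fin n) S) (B : Matrix (Fin n) (Fin m) S), A * B = 1) →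
          m ≤ n)) := by
  obtain ⟨e⟩ := h
  constructor
  · intro hR m n hm hn hS
    have hT : ∀ m n : ℕ, 0 < m → 0 < n → MatC Rᵐᵒᵖ m n → m ≤ n :=
      fun m n hm hn hmat => hR m n hm hn (matC_unop hmat)
    exact matC_transfer e hT hm hn (matC_op hS)
  · intro hS m n hm hn hR
    have hT : ∀ m n : ℕ, 0 < m → 0 < n → MatC Sᵐᵒᵖ m n → m ≤ n :=
      fun m n hm hn hmat => hS m n hm hn (matC_unop hmat)
    exact matC_transfer e.symm hT hm hn (matC_op hR)
end

section
/- Let E be a finite source-free directed graph in which no cycle is a source cycle. Then there exists a vertex v ∈ E⁰ such that there are two distinct cycles based at v and such that |r⁻¹(v)| ≥ 2. -/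
variable {V E : Type}

/-- A cycle in the directed graph with edge set `E`, vertex set `V`, and source/range
maps `s r : E → V`: a nonempty list of edges `e₁ ⋯ eₙ` with `r eᵢ = s eᵢ₊₁`
(indices cyclically, so in particular `r eₙ = s e₁`) whose source vertices are pairwise
distinct. -/
def IsCycle (s r : E → V) (c : List E) : Prop :=
  ∃ h : 0 < c.length,
    (∀ (i : ℕ) (hi : i < c.length),
        r (c.get ⟨i, hi⟩) = s (c.get ⟨(i + 1) % c.length, Nat.mod_lt _ h⟩)) ∧
    (c.map s).Nodup

/-- A cycle based at the vertex `v`: a cycle whose first edge has source `v`. -/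
def IsCycleBasedAt (s r : E → V) (c : List E) (v : V) : Prop :=
  IsCycle s r c ∧ (c.map s).head? = some v

namespace Stmt7Aux

def IsWalk (s r : E → V) : V → V → List E → Prop
  | v, w, [] => v = w
  | v, w, e :: l => s e = v ∧ IsWalk s r (r e) w l

theorem IsWalk.append {s r : E → V} {v u w : V} {l₁ l₂ : List E}
    (h₁ : IsWalk s r v u l₁) (h₂ : IsWalk s r u w l₂) :
    IsWalk s r v w (l₁ ++ l₂) := by
  induction l₁ generalizing v with
  | nil => cases h₁; simpa using h₂
  | cons e t ih => exact ⟨h₁.1, ih h₁.2⟩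

theorem IsWalk.split {s r : E → V} {v w : V} {c : List E}
    (h : IsWalk s r v w c) (i : ℕ) (hi : i < c.length) :
    IsWalk s r v (s (c.get ⟨i, hi⟩)) (c.take i) ∧
      IsWalk s r (s (c.get ⟨i, hi⟩)) w (c.drop i) := by
  induction c generalizing v i with
  | nil => simp at hi
  | cons e t ih =>
    cases i with
    | zero => exact ⟨h.1.symm, rfl, h.2⟩
    | succ i =>
      have := ih h.2 i (by simpa using hi)
      exact ⟨⟨h.1, this.1⟩, this.2⟩

theorem IsWalk.get_consec {s r : E → V} {v w : V} {c : List E}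
    (h : IsWalk s r v w c) (i : ℕ) (hi : i + 1 < c.length) :
    r (c.get ⟨i, Nat.lt_of_succ_lt hi⟩) = s (c.get ⟨i + 1, hi⟩) := by
  induction c generalizing v i with
  | nil => simp at hi
  | cons e t ih =>
    cases i with
    | zero =>
      cases t with
      | nil => simp at hi
      | cons f t' => exact h.2.1.symm
    | succ i => exact ih h.2 i (by simpa using hi)

theorem IsWalk.r_getLast {s r : E → V} {v w : V} {c : List E}
    (h : IsWalk s r v w c) (hc : c ≠ []) :
    r (c.getLast hc) = w := by
  induction c generalizing v with
  | nil => exact absurd rfl hc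
  | cons e t ih =>
    cases t with
    | nil => simpa [IsWalk, List.getLast] using h.2
    | cons f t' => simpa [List.getLast] using ih h.2 (by simp)

theorem getLast?_drop_of_lt {c : List E} {j : ℕ} (hj : j < c.length) :
    (c.drop j).getLast? = c.getLast? := by
  have hne : c.drop j ≠ [] := by
    apply List.ne_nil_of_length_pos
    simpa using hj
  conv_rhs => rw [← List.take_append_drop j c]
  rw [List.getLast?_append_of_ne_nil _ hne]

theorem shorten {s r : E → V} {v : V} {c : List E} (hw : IsWalk s r v v c)
    {a b : ℕ} (ha : a < c.length) (hb : b < c.length) (hab : a < b)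
    (hs : s (c.get ⟨a, ha⟩) = s (c.get ⟨b, hb⟩)) :
    ∃ c', IsWalk s r v v c' ∧ c' ≠ [] ∧ c'.getLast? = c.getLast? ∧
      c'.length < c.length := by
  have h₁ := (hw.split a ha).1
  have h₂ := (hw.split b hb).2
  rw [← hs] at h₂
  refine ⟨c.take a ++ c.drop b, h₁.append h₂, ?_, ?_, ?_⟩
  · have : (c.drop b) ≠ [] := List.ne_nil_of_length_pos (by simpa using hb)
    simp [this]
  · have hne : (c.drop b) ≠ [] := List.ne_nil_of_length_pos (by simpa using hb)
    rw [List.getLast?_append_of_ne_nil _ hne, getLast?_drop_of_lt hb]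
  · rw [List.length_append, List.length_take, List.length_drop]
    omega

/-- From a nonempty closed walk based at `v` we can extract a cycle based at `v`
with the same last edge. -/
theorem cycle_of_closed_walk {s r : E → V} {v : V} :
    ∀ (n : ℕ) (c : List E), c.length ≤ n → IsWalk s r v v c → c ≠ [] →
      ∃ c', IsCycleBasedAt s r c' v ∧ c'.getLast? = c.getLast? := by
  intro n
  induction n with
  | zero =>
    intro c hlen _ hne
    exact absurd (List.length_eq_zero_iff.1 (Nat.le_zero.1 hlen)) hne
  | succ n ih =>
    intro c hlen hw hne
    by_cases hnd : (c.map s).Nodup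
    · -- c itself is a cycle based at v
      refine ⟨c, ⟨⟨?_, ?_, hnd⟩, ?_⟩, rfl⟩
      · exact List.length_pos_iff.2 hne
      · intro i hi
        rcases Nat.lt_or_ge (i + 1) c.length with h1 | h1
        · have := hw.get_consec i h1
          simpa [Nat.mod_eq_of_lt h1] using this
        · have hieq : i + 1 = c.length := le_antisymm (Nat.succ_le_of_lt hi) h1
          have h0 : (i + 1) % c.length = 0 := by rw [hieq]; simp
          have hlast : c.get ⟨i, hi⟩ = c.getLast hne := by
            rw [List.getLast_eq_getElem, List.get_eq_getElem]
            congr 1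
            show i = c.length - 1
            omega
          have hs0 : s (c.get ⟨(i + 1) % c.length, Nat.mod_lt _ (List.length_pos_iff.2 hne)⟩) = v := by
            rcases c with _ | ⟨e, t⟩
            · exact absurd rfl hne
            · have : (i + 1) % (e :: t).length = 0 := h0
              simp only [this]
              exact hw.1
          rw [hlast, hw.r_getLast hne, hs0]
      · rcases c with _ | ⟨e, t⟩
        · exact absurd rfl hne
        · simpa using hw.1
    · -- find a duplicate source and shortcut
      rw [List.nodup_iff_injective_get] at hnd
      simp only [Function.Injective, not_forall] at hnd
      obtain ⟨⟨a, ha⟩, ⟨b, hb⟩, hab, hne'⟩ := hnd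
      simp only [List.length_map] at ha hb
      simp only [List.get_eq_getElem, List.getElem_map] at hab
      have hne'' : a ≠ b := by simpa using hne'
      have key : ∃ c', IsWalk s r v v c' ∧ c' ≠ [] ∧ c'.getLast? = c.getLast? ∧
          c'.length < c.length := by
        rcases Nat.lt_or_ge a b with hlt | hge
        · exact shorten hw ha hb hlt hab
        · exact shorten hw hb ha (lt_of_le_of_ne hge (Ne.symm hne'')) hab.symm
      obtain ⟨c', hw', hne', hlast', hlen'⟩ := key
      obtain ⟨c'', h1, h2⟩ := ih c' (by omega) hw' hne'
      exact ⟨c'', h1, h2.trans hlast'⟩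


/-- Reachability: there is a (possibly empty) path from `a` to `b`. -/
def Reach (s r : E → V) (a b : V) : Prop :=
  Relation.ReflTransGen (fun x y => ∃ e, s e = x ∧ r e = y) a b

theorem Reach.exists_walk {s r : E → V} {a b : V} (h : Reach s r a b) :
    ∃ l, IsWalk s r a b l := by
  induction h with
  | refl => exact ⟨[], rfl⟩
  | tail _ hstep ih =>
    obtain ⟨l, hl⟩ := ih
    obtain ⟨e, he₁, he₂⟩ := hstep
    exact ⟨l ++ [e], hl.append (by exact ⟨he₁, by simpa [IsWalk] using he₂⟩)⟩

theorem reach_trans {s r : E → V} {a b c : V} (h₁ : Reach s r a b) (h₂ : Reach s r b c) :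
    Reach s r a c := h₁.trans h₂

/-- There is a vertex `x` minimal for reachability: anything that reaches `x`
is reached by `x`. -/
theorem exists_min [Finite V] (s r : E → V) (hne : Nonempty V) :
    ∃ x : V, ∀ y : V, Reach s r y x → Reach s r x y := by
  classical
  let R : V → V → Prop := fun y x => Reach s r y x ∧ ¬ Reach s r x y
  haveI : IsTrans V R := ⟨by
    rintro a b c ⟨hab, hnba⟩ ⟨hbc, hncb⟩
    exact ⟨hab.trans hbc, fun hca => hncb (hca.trans hab)⟩⟩
  haveI : IsIrrefl V R := ⟨fun a ⟨h, hn⟩ => hn h⟩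
  have hwf : WellFounded R := Finite.wellFounded_of_trans_of_irrefl R
  obtain ⟨x⟩ := hne
  obtain ⟨m, -, hm⟩ := hwf.has_min Set.univ ⟨x, trivial⟩
  refine ⟨m, fun y hy => ?_⟩
  by_contra hn
  exact hm y trivial ⟨hy, hn⟩

/-- Pigeonhole: some forward iterate of `x` is periodic, with distinct iterates
within one minimal period. -/
theorem exists_periodic [Finite V] (p : V → V) (x : V) :
    ∃ (y : V) (k : ℕ), 0 < k ∧ (∃ m, p^[m] x = y) ∧ p^[k] y = y ∧
      ∀ a b, a < k → b < k → p^[a] y = p^[b] y → a = b := by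
  classical
  obtain ⟨i, j, hij, hfij⟩ := Finite.exists_ne_map_eq_of_infinite (fun n : ℕ => p^[n] x)
  -- wlog i < j
  have key : ∀ i' j' : ℕ, i' < j' → p^[i'] x = p^[j'] x →
      ∃ (y : V) (k : ℕ), 0 < k ∧ (∃ m, p^[m] x = y) ∧ p^[k] y = y ∧
        ∀ a b, a < k → b < k → p^[a] y = p^[b] y → a = b := by
    intro i' j' hlt heq
    obtain ⟨y, hy⟩ : ∃ y, y = p^[i'] x := ⟨_, rfl⟩
    have hyper : ∃ k, 0 < k ∧ p^[k] y = y := by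
      refine ⟨j' - i', by omega, ?_⟩
      rw [hy, ← Function.iterate_add_apply]
      rw [show j' - i' + i' = j' by omega]
      exact heq.symm
    classical
    obtain ⟨k, hkdef⟩ : ∃ k, k = Nat.find hyper := ⟨_, rfl⟩
    have hk : 0 < k ∧ p^[k] y = y := hkdef ▸ Nat.find_spec hyper
    have hkmin : ∀ m, m < k → ¬ (0 < m ∧ p^[m] y = y) := fun m hm =>
      Nat.find_min hyper (hkdef ▸ hm)
    refine ⟨y, k, hk.1, ⟨i', hy.symm⟩, hk.2, ?_⟩
    intro a b ha hb hab
    by_contra hne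
    have key2 : ∀ a b : ℕ, a < b → b < k → p^[a] y = p^[b] y → False := by
      intro a b hlt' hb' heq'
      have h2 : p^[k - b + a] y = y := by
        have h1 : p^[k - b] (p^[a] y) = p^[k - b] (p^[b] y) := by rw [heq']
        rw [← Function.iterate_add_apply, ← Function.iterate_add_apply] at h1
        rw [show k - b + b = k by omega] at h1
        rw [h1, hk.2]
      exact hkmin (k - b + a) (by omega) ⟨by omega, h2⟩
    rcases Nat.lt_or_ge a b with h | h
    · exact key2 a b h hb hab
    · exact key2 b a (by omega) ha hab.symm
  rcases Nat.lt_or_ge i j with h | h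
  · exact key i j h hfij
  · exact key j i (by omega) hfij.symm

theorem orbit_cycle [Finite V] (s r : E → V) (g : V → E) (hg : ∀ w, r (g w) = w) (x : V) :
    ∃ c : List E, IsCycle s r c ∧
      ∀ u ∈ c.map s, ∃ t, (fun w => s (g w))^[t] x = u := by
  set p : V → V := fun w => s (g w) with hp
  obtain ⟨y, k, hk0, ⟨m, hm⟩, hper, hdist⟩ := exists_periodic p x
  set f : ℕ → E := fun i => g (p^[k - 1 - i] y) with hf
  refine ⟨(List.range k).map f, ⟨?_, ?_, ?_⟩, ?_⟩
  · simpa using hk0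
  case refine_2 =>
    intro i hi
    have hlen : ((List.range k).map f).length = k := by simp
    have hik : i < k := by simpa [hlen] using hi
    have hget : ∀ (j : ℕ) (hj : j < ((List.range k).map f).length),
        ((List.range k).map f).get ⟨j, hj⟩ = f j := by
      intro j hj
      simp
    rw [hget i hi, hget _ _]
    have hr : r (f i) = p^[k - 1 - i] y := hg _
    have hs : ∀ j, j < k → s (f j) = p^[k - j] y := by
      intro j hj
      have h1 : s (f j) = p^[(k - 1 - j) + 1] y := by
        rw [Function.iterate_succ_apply']
      rw [h1, show k - 1 - j + 1 = k - j from by omega]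
    rcases Nat.lt_or_ge (i + 1) k with h1 | h1
    · have hmod : (i + 1) % ((List.range k).map f).length = i + 1 := by
        rw [hlen]; exact Nat.mod_eq_of_lt h1
      rw [hr]
      rw [hs ((i + 1) % ((List.range k).map f).length) (by rw [hmod]; exact h1)]
      rw [hmod]
      congr 1
      omega
    · have hieq : i + 1 = k := by omega
      have hmod : (i + 1) % ((List.range k).map f).length = 0 := by
        rw [hlen, hieq, Nat.mod_self]
      rw [hr]
      rw [hs ((i + 1) % ((List.range k).map f).length) (by rw [hmod]; exact hk0)]
      rw [hmod]
      have h0 : k - 1 - i = 0 := by omega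
      rw [h0]
      simpa using hper.symm
  case refine_3 =>
    rw [List.map_map]
    refine List.Nodup.map_on ?_ (List.nodup_range (n := k))
    intro i hi j hj hij
    rw [List.mem_range] at hi hj
    have hs : ∀ j, j < k → (s ∘ f) j = p^[k - j] y := by
      intro j hj
      have h1 : (s ∘ f) j = p^[(k - 1 - j) + 1] y := by
        rw [Function.iterate_succ_apply']; rfl
      rw [h1, show k - 1 - j + 1 = k - j from by omega]
    rw [hs i hi, hs j hj] at hij
    have horb : ∀ a, a < k → p^[(k - a) % k] y = p^[k - a] y := by
      intro a ha
      rcases Nat.eq_zero_or_pos a with h0 | h0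
      · subst h0
        rw [Nat.sub_zero, Nat.mod_self]
        exact hper.symm
      · rw [Nat.mod_eq_of_lt (by omega)]
    have := hdist ((k - i) % k) ((k - j) % k) (Nat.mod_lt _ hk0) (Nat.mod_lt _ hk0)
      (by rw [horb i hi, horb j hj]; exact hij)
    rcases Nat.eq_zero_or_pos i with hi0 | hi0 <;> rcases Nat.eq_zero_or_pos j with hj0 | hj0
    · omega
    · exfalso
      subst hi0
      rw [Nat.sub_zero, Nat.mod_self, Nat.mod_eq_of_lt (by omega)] at this
      omega
    · exfalso
      subst hj0
      rw [Nat.sub_zero, Nat.mod_self, Nat.mod_eq_of_lt (by omega)] at this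
      omega
    · rw [Nat.mod_eq_of_lt (by omega), Nat.mod_eq_of_lt (by omega)] at this
      omega
  case refine_4 =>
    intro u hu
    rw [List.map_map] at hu
    obtain ⟨i, hi, hiu⟩ := List.mem_map.1 hu
    rw [List.mem_range] at hi
    have : (s ∘ f) i = p^[k - i] y := by
      have h1 : (s ∘ f) i = p^[(k - 1 - i) + 1] y := by
        rw [Function.iterate_succ_apply']; rfl
      rw [h1, show k - 1 - i + 1 = k - i from by omega]
    refine ⟨(k - i) + m, ?_⟩
    rw [Function.iterate_add_apply, hm, ← hiu, this]

end Stmt7Aux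

/-- Let `E` be a finite (nonempty) source-free directed graph in which no
cycle is a source cycle (a cycle `c` is a source cycle if `|r⁻¹(v)| = 1` for every vertex
`v` of `c`).  Then there is a vertex `v` at which two distinct cycles are based and with
`|r⁻¹(v)| ≥ 2`. -/
theorem stmt_7 [Fintype V] [Fintype E] [DecidableEq V] [DecidableEq E]
    (s r : E → V) (hne : Nonempty V)
    (hsourcefree : ∀ v : V, ∃ e : E, r e = v)
    (hnosourcecycle : ∀ c : List E, IsCycle s r c →
      ¬ ∀ v ∈ c.map s, (Finset.univ.filter fun e => r e = v).card = 1) :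
    ∃ v : V,
      (∃ c c' : List E, c ≠ c' ∧ IsCycleBasedAt s r c v ∧ IsCycleBasedAt s r c' v) ∧
      2 ≤ (Finset.univ.filter fun e => r e = v).card := by
  classical
  choose g hg using hsourcefree
  obtain ⟨x, hx⟩ := Stmt7Aux.exists_min s r hne
  obtain ⟨C, hC, hCorb⟩ := Stmt7Aux.orbit_cycle s r g hg x
  set p : V → V := fun w => s (g w) with hp
  have hstep : ∀ w : V, Stmt7Aux.Reach s r (p w) w := fun w =>
    Relation.ReflTransGen.single ⟨g w, rfl, hg w⟩
  have hiter : ∀ t : ℕ, Stmt7Aux.Reach s r (p^[t] x) x := by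
    intro t
    induction t with
    | zero => exact Relation.ReflTransGen.refl
    | succ t ih =>
      rw [Function.iterate_succ_apply']
      exact (hstep (p^[t] x)).trans ih
  have hreachx : ∀ u ∈ C.map s, Stmt7Aux.Reach s r u x := by
    intro u hu
    obtain ⟨t, ht⟩ := hCorb u hu
    exact ht ▸ hiter t
  have hnot := hnosourcecycle C hC
  push_neg at hnot
  obtain ⟨v, hvC, hvcard⟩ := hnot
  have hv1 : 0 < (Finset.univ.filter fun e => r e = v).card :=
    Finset.card_pos.2 ⟨g v, by simp [hg v]⟩
  have hv2 : 1 < (Finset.univ.filter fun e => r e = v).card := by omega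
  obtain ⟨e, hemem, f, hfmem, hef⟩ := Finset.one_lt_card.1 hv2
  have hre : r e = v := (Finset.mem_filter.1 hemem).2
  have hrf : r f = v := (Finset.mem_filter.1 hfmem).2
  have hvx : Stmt7Aux.Reach s r v x := hreachx v hvC
  have hse : Stmt7Aux.Reach s r v (s e) :=
    hvx.trans (hx _ ((Relation.ReflTransGen.single ⟨e, rfl, hre⟩).trans hvx))
  have hsf : Stmt7Aux.Reach s r v (s f) :=
    hvx.trans (hx _ ((Relation.ReflTransGen.single ⟨f, rfl, hrf⟩).trans hvx))
  have mkcycle : ∀ e₀ : E, r e₀ = v → Stmt7Aux.Reach s r v (s e₀) →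
      ∃ c, IsCycleBasedAt s r c v ∧ c.getLast? = some e₀ := by
    intro e₀ hre₀ hreach
    obtain ⟨l, hl⟩ := hreach.exists_walk
    have hwalk : Stmt7Aux.IsWalk s r v v (l ++ [e₀]) :=
      hl.append ⟨rfl, hre₀⟩
    have hne₀ : l ++ [e₀] ≠ [] := by simp
    obtain ⟨c, hc, hlast⟩ := Stmt7Aux.cycle_of_closed_walk (l ++ [e₀]).length
      (l ++ [e₀]) le_rfl hwalk hne₀
    refine ⟨c, hc, ?_⟩
    rw [hlast, List.getLast?_append_of_ne_nil _ (by simp : [e₀] ≠ ([] : List E))]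
    rfl
  obtain ⟨c₁, hc₁, hlast₁⟩ := mkcycle e hre hse
  obtain ⟨c₂, hc₂, hlast₂⟩ := mkcycle f hrf hsf
  refine ⟨v, ⟨c₁, c₂, ?_, hc₁, hc₂⟩, hv2⟩
  intro hcc
  rw [hcc, hlast₂] at hlast₁
  exact hef (Option.some_injective _ hlast₁.symm)
end

section
/- Let E be a finite source-free directed graph with n = |E⁰| vertices in which no cycle is a source cycle. Then for each positive integer a there exists a row vector m_a = [m₁ … mₙ] ∈ ℕⁿ with mᵢ ≥ a for all i = 1, …, n, such that (A_E^t − Iₙ)·m_a^t ≥ [a … a]^t, where the inequality between integer vectors is entrywise. -/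
variable {V E : Type}

/-- The incidence matrix of the graph (with integer entries): the `(u, w)` entry is the
number of edges `e` with `s e = u` and `r e = w`. -/
def incMatrix [Fintype E] [DecidableEq V] (s r : E → V) : Matrix V V ℤ :=
  Matrix.of fun u w => ((Finset.univ.filter fun e : E => s e = u ∧ r e = w).card : ℤ)

section AuxSt8
variable [Fintype V] [Fintype E] [DecidableEq V]

def st8S (s r : E → V) : ℕ → Finset V
  | 0 => Finset.univ.filter (fun v => 2 ≤ (Finset.univ.filter fun e => r e = v).card)
  | (k+1) => st8S s r k ∪
      Finset.univ.filter (fun v => ∃ e, r e = v ∧ s e ∈ st8S s r k)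

lemma st8S_stab (s r : E → V) (k : ℕ) (h : st8S s r (k+1) = st8S s r k) :
    ∀ m, st8S s r (k+m) = st8S s r k := by
  intro m
  induction m with
  | zero => rfl
  | succ m ih =>
      have h2 : st8S s r (k+m+1) = st8S s r (k+1) := by
        show st8S s r ((k+m)+1) = _
        simp only [st8S, ih]
      rw [show k + (m+1) = (k+m)+1 by ring, h2, h]

lemma st8S_total (s r : E → V)
    (hsourcefree : ∀ v : V, ∃ e : E, r e = v)
    (hnosourcecycle : ∀ c : List E, IsCycle s r c →
      ¬ ∀ v ∈ c.map s, (Finset.univ.filter fun e => r e = v).card = 1) :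
    ∀ v : V, ∃ k, v ∈ st8S s r k := by
  classical
  by_contra hcon
  push_neg at hcon
  obtain ⟨v₀, hv₀⟩ := hcon
  have hfex : ∀ v : V, ∃ e, r e = v := hsourcefree
  set f : V → E := fun v => (hfex v).choose with hfdef
  have hf : ∀ v, r (f v) = v := fun v => (hfex v).choose_spec
  set g : V → V := fun v => s (f v) with hgdef
  have hstep : ∀ v, (∀ k, v ∉ st8S s r k) → ∀ k, g v ∉ st8S s r k := by
    intro v hv k hk
    apply hv (k+1)
    simp only [st8S, Finset.mem_union, Finset.mem_filter, Finset.mem_univ, true_and]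
    exact Or.inr ⟨f v, hf v, hk⟩
  have horb : ∀ i k, g^[i] v₀ ∉ st8S s r k := by
    intro i
    induction i with
    | zero => exact hv₀
    | succ i ih =>
        intro k
        rw [Function.iterate_succ_apply']
        exact hstep _ ih k
  obtain ⟨w, hworb, hqex⟩ :
      ∃ w : V, (∀ k m, g^[k] w ∉ st8S s r m) ∧ ∃ q, 0 < q ∧ g^[q] w = w := by
    obtain ⟨i, j, hne, hij⟩ := Finite.exists_ne_map_eq_of_infinite (fun k : ℕ => g^[k] v₀)
    obtain ⟨i, j, hlt, hij⟩ : ∃ i j : ℕ, i < j ∧ g^[i] v₀ = g^[j] v₀ := by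
      rcases hne.lt_or_gt with h | h
      · exact ⟨i, j, h, hij⟩
      · exact ⟨j, i, h, hij.symm⟩
    refine ⟨g^[i] v₀, ?_, j - i, by omega, ?_⟩
    · intro k m
      rw [← Function.iterate_add_apply]
      exact horb _ _
    · rw [← Function.iterate_add_apply, show j - i + i = j by omega]
      exact hij.symm
  set p : ℕ := Nat.find hqex with hpdef
  obtain ⟨hppos, hpper⟩ : 0 < p ∧ g^[p] w = w := Nat.find_spec hqex
  have hinj : ∀ k l, k < p → l < p → g^[k] w = g^[l] w → k = l := by
    intro k l hk hl heq
    by_contra hne2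
    obtain ⟨k, l, hkl, hl, heq⟩ : ∃ k l, k < l ∧ l < p ∧ g^[k] w = g^[l] w := by
      rcases Nat.lt_or_ge k l with h | h
      · exact ⟨k, l, h, hl, heq⟩
      · exact ⟨l, k, by omega, hk, heq.symm⟩
    have h2 : g^[p - l + k] w = w := by
      rw [Function.iterate_add_apply, heq, ← Function.iterate_add_apply,
        show p - l + l = p by omega, hpper]
    exact Nat.find_min hqex (m := p - l + k) (by omega) ⟨by omega, h2⟩
  have hmod : ∀ t, t ≤ p → g^[t % p] w = g^[t] w := by
    intro t ht
    rcases eq_or_lt_of_le ht with h | h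
    · subst h; rw [Nat.mod_self]; simp [hpper]
    · rw [Nat.mod_eq_of_lt h]
  have skey : ∀ t : ℕ, s (f (g^[t] w)) = g^[t + 1] w := by
    intro t
    show g (g^[t] w) = _
    rw [Function.iterate_succ_apply']
  set c : List E := (List.range p).map (fun i => f (g^[p - 1 - i] w)) with hcdef
  have hclen : c.length = p := by simp [hcdef]
  have hget : ∀ (i : ℕ) (hi : i < c.length),
      c.get ⟨i, hi⟩ = f (g^[p - 1 - i] w) := by
    intro i hi
    simp [hcdef]
  have hcyc : IsCycle s r c := by
    refine ⟨by omega, ?_, ?_⟩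
    · intro i hi
      have hi' : i < p := by rwa [hclen] at hi
      rw [hget i hi, hget _ _, hf, skey, hclen]
      rcases Nat.lt_or_ge (i+1) p with h | h
      · rw [Nat.mod_eq_of_lt h]
        congr 1
        omega
      · have hm0 : (i + 1) % p = 0 := by
          rw [show i + 1 = p by omega, Nat.mod_self]
        rw [hm0, show p - 1 - 0 + 1 = p by omega, hpper,
          show p - 1 - i = 0 by omega]
        simp
    · rw [hcdef, List.map_map]
      refine (List.nodup_range).map_on ?_
      intro x hx y hy hxy
      rw [List.mem_range] at hx hy
      simp only [Function.comp_apply] at hxy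
      rw [skey, skey, show p - 1 - x + 1 = p - x by omega,
        show p - 1 - y + 1 = p - y by omega] at hxy
      have hmm := hinj ((p - x) % p) ((p - y) % p)
        (Nat.mod_lt _ hppos) (Nat.mod_lt _ hppos)
        (by rw [hmod _ (by omega), hmod _ (by omega)]; exact hxy)
      rcases Nat.eq_zero_or_pos x with hx0 | hx0 <;>
        rcases Nat.eq_zero_or_pos y with hy0 | hy0
      · omega
      · exfalso
        rw [hx0, Nat.sub_zero, Nat.mod_self, Nat.mod_eq_of_lt (by omega)] at hmm
        omega
      · exfalso
        rw [hy0, Nat.sub_zero, Nat.mod_self, Nat.mod_eq_of_lt (by omega)] at hmm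
        omega
      · rw [Nat.mod_eq_of_lt (by omega), Nat.mod_eq_of_lt (by omega)] at hmm
        omega
  refine hnosourcecycle c hcyc ?_
  intro v hv
  rw [hcdef, List.map_map] at hv
  obtain ⟨i, hi, hvi⟩ := List.mem_map.mp hv
  rw [List.mem_range] at hi
  simp only [Function.comp_apply] at hvi
  rw [skey] at hvi
  have hnot0 : v ∉ st8S s r 0 := hvi ▸ hworb _ 0
  have hle1 : (Finset.univ.filter fun e => r e = v).card ≤ 1 := by
    by_contra hge
    exact hnot0 (by
      simp only [st8S, Finset.mem_filter, Finset.mem_univ, true_and]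
      omega)
  have hge1 : 1 ≤ (Finset.univ.filter fun e => r e = v).card := by
    obtain ⟨e, he⟩ := hsourcefree v
    exact Finset.card_pos.mpr ⟨e, Finset.mem_filter.mpr ⟨Finset.mem_univ _, he⟩⟩
  omega

lemma st8_mulVec_eq (s r : E → V) (M : V → ℤ) (v : V) :
    Matrix.mulVec (Matrix.transpose (incMatrix s r) - 1) M v
      = (∑ e ∈ Finset.univ.filter (fun e => r e = v), M (s e)) - M v := by
  classical
  rw [Matrix.sub_mulVec, Pi.sub_apply, Matrix.one_mulVec]
  congr 1
  simp only [Matrix.mulVec, dotProduct, Matrix.transpose_apply, incMatrix,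
    Matrix.of_apply]
  rw [← Finset.sum_fiberwise_of_maps_to (g := s)
    (fun e _ => Finset.mem_univ (s e)) (fun e => M (s e))]
  refine Finset.sum_congr rfl fun w _ => ?_
  rw [Finset.filter_filter]
  have h1 : (Finset.univ.filter fun e : E => s e = w ∧ r e = v)
      = (Finset.univ.filter fun e : E => r e = v ∧ s e = w) := by
    apply Finset.filter_congr
    intro e _
    simp [and_comm]
  beta_reduce
  rw [h1]
  have h2 : ∑ e ∈ Finset.univ.filter (fun e : E => r e = v ∧ s e = w), M (s e)
      = ∑ _e ∈ Finset.univ.filter (fun e : E => r e = v ∧ s e = w), M w :=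
    Finset.sum_congr rfl fun e he => by rw [(Finset.mem_filter.mp he).2.2]
  rw [h2, Finset.sum_const, nsmul_eq_mul]

end AuxSt8

/-- Let `E` be a finite source-free directed graph in which no cycle is a
source cycle.  Then for each positive integer `a` there is a vector `m ∈ ℕ^{E⁰}` with
`m v ≥ a` for every vertex `v`, such that `(A_E^t − I) · m ≥ (a, …, a)` entrywise. -/
theorem stmt_8 [Fintype V] [Fintype E] [DecidableEq V]
    (s r : E → V)
    (hsourcefree : ∀ v : V, ∃ e : E, r e = v)
    (hnosourcecycle : ∀ c : List E, IsCycle s r c →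
      ¬ ∀ v ∈ c.map s, (Finset.univ.filter fun e => r e = v).card = 1)
    (a : ℕ) (ha : 0 < a) :
    ∃ m : V → ℕ, (∀ v : V, a ≤ m v) ∧
      ∀ v : V, (a : ℤ) ≤
        Matrix.mulVec (Matrix.transpose (incMatrix s r) - 1) (fun w => (m w : ℤ)) v := by
  classical
  set n := Fintype.card V with hndef
  have hex : ∀ v : V, ∃ k, v ∈ st8S s r k := st8S_total s r hsourcefree hnosourcecycle
  set d : V → ℕ := fun v => Nat.find (hex v) with hddef
  have hd1 : ∀ v, v ∈ st8S s r (d v) := fun v => Nat.find_spec (hex v)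
  have hd2 : ∀ v k, k < d v → v ∉ st8S s r k := fun v k hk => Nat.find_min (hex v) hk
  -- bound: d v ≤ n
  have hdn : ∀ v, d v ≤ n := by
    intro v
    have hcard : ∀ j, j ≤ d v → j ≤ (st8S s r j).card := by
      intro j hj
      induction j with
      | zero => exact Nat.zero_le _
      | succ j ih =>
          have hjlt : j < d v := by omega
          have hne : st8S s r (j+1) ≠ st8S s r j := by
            intro heq
            have := st8S_stab s r j heq (d v - j)
            rw [show j + (d v - j) = d v by omega] at this
            exact hd2 v j hjlt (this ▸ hd1 v)
          have hsub : st8S s r j ⊂ st8S s r (j+1) :=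
            ⟨Finset.subset_union_left, fun h =>
              hne (Finset.Subset.antisymm h Finset.subset_union_left)⟩
          have := Finset.card_lt_card hsub
          have := ih (by omega)
          omega
    calc d v ≤ (st8S s r (d v)).card := hcard _ le_rfl
      _ ≤ n := Finset.card_le_univ _
  -- if in-degree of v is at most 1, then d v > 0 and the unique predecessor drops d
  refine ⟨fun v => a * (2 * n + 1 - d v), ?_, ?_⟩
  · intro v
    have : 1 ≤ 2 * n + 1 - d v := by have := hdn v; omega
    calc a = a * 1 := (mul_one a).symm
      _ ≤ a * (2 * n + 1 - d v) := Nat.mul_le_mul_left a this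
  · intro v
    rw [st8_mulVec_eq]
    set T := Finset.univ.filter (fun e => r e = v) with hTdef
    have hT1 : 1 ≤ T.card := by
      obtain ⟨e, he⟩ := hsourcefree v
      exact Finset.card_pos.mpr ⟨e, Finset.mem_filter.mpr ⟨Finset.mem_univ _, he⟩⟩
    -- lower bound on every entry of m
    have hlow : ∀ u : V, (a * (n + 1) : ℤ) ≤ ((a * (2 * n + 1 - d u) : ℕ) : ℤ) := by
      intro u
      have h1 : a * (n + 1) ≤ a * (2 * n + 1 - d u) :=
        Nat.mul_le_mul_left a (by have := hdn u; omega)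
      exact_mod_cast h1
    rcases Nat.lt_or_ge T.card 2 with hc | hc
    · -- in-degree exactly 1
      have hc1 : T.card = 1 := by omega
      obtain ⟨e₀, he₀⟩ := Finset.card_eq_one.mp hc1
      have he₀T : e₀ ∈ T := he₀ ▸ Finset.mem_singleton_self e₀
      have hre₀ : r e₀ = v := (Finset.mem_filter.mp he₀T).2
      -- d v > 0
      have hdv : 0 < d v := by
        rcases Nat.eq_zero_or_pos (d v) with h0 | h0
        · exfalso
          have hv0 : v ∈ st8S s r 0 := h0 ▸ hd1 v
          simp only [st8S, Finset.mem_filter, Finset.mem_univ, true_and] at hv0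
          rw [← hTdef] at hv0
          omega
        · exact h0
      -- the predecessor drops d
      have hdpre : d (s e₀) ≤ d v - 1 := by
        have hv1 : v ∈ st8S s r (d v) := hd1 v
        obtain ⟨k, hk⟩ : ∃ k, d v = k + 1 := ⟨d v - 1, by omega⟩
        rw [hk] at hv1
        simp only [st8S, Finset.mem_union, Finset.mem_filter, Finset.mem_univ,
          true_and] at hv1
        rcases hv1 with h | ⟨e, hre, hse⟩
        · exact absurd h (hd2 v k (by omega))
        · have heT : e ∈ T := Finset.mem_filter.mpr ⟨Finset.mem_univ _, hre⟩
          have : e = e₀ := by rw [he₀] at heT; exact Finset.mem_singleton.mp heT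
          subst this
          have hfind : d (s e) ≤ k := Nat.find_min' (hex (s e)) hse
          omega
      have hsum : ∑ e ∈ T, ((fun w => ((a * (2 * n + 1 - d w) : ℕ) : ℤ)) (s e))
          = ((a * (2 * n + 1 - d (s e₀)) : ℕ) : ℤ) := by
        rw [he₀, Finset.sum_singleton]
      have hkey : a * (2 * n + 1 - d v) + a ≤ a * (2 * n + 1 - d (s e₀)) := by
        have h1 : (2 * n + 1 - d v) + 1 ≤ 2 * n + 1 - d (s e₀) := by
          have := hdn v; omega
        calc a * (2 * n + 1 - d v) + a = a * ((2 * n + 1 - d v) + 1) := by ring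
          _ ≤ a * (2 * n + 1 - d (s e₀)) := Nat.mul_le_mul_left a h1
      rw [hsum]
      push_cast
      have : (a : ℤ) * (2 * n + 1 - d v : ℕ) + a ≤ (a : ℤ) * (2 * n + 1 - d (s e₀) : ℕ) := by
        exact_mod_cast hkey
      omega
    · -- in-degree at least 2 : d v = 0
      have hdv0 : d v = 0 := by
        have hv0 : v ∈ st8S s r 0 := by
          simp only [st8S, Finset.mem_filter, Finset.mem_univ, true_and]
          rw [← hTdef]
          omega
        have hfind : d v ≤ 0 := Nat.find_min' (hex v) hv0
        omega
      have hsum : (T.card : ℤ) * (a * (n + 1)) ≤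
          ∑ e ∈ T, ((fun w => ((a * (2 * n + 1 - d w) : ℕ) : ℤ)) (s e)) := by
        calc (T.card : ℤ) * (a * (n + 1))
            = ∑ _e ∈ T, ((a * (n + 1) : ℕ) : ℤ) := by
              rw [Finset.sum_const, nsmul_eq_mul]; push_cast; ring
          _ ≤ _ := Finset.sum_le_sum fun e _ => by
              have := hlow (s e); push_cast at this ⊢; exact this
      have hmv : ((a * (2 * n + 1 - d v) : ℕ) : ℤ) = (a : ℤ) * (2 * n + 1) := by
        rw [hdv0]; push_cast; ring
      have h2 : (2 : ℤ) ≤ (T.card : ℤ) := by exact_mod_cast hc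
      have hpos : (0 : ℤ) ≤ (a : ℤ) * (n + 1) := by positivity
      have := hsum
      simp only at this ⊢
      rw [hmv]
      have hcc : (2 : ℤ) * ((a : ℤ) * ((n : ℤ) + 1)) ≤ (T.card : ℤ) * ((a : ℤ) * ((n : ℤ) + 1)) :=
        mul_le_mul_of_nonneg_right h2 hpos
      push_cast at this
      nlinarith [this, hcc]
end

section
/- Let E be a finite source-free directed graph. Then the following are equivalent: (i) for all positive integers m and n and every element [x] ∈ M_E, if m·[Σ_{v∈E⁰} v] + [x] = n·[Σ_{v∈E⁰} v] in M_E then m ≤ n; (ii) E contains a source cycle. -/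
variable {V E : Type}

/-- The defining relations of the graph monoid `M_E` on the free abelian monoid
`V → ℕ` on the vertices: `v = Σ_{e ∈ s⁻¹(v)} r e` for each regular vertex `v`. -/
def graphRel [Fintype E] [DecidableEq V] (s r : E → V) (x y : V → ℕ) : Prop :=
  ∃ v : V, (∃ e : E, s e = v) ∧ x = Pi.single v 1 ∧
    y = ∑ e : E, if s e = v then Pi.single (r e) 1 else 0

/-- The graph monoid `M_E`: the quotient of the free abelian monoid on the vertices by
the monoid congruence generated by the relations `v = Σ_{e ∈ s⁻¹(v)} r e`. -/
def graphMonoidMk [Fintype E] [DecidableEq V] (s r : E → V) :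
    (V → ℕ) →+ (addConGen (graphRel s r)).Quotient :=
  (addConGen (graphRel s r)).mk'

set_option linter.unusedSectionVars false

section StmtNineAux
variable [Fintype V] [Fintype E] [DecidableEq V] (s r : E → V)

def Tfx (x : V → ℕ) (u : V) : ℕ :=
  (∑ e : E, if r e = u then x (s e) else 0) + (if ∃ e : E, s e = u then 0 else x u)

def badV (u : V) : Prop :=
  (∃ e : E, s e = u) ∧ (Finset.univ.filter fun e => r e = u).card = 1

lemma Tfx_mono {x y : V → ℕ} (h : ∀ u, x u ≤ y u) (u : V) : Tfx s r x u ≤ Tfx s r y u := by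
  unfold Tfx
  refine add_le_add (Finset.sum_le_sum fun e _ => ?_) ?_ <;> split_ifs
  · exact h _
  · exact le_refl 0
  · exact le_refl 0
  · exact h _

lemma one_le_Tfx {x : V → ℕ} (hx : ∀ u, 1 ≤ x u) (hsf : ∀ v : V, ∃ e : E, r e = v)
    (u : V) : 1 ≤ Tfx s r x u := by
  obtain ⟨e, he⟩ := hsf u
  unfold Tfx
  calc 1 ≤ x (s e) := hx _
    _ = if r e = u then x (s e) else 0 := by rw [if_pos he]
    _ ≤ ∑ e : E, if r e = u then x (s e) else 0 :=
        Finset.single_le_sum (f := fun e : E => if r e = u then x (s e) else 0)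
          (fun i _ => Nat.zero_le _) (Finset.mem_univ e)
    _ ≤ _ := Nat.le_add_right _ _

lemma two_le_Tfx {x : V → ℕ} (hx : ∀ u, 1 ≤ x u) (hsf : ∀ v : V, ∃ e : E, r e = v)
    (u : V) (hb : ¬ badV s r u) : 2 ≤ Tfx s r x u := by
  classical
  obtain ⟨e, he⟩ := hsf u
  unfold Tfx
  by_cases hreg : ∃ e : E, s e = u
  · have hcard : 1 < (Finset.univ.filter fun e => r e = u).card := by
      have h1 : 0 < (Finset.univ.filter fun e => r e = u).card :=
        Finset.card_pos.2 ⟨e, Finset.mem_filter.2 ⟨Finset.mem_univ _, he⟩⟩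
      have h2 : (Finset.univ.filter fun e => r e = u).card ≠ 1 := fun hc => hb ⟨hreg, hc⟩
      omega
    obtain ⟨e₁, h₁, e₂, h₂, hne⟩ := Finset.one_lt_card.1 hcard
    have hr₁ : r e₁ = u := (Finset.mem_filter.1 h₁).2
    have hr₂ : r e₂ = u := (Finset.mem_filter.1 h₂).2
    have key : (∑ e ∈ ({e₁, e₂} : Finset E), if r e = u then x (s e) else 0)
        ≤ ∑ e : E, if r e = u then x (s e) else 0 :=
      Finset.sum_le_sum_of_subset (Finset.subset_univ _)
    rw [Finset.sum_pair hne, if_pos hr₁, if_pos hr₂] at key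
    have hx₁ := hx (s e₁)
    have hx₂ := hx (s e₂)
    omega
  · rw [if_neg hreg]
    have key : x (s e) ≤ ∑ e : E, if r e = u then x (s e) else 0 := by
      calc x (s e) = if r e = u then x (s e) else 0 := by rw [if_pos he]
        _ ≤ _ := Finset.single_le_sum (f := fun e : E => if r e = u then x (s e) else 0)
          (fun i _ => Nat.zero_le _) (Finset.mem_univ e)
    have := hx (s e)
    have := hx u
    omega

lemma Tfx_badV {x : V → ℕ} (u : V) (hb : badV s r u) (pe : V → E)
    (hpe : ∀ v, r (pe v) = v) : Tfx s r x u = x (s (pe u)) := by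
  classical
  unfold Tfx
  rw [if_pos hb.1, add_zero, Finset.sum_eq_single (pe u)]
  · rw [if_pos (hpe u)]
  · intro e _ hne
    rw [if_neg]
    intro he
    exact hne (Finset.card_le_one.1 hb.2.le e
      (Finset.mem_filter.2 ⟨Finset.mem_univ _, he⟩) (pe u)
      (Finset.mem_filter.2 ⟨Finset.mem_univ _, hpe u⟩))
  · intro h; exact absurd (Finset.mem_univ _) h


lemma sum_single_eq_onefun : (∑ v : V, Pi.single v (1:ℕ)) = fun _ => 1 := by
  funext u
  simp [Finset.sum_apply, Pi.single_apply]

def expandV (v : V) : V → ℕ :=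
  if (∃ e : E, s e = v) then ∑ e : E, if s e = v then Pi.single (r e) 1 else 0
  else Pi.single v 1

lemma mk_expandV (v : V) :
    graphMonoidMk s r (expandV s r v) = graphMonoidMk s r (Pi.single v 1) := by
  unfold expandV
  split_ifs with h
  · exact ((AddCon.eq _).2 (AddConGen.Rel.of _ _ ⟨v, h, rfl, rfl⟩)).symm
  · rfl

def Tf (x : V → ℕ) : V → ℕ := ∑ v : V, x v • expandV s r v

lemma mk_Tf (x : V → ℕ) : graphMonoidMk s r (Tf s r x) = graphMonoidMk s r x := by
  have hx : x = ∑ v : V, x v • Pi.single v 1 := by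
    funext u
    simp [Finset.sum_apply, Pi.single_apply]
  conv_rhs => rw [hx]
  unfold Tf
  rw [map_sum, map_sum]
  exact Finset.sum_congr rfl fun v _ => by rw [map_nsmul, map_nsmul, mk_expandV]

lemma Tf_apply (x : V → ℕ) (u : V) :
    Tf s r x u = (∑ e : E, if r e = u then x (s e) else 0) +
      (if ∃ e : E, s e = u then 0 else x u) := by
  unfold Tf expandV
  rw [Finset.sum_apply]
  have hterm : ∀ v : V, (x v • (if (∃ e : E, s e = v) then
        ∑ e : E, if s e = v then Pi.single (r e) 1 else 0 else Pi.single v 1 : V → ℕ)) u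
      = (∑ e : E, if s e = v then (if r e = u then x v else 0) else 0) +
        (if v = u then (if ∃ e : E, s e = u then 0 else x u) else 0) := by
    intro v
    by_cases h : ∃ e : E, s e = v
    · rw [if_pos h]
      have h2 : (if v = u then (if ∃ e : E, s e = u then 0 else x u) else 0) = 0 := by
        by_cases hvu : v = u
        · subst hvu; rw [if_pos rfl, if_pos h]
        · rw [if_neg hvu]
      rw [h2, add_zero]
      simp only [Pi.smul_apply, Finset.sum_apply, smul_eq_mul, Finset.mul_sum]
      refine Finset.sum_congr rfl fun e _ => ?_
      by_cases h1 : s e = v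
      · simp only [if_pos h1, Pi.single_apply]
        by_cases h3 : r e = u
        · subst h3; simp
        · simp [h3, Ne.symm h3]
      · simp [h1]
    · rw [if_neg h]
      have : ∀ e : E, (if s e = v then (if r e = u then x v else 0) else 0) = 0 := by
        intro e
        rw [if_neg (fun hh => h ⟨e, hh⟩)]
      rw [Finset.sum_eq_zero fun e _ => this e, zero_add]
      by_cases hvu : v = u
      · subst hvu
        simp [Pi.single_apply, if_neg h]
      · simp [Pi.single_apply, hvu, Ne.symm hvu]
  rw [Finset.sum_congr rfl fun v _ => hterm v, Finset.sum_add_distrib]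
  congr 1
  · rw [Finset.sum_comm]
    refine Finset.sum_congr rfl fun e _ => ?_
    rw [Finset.sum_eq_single (s e)]
    · simp
    · intro v _ hv; rw [if_neg (fun hh => hv hh.symm)]
    · simp
  · simp


lemma Tf_eq_Tfx (x : V → ℕ) (u : V) : Tf s r x u = Tfx s r x u := Tf_apply s r x u

end StmtNineAux

lemma exists_sourceCycle [Fintype V] [Fintype E] [DecidableEq V] (s r : E → V)
    (pe : V → E) (hpe : ∀ v, r (pe v) = v) (u : V)
    (hb : ∀ i, badV s r ((fun v => s (pe v))^[i] u)) :
    ∃ c : List E, IsCycle s r c ∧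
      ∀ v ∈ c.map s, (Finset.univ.filter fun e => r e = v).card = 1 := by
  classical
  set f : V → V := fun v => s (pe v) with hf
  set g : ℕ → V := fun i => f^[i] u with hg
  have hbg : ∀ i, badV s r (g i) := hb
  have hgs : ∀ i, g (i + 1) = s (pe (g i)) := by
    intro i
    show f^[i + 1] u = s (pe (f^[i] u))
    rw [Function.iterate_succ_apply']
  -- pigeonhole with minimal second index
  have hex : ∃ j, ∃ i, i < j ∧ g i = g j := by
    obtain ⟨a, b, hab, heq⟩ := Finite.exists_ne_map_eq_of_infinite g
    rcases Nat.lt_or_ge a b with h | h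
    · exact ⟨b, a, h, heq⟩
    · exact ⟨a, b, lt_of_le_of_ne h (Ne.symm hab), heq.symm⟩
  set j₀ := Nat.find hex with hj₀def
  obtain ⟨i₀, hij, hgij⟩ : ∃ i, i < j₀ ∧ g i = g j₀ := Nat.find_spec hex
  have hmin : ∀ m, m < j₀ → ¬ ∃ i, i < m ∧ g i = g m := fun m hm => Nat.find_min hex hm
  have ginj : ∀ a b, a < j₀ → b < j₀ → g a = g b → a = b := by
    intro a b ha hb' heq
    rcases lt_trichotomy a b with h | h | h
    · exact absurd ⟨a, h, heq⟩ (hmin b hb')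
    · exact h
    · exact absurd ⟨b, h, heq.symm⟩ (hmin a ha)
  set n := j₀ - i₀ with hn
  have hnpos : 0 < n := by omega
  set c : List E := (List.range n).map fun t => pe (g (j₀ - 1 - t)) with hc
  have hlen : c.length = n := by simp [hc]
  have hget : ∀ t (ht : t < c.length), c.get ⟨t, ht⟩ = pe (g (j₀ - 1 - t)) := by
    intro t ht
    simp [hc, List.get_eq_getElem]
  have hsrc : ∀ t, t < n → s (pe (g (j₀ - 1 - t))) = g (j₀ - t) := by
    intro t ht
    have h1 : j₀ - t = (j₀ - 1 - t) + 1 := by omega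
    rw [h1, hgs]
  refine ⟨c, ⟨by rw [hlen]; exact hnpos, ?_, ?_⟩, ?_⟩
  · intro i hi
    have hi' : i < n := by rwa [hlen] at hi
    rw [hget i hi, hget _ _, hpe]
    by_cases h1 : i + 1 < n
    · have hmod : (i + 1) % c.length = i + 1 := Nat.mod_eq_of_lt (by omega)
      rw [hmod, hsrc (i + 1) h1]
      have : j₀ - 1 - i = j₀ - (i + 1) := by omega
      rw [this]
    · have hieq : i + 1 = n := by omega
      have hmod : (i + 1) % c.length = 0 := by rw [hlen, hieq, Nat.mod_self]
      rw [hmod, hsrc 0 hnpos]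
      have h2 : j₀ - 1 - i = i₀ := by omega
      have h3 : j₀ - 0 = j₀ := by omega
      rw [h2, h3, ← hgij]
  · have : c.map s = (List.range n).map fun t => s (pe (g (j₀ - 1 - t))) := by
      rw [hc, List.map_map]; rfl
    rw [this]
    refine List.Nodup.map_on ?_ List.nodup_range
    intro t₁ ht₁ t₂ ht₂ heq
    rw [List.mem_range] at ht₁ ht₂
    rw [hsrc t₁ ht₁, hsrc t₂ ht₂] at heq
    by_cases h1 : t₁ = 0 <;> by_cases h2 : t₂ = 0
    · omega
    · subst h1
      have : g i₀ = g (j₀ - t₂) := hgij.trans heq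
      have := ginj i₀ (j₀ - t₂) hij (by omega) this
      omega
    · subst h2
      have : g (j₀ - t₁) = g i₀ := heq.trans hgij.symm
      have := ginj (j₀ - t₁) i₀ (by omega) hij this
      omega
    · have := ginj (j₀ - t₁) (j₀ - t₂) (by omega) (by omega) heq
      omega
  · intro v hv
    have : c.map s = (List.range n).map fun t => s (pe (g (j₀ - 1 - t))) := by
      rw [hc, List.map_map]; rfl
    rw [this, List.mem_map] at hv
    obtain ⟨t, ht, hv⟩ := hv
    rw [List.mem_range] at ht
    rw [← hv, hsrc t ht]
    exact (hbg _).2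

lemma ugn_of_sourceCycle [Fintype V] [Fintype E] [DecidableEq V] (s r : E → V)
    (c : List E) (hcyc : IsCycle s r c)
    (hone : ∀ v ∈ c.map s, (Finset.univ.filter fun e => r e = v).card = 1) :
    ∀ m n : ℕ, 0 < m → 0 < n → ∀ x : V → ℕ,
      m • graphMonoidMk s r (∑ v : V, Pi.single v 1) + graphMonoidMk s r x =
          n • graphMonoidMk s r (∑ v : V, Pi.single v 1) → m ≤ n := by
  classical
  obtain ⟨hlen, hcy, hnodup⟩ := hcyc
  set C : Finset V := (c.map s).toFinset with hC
  have hmemC : ∀ v : V, v ∈ C ↔ ∃ t : Fin c.length, s (c.get t) = v := by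
    intro v
    rw [hC, List.mem_toFinset, List.mem_map]
    constructor
    · rintro ⟨e, he, rfl⟩
      obtain ⟨t, rfl⟩ := List.mem_iff_get.1 he
      exact ⟨t, rfl⟩
    · rintro ⟨t, rfl⟩
      exact ⟨c.get t, List.mem_iff_get.2 ⟨t, rfl⟩, rfl⟩
  have hone' : ∀ t : Fin c.length, ∀ e₁ e₂ : E, r e₁ = s (c.get t) → r e₂ = s (c.get t) →
      e₁ = e₂ := by
    intro t e₁ e₂ h₁ h₂
    have hcard := hone (s (c.get t)) (List.mem_map.2 ⟨c.get t, List.mem_iff_get.2 ⟨t, rfl⟩, rfl⟩)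
    exact Finset.card_le_one.1 hcard.le e₁
      (Finset.mem_filter.2 ⟨Finset.mem_univ _, h₁⟩) e₂
      (Finset.mem_filter.2 ⟨Finset.mem_univ _, h₂⟩)
  have hsinj : ∀ t₁ t₂ : Fin c.length, s (c.get t₁) = s (c.get t₂) → t₁ = t₂ := by
    intro t₁ t₂ h
    have h₁ : (c.map s)[(t₁ : ℕ)]'(by simpa using t₁.isLt) =
        (c.map s)[(t₂ : ℕ)]'(by simpa using t₂.isLt) := by
      simpa [List.getElem_map] using h
    have := (hnodup.getElem_inj_iff).1 h₁
    exact Fin.ext this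
  have hrC : ∀ t : Fin c.length, r (c.get t) ∈ C := by
    intro t
    rw [hcy t t.isLt]
    exact (hmemC _).2 ⟨_, rfl⟩
  have hkey : ∀ e : E, r e ∈ C → ∃ t : Fin c.length, e = c.get t := by
    intro e he
    obtain ⟨t, ht⟩ := (hmemC _).1 he
    have ht' : (t + (c.length - 1)) % c.length < c.length := Nat.mod_lt _ hlen
    have hmod : ((t + (c.length - 1)) % c.length + 1) % c.length = t := by
      rw [Nat.mod_add_mod]
      have h2 : (t : ℕ) + (c.length - 1) + 1 = t + c.length := by omega
      rw [h2, Nat.add_mod_right, Nat.mod_eq_of_lt t.isLt]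
    have hre : r (c.get ⟨(t + (c.length - 1)) % c.length, ht'⟩) = s (c.get t) := by
      rw [hcy _ ht']
      exact congrArg (fun z => s (c.get z)) (Fin.ext hmod)
    exact ⟨⟨_, ht'⟩, hone' t e _ ht.symm hre⟩
  -- the per-vertex counting identity
  have hsum : ∀ v : V, (∑ e : E, if s e = v then (if r e ∈ C then (1:ℕ) else 0) else 0) =
      (if v ∈ C then (1:ℕ) else 0) := by
    intro v
    by_cases hvC : v ∈ C
    · obtain ⟨t₀, ht₀⟩ := (hmemC v).1 hvC
      rw [if_pos hvC, Finset.sum_eq_single (c.get t₀)]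
      · rw [if_pos ht₀, if_pos (hrC t₀)]
      · intro e _ hne
        by_cases h1 : s e = v
        · rw [if_pos h1]
          by_cases h2 : r e ∈ C
          · exfalso
            obtain ⟨t, rfl⟩ := hkey e h2
            exact hne (by rw [hsinj t t₀ (h1.trans ht₀.symm)])
          · rw [if_neg h2]
        · rw [if_neg h1]
      · intro h; exact absurd (Finset.mem_univ _) h
    · rw [if_neg hvC]
      refine Finset.sum_eq_zero fun e _ => ?_
      by_cases h1 : s e = v
      · rw [if_pos h1, if_neg]
        intro h2
        obtain ⟨t, rfl⟩ := hkey e h2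
        exact hvC ((hmemC v).2 ⟨t, h1⟩)
      · rw [if_neg h1]
  -- the weight homomorphism
  set Φ : (V → ℕ) →+ ℕ :=
    { toFun := fun x => ∑ v ∈ C, x v
      map_zero' := by simp
      map_add' := fun a b => by simp [Finset.sum_add_distrib] } with hΦ
  have hΦsingle : ∀ (w : V) (k : ℕ), Φ (Pi.single w k) = if w ∈ C then k else 0 := by
    intro w k
    show (∑ v ∈ C, (Pi.single w k : V → ℕ) v) = _
    have h1 : ∀ v ∈ C, (Pi.single w k : V → ℕ) v = if v = w then k else 0 := fun v _ => by
      simp [Pi.single_apply]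
    rw [Finset.sum_congr rfl h1]
    exact Finset.sum_ite_eq' C w fun _ => k
  have hrel : ∀ x y : V → ℕ, graphRel s r x y → Φ x = Φ y := by
    rintro x y ⟨v, hv, rfl, rfl⟩
    rw [hΦsingle v 1, map_sum]
    have hterm : ∀ e : E, Φ (if s e = v then Pi.single (r e) 1 else 0) =
        if s e = v then (if r e ∈ C then (1:ℕ) else 0) else 0 := by
      intro e
      rw [apply_ite Φ, map_zero, hΦsingle]
    rw [Finset.sum_congr rfl fun e _ => hterm e, hsum v]
  have hle : addConGen (graphRel s r) ≤ AddCon.ker Φ := AddCon.addConGen_le.2 hrel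
  set φ : (addConGen (graphRel s r)).Quotient →+ ℕ := AddCon.lift _ Φ hle with hφdef
  have hφ : ∀ x : V → ℕ, φ (graphMonoidMk s r x) = Φ x := fun x => AddCon.lift_mk' hle x
  have hΦS : Φ (∑ v : V, Pi.single v 1) = C.card := by
    rw [map_sum]
    have : ∀ v : V, Φ (Pi.single v (1:ℕ)) = if v ∈ C then 1 else 0 := fun v => hΦsingle v 1
    rw [Finset.sum_congr rfl fun v _ => this v, Finset.sum_ite_mem]
    simp
  have hCpos : 0 < C.card := by
    refine Finset.card_pos.2 ⟨s (c.get ⟨0, hlen⟩), ?_⟩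
    exact (hmemC _).2 ⟨⟨0, hlen⟩, rfl⟩
  intro m n hm hn x heq
  have h2 := congrArg φ heq
  simp only [map_add, map_nsmul, hφ, hΦS, smul_eq_mul] at h2
  have h3 : m * C.card ≤ n * C.card := by omega
  exact Nat.le_of_mul_le_mul_right h3 hCpos


/-- Let `E` be a finite source-free directed graph.  The following are
equivalent:
(i) for all positive integers `m`, `n` and every `[x] ∈ M_E`, if
    `m • [Σ_{v ∈ E⁰} v] + [x] = n • [Σ_{v ∈ E⁰} v]` in `M_E` then `m ≤ n`;
(ii) `E` contains a source cycle (a cycle `c` with `|r⁻¹(v)| = 1` for all vertices `v`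
     of `c`). -/
theorem stmt_9 [Fintype V] [Fintype E] [DecidableEq V]
    (s r : E → V)
    (hsourcefree : ∀ v : V, ∃ e : E, r e = v) :
    ((∀ m n : ℕ, 0 < m → 0 < n → ∀ x : V → ℕ,
        m • graphMonoidMk s r (∑ v : V, Pi.single v 1) + graphMonoidMk s r x =
            n • graphMonoidMk s r (∑ v : V, Pi.single v 1) →
          m ≤ n) ↔
      ∃ c : List E, IsCycle s r c ∧
        ∀ v ∈ c.map s, (Finset.univ.filter fun e => r e = v).card = 1) := by
  classical
  constructor
  · -- (i) → (ii): contrapositive via iterate growth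
    intro h
    by_contra hnc
    choose pe hpe using hsourcefree
    have hsf : ∀ v : V, ∃ e : E, r e = v := fun v => ⟨pe v, hpe v⟩
    have hesc : ∀ u : V, ∃ i, ¬ badV s r ((fun v => s (pe v))^[i] u) := by
      intro u
      by_contra hforall
      push_neg at hforall
      exact hnc (exists_sourceCycle s r pe hpe u hforall)
    set Sf : V → ℕ := fun _ => 1 with hSf
    set xk : ℕ → V → ℕ := fun k => (Tf s r)^[k] Sf with hxk
    have hxk_succ : ∀ k, xk (k + 1) = Tf s r (xk k) := fun k =>
      Function.iterate_succ_apply' _ _ _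
    have honebd : ∀ k u, 1 ≤ xk k u := by
      intro k
      induction k with
      | zero => intro u; exact le_refl 1
      | succ k ih =>
        intro u
        rw [hxk_succ, Tf_eq_Tfx]
        exact one_le_Tfx s r ih hsf u
    have hstep : ∀ k u, xk k u ≤ xk (k + 1) u := by
      intro k
      induction k with
      | zero =>
        intro u
        rw [hxk_succ, Tf_eq_Tfx]
        exact one_le_Tfx s r (fun _ => le_refl 1) hsf u
      | succ k ih =>
        intro u
        rw [hxk_succ, hxk_succ (k+1), Tf_eq_Tfx, Tf_eq_Tfx]
        exact Tfx_mono s r (fun w => ih w) u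
    have hmono : ∀ k l, k ≤ l → ∀ u, xk k u ≤ xk l u := by
      intro k l hkl u
      induction hkl with
      | refl => exact le_rfl
      | step h ih => exact le_trans ih (hstep _ u)
    have hB : ∀ i u, ¬ badV s r ((fun v => s (pe v))^[i] u) → 2 ≤ xk (i + 1) u := by
      intro i
      induction i with
      | zero =>
        intro u hbu
        rw [hxk_succ, Tf_eq_Tfx]
        exact two_le_Tfx s r (honebd 0) hsf u (by simpa using hbu)
      | succ i ih =>
        intro u hbu
        rw [Function.iterate_succ_apply] at hbu
        by_cases hu : badV s r u
        · have h2 := ih _ hbu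
          rw [hxk_succ, Tf_eq_Tfx, Tfx_badV s r u hu pe hpe]
          exact h2
        · rw [hxk_succ, Tf_eq_Tfx]
          exact two_le_Tfx s r (honebd (i + 1)) hsf u hu
    have h2all : ∀ u : V, ∃ k, 2 ≤ xk k u := fun u =>
      (hesc u).elim fun i hi => ⟨i + 1, hB i u hi⟩
    choose kk hkk using h2all
    set K := Finset.univ.sup kk with hK
    have h2K : ∀ u, 2 ≤ xk K u := fun u =>
      le_trans (hkk u) (hmono (kk u) K (Finset.le_sup (Finset.mem_univ u)) u)
    set y : V → ℕ := fun u => xk K u - 2 with hy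
    have hSsum : (∑ v : V, Pi.single v 1) = Sf := sum_single_eq_onefun
    have hsum2 : (2 • (∑ v : V, Pi.single v 1) + y) = xk K := by
      funext u
      have h2u := h2K u
      have hS : (∑ v : V, Pi.single v (1:ℕ)) u = 1 := by rw [hSsum]
      simp only [Pi.add_apply, Pi.smul_apply, hS, smul_eq_mul, hy]
      omega
    have hmkall : ∀ k : ℕ, graphMonoidMk s r (xk k) = graphMonoidMk s r Sf := by
      intro k
      induction k with
      | zero => rfl
      | succ k ih => rw [hxk_succ, mk_Tf, ih]
    have heq2 : 2 • graphMonoidMk s r (∑ v : V, Pi.single v 1) + graphMonoidMk s r y =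
        1 • graphMonoidMk s r (∑ v : V, Pi.single v 1) := by
      rw [one_nsmul, ← map_nsmul, ← map_add, hsum2, hmkall K, hSsum]
    have := h 2 1 (by norm_num) (by norm_num) y heq2
    omega
  · rintro ⟨c, hcyc, hone⟩
    exact ugn_of_sourceCycle s r c hcyc hone
end

section
/- Let E be a finite source-free directed graph containing no source cycle. Then for every pair of positive integers m > n there exists an element x of the free abelian monoid on E⁰ such that m·[Σ_{v∈E⁰} v] + [x] = n·[Σ_{v∈E⁰} v] in M_E. -/
variable {V E : Type}

/-- Auxiliary: the sum `Σ_{e ∈ s⁻¹(v)} r e` in the free abelian monoid. -/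
def outSum [Fintype E] [DecidableEq V] (s r : E → V) (v : V) : V → ℕ :=
  ∑ e : E, if s e = v then Pi.single (r e) 1 else 0

/-- Auxiliary: one-step (edge) relation between vertices. -/
def Step (s r : E → V) (a b : V) : Prop := ∃ e : E, s e = a ∧ r e = b

lemma outSum_apply [Fintype E] [DecidableEq V] (s r : E → V) (v z : V) :
    outSum s r v z = ∑ e : E, if s e = v ∧ r e = z then 1 else 0 := by
  unfold outSum
  rw [Finset.sum_apply]
  refine Finset.sum_congr rfl fun e _ => ?_
  by_cases h1 : s e = v <;> by_cases h2 : r e = z <;> simp [h1, h2, Pi.single_apply]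

lemma rel_lemma [Fintype E] [DecidableEq V] (s r : E → V) (v : V) (hv : ∃ e, s e = v) :
    graphMonoidMk s r (Pi.single v 1) = graphMonoidMk s r (outSum s r v) :=
  (AddCon.eq _).2 (AddConGen.Rel.of _ _ ⟨v, hv, rfl, rfl⟩)

lemma token_lemma [Fintype E] [DecidableEq V] (s r : E → V) {u v : V}
    (h : Relation.ReflTransGen (Step s r) u v) :
    ∃ j : V → ℕ, graphMonoidMk s r (Pi.single u 1) =
      graphMonoidMk s r (Pi.single v 1 + j) := by
  induction h with
  | refl => exact ⟨0, by rw [add_zero]⟩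
  | @tail b c hub hbc ih =>
    obtain ⟨j, hj⟩ := ih
    obtain ⟨e, hse, hre⟩ := hbc
    have hout_ge : 1 ≤ outSum s r b c := by
      rw [outSum_apply]
      have := Finset.single_le_sum
        (f := fun e' : E => if s e' = b ∧ r e' = c then 1 else 0)
        (fun i _ => Nat.zero_le _) (Finset.mem_univ e)
      simpa [hse, hre] using this
    have hsplit : outSum s r b = Pi.single c 1 + fun z => outSum s r b z - (Pi.single c 1 : V → ℕ) z := by
      funext z
      by_cases hz : z = c
      · subst hz
        simp only [Pi.add_apply, Pi.single_eq_same]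
        omega
      · simp only [Pi.add_apply, Pi.single_eq_of_ne hz]
        omega
    obtain ⟨j', hj'⟩ : ∃ j' : V → ℕ, outSum s r b = Pi.single c 1 + j' := ⟨_, hsplit⟩
    refine ⟨j' + j, ?_⟩
    calc graphMonoidMk s r (Pi.single u 1)
        = graphMonoidMk s r (Pi.single b 1 + j) := hj
      _ = graphMonoidMk s r (Pi.single b 1) + graphMonoidMk s r j := map_add _ _ _
      _ = graphMonoidMk s r (outSum s r b) + graphMonoidMk s r j := by
          rw [rel_lemma s r b ⟨e, hse⟩]
      _ = graphMonoidMk s r (Pi.single c 1 + j') + graphMonoidMk s r j := by rw [hj']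
      _ = graphMonoidMk s r (Pi.single c 1 + (j' + j)) := by
          rw [map_add, map_add, map_add, add_assoc]

lemma reach_big [Fintype V] [Fintype E] [DecidableEq V] (s r : E → V)
    (hsf : ∀ v : V, ∃ e : E, r e = v)
    (hns : ∀ c : List E, IsCycle s r c →
      ¬ ∀ v ∈ c.map s, (Finset.univ.filter fun e => r e = v).card = 1)
    (v : V) :
    ∃ u : V, 2 ≤ (Finset.univ.filter fun e => r e = u).card ∧
      Relation.ReflTransGen (Step s r) u v := by
  classical
  choose p hp using hsf
  set q : V → V := fun z => s (p z) with hq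
  set seq : ℕ → V := fun i => q^[i] v with hseqdef
  have hseqsucc : ∀ i, seq (i + 1) = q (seq i) := fun i => Function.iterate_succ_apply' q i v
  have hstep : ∀ i, Step s r (seq (i + 1)) (seq i) :=
    fun i => ⟨p (seq i), (hseqsucc i).symm, hp _⟩
  have hreach : ∀ i, Relation.ReflTransGen (Step s r) (seq i) v := by
    intro i
    induction i with
    | zero => exact Relation.ReflTransGen.refl
    | succ k ih => exact Relation.ReflTransGen.head (hstep k) ih
  have hex : ∃ j, ∃ i, i < j ∧ seq i = seq j := by
    obtain ⟨a, b, hab, h⟩ := Finite.exists_ne_map_eq_of_infinite seq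
    rcases lt_or_gt_of_ne hab with h1 | h1
    · exact ⟨b, a, h1, h⟩
    · exact ⟨a, b, h1, h.symm⟩
  set j := Nat.find hex with hjdef
  obtain ⟨i, hij, hiseq⟩ : ∃ i, i < j ∧ seq i = seq j := Nat.find_spec hex
  have hmin : ∀ b < j, ∀ a < b, seq a ≠ seq b := by
    intro b hb a hab hcon
    exact Nat.find_min hex (hjdef ▸ hb) ⟨a, hab, hcon⟩
  set len := j - i with hlendef
  have hlenpos : 0 < len := by omega
  set c : List E := List.ofFn (fun t : Fin len => p (seq (j - 1 - t))) with hc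
  have hclen : c.length = len := List.length_ofFn
  have hcget : ∀ (t : ℕ) (ht : t < c.length), c.get ⟨t, ht⟩ = p (seq (j - 1 - t)) := by
    intro t ht
    simp [hc, List.get_ofFn]
  have hsget : ∀ t : ℕ, t < len → s (p (seq (j - 1 - t))) = seq (j - t) := by
    intro t ht
    have : s (p (seq (j - 1 - t))) = q (seq (j - 1 - t)) := rfl
    rw [this, ← hseqsucc]
    congr 1
    omega
  have key : ∀ a b : ℕ, i < a → a < b → b ≤ j → seq a ≠ seq b := by
    intro a b ha hab hbj hcon
    rcases eq_or_lt_of_le hbj with rfl | hbj'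
    · exact hmin a hab i ha (hiseq.trans hcon.symm)
    · exact hmin b hbj' a hab hcon
  have hcyc : IsCycle s r c := by
    refine ⟨by rw [hclen]; exact hlenpos, ?_, ?_⟩
    · intro t ht
      have hmlt : (t + 1) % c.length < c.length := Nat.mod_lt _ (by omega)
      rw [hcget t ht, hcget ((t + 1) % c.length) hmlt, hp]
      have hmlt' : (t + 1) % c.length < len := lt_of_lt_of_eq hmlt hclen
      rw [hsget ((t + 1) % c.length) hmlt']
      have ht' : t < len := by rwa [hclen] at ht
      by_cases h2 : t + 1 < c.length
      · rw [Nat.mod_eq_of_lt h2]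
        congr 1
        rw [hclen] at h2
        omega
      · have h3 : t + 1 = c.length := by omega
        rw [h3, Nat.mod_self, Nat.sub_zero]
        have h4 : j - 1 - t = i := by rw [hclen] at h3; omega
        rw [h4, hiseq]
    · rw [hc, List.map_ofFn, List.nodup_ofFn]
      intro t1 t2 h12
      simp only [Function.comp] at h12
      rw [hsget t1 t1.isLt, hsget t2 t2.isLt] at h12
      by_contra hne
      have hv12 : (t1 : ℕ) ≠ (t2 : ℕ) := fun h => hne (Fin.ext h)
      have ht1 : (t1 : ℕ) < len := t1.isLt
      have ht2 : (t2 : ℕ) < len := t2.isLt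
      rcases Nat.lt_or_ge (j - (t1 : ℕ)) (j - (t2 : ℕ)) with h12' | h12'
      · exact key (j - t1) (j - t2) (by omega) h12' (by omega) h12
      · have h12'' : j - (t2 : ℕ) < j - (t1 : ℕ) := by omega
        exact key (j - t2) (j - t1) (by omega) h12'' (by omega) h12.symm
  have hcard := hns c hcyc
  push_neg at hcard
  obtain ⟨u, hu_mem, hu_ne⟩ := hcard
  have hu1 : 0 < (Finset.univ.filter fun e => r e = u).card :=
    Finset.card_pos.2 ⟨p u, Finset.mem_filter.2 ⟨Finset.mem_univ _, hp u⟩⟩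
  have hu2 : 2 ≤ (Finset.univ.filter fun e => r e = u).card := by omega
  rw [hc, List.map_ofFn] at hu_mem
  obtain ⟨t, hti⟩ := List.mem_ofFn.1 hu_mem
  refine ⟨u, hu2, ?_⟩
  have hut : u = seq (j - (t : ℕ)) := by
    rw [← hti]
    exact hsget t t.isLt
  rw [hut]
  exact hreach _

/-- Let `E` be a finite source-free directed graph containing no source
cycle.  Then for every pair of positive integers `m > n` there is an element `x` of the
free abelian monoid on `E⁰` with
`m • [Σ_{v ∈ E⁰} v] + [x] = n • [Σ_{v ∈ E⁰} v]` in `M_E`. -/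
theorem stmt_10 [Fintype V] [Fintype E] [DecidableEq V]
    (s r : E → V)
    (hsourcefree : ∀ v : V, ∃ e : E, r e = v)
    (hnosourcecycle : ∀ c : List E, IsCycle s r c →
      ¬ ∀ v ∈ c.map s, (Finset.univ.filter fun e => r e = v).card = 1) :
    ∀ m n : ℕ, 0 < n → n < m →
      ∃ x : V → ℕ,
        m • graphMonoidMk s r (∑ v : V, Pi.single v 1) + graphMonoidMk s r x =
          n • graphMonoidMk s r (∑ v : V, Pi.single v 1) := by
  classical
  set f := graphMonoidMk s r with hf
  set σ : V → ℕ := ∑ v : V, Pi.single v 1 with hσdef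
  have hσ1 : ∀ z, σ z = 1 := by
    intro z
    simp [hσdef, Finset.sum_apply, Pi.single_apply]
  -- g : replace regular vertices by their out-sums
  set g : V → V → ℕ := fun v => if h : ∃ e, s e = v then outSum s r v else Pi.single v 1
    with hg
  set T : V → ℕ := ∑ v : V, g v with hT
  have hfσT : f σ = f T := by
    rw [hσdef, hT, map_sum, map_sum]
    refine Finset.sum_congr rfl fun v _ => ?_
    by_cases hv : ∃ e, s e = v
    · rw [hg]
      simp only [dif_pos hv]
      exact rel_lemma s r v hv
    · rw [hg]
      simp only [dif_neg hv]
  -- lower bound on T by indegree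
  have hTA : ∀ z, (∑ e : E, if r e = z then 1 else 0) ≤ T z := by
    intro z
    have step1 : (∑ e : E, if r e = z then 1 else 0)
        = ∑ e : E, ∑ v : V, if s e = v ∧ r e = z then 1 else 0 := by
      refine Finset.sum_congr rfl fun e _ => ?_
      by_cases hre : r e = z
      · simp [hre, Finset.sum_ite_eq]
      · simp [hre]
    rw [step1, Finset.sum_comm]
    have step2 : ∀ v : V, (∑ e : E, if s e = v ∧ r e = z then 1 else 0) ≤ g v z := by
      intro v
      rw [← outSum_apply, hg]
      by_cases hv : ∃ e, s e = v
      · simp only [dif_pos hv]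
        exact le_rfl
      · simp only [dif_neg hv]
        have : outSum s r v z = 0 := by
          rw [outSum_apply]
          refine Finset.sum_eq_zero fun e _ => ?_
          have : ¬ (s e = v ∧ r e = z) := fun h => hv ⟨e, h.1⟩
          simp [this]
        rw [this]
        exact Nat.zero_le _
    calc (∑ v : V, ∑ e : E, if s e = v ∧ r e = z then 1 else 0)
        ≤ ∑ v : V, g v z := Finset.sum_le_sum fun v _ => step2 v
      _ = T z := by rw [hT, Finset.sum_apply]
  have hcardA : ∀ z, (Finset.univ.filter fun e => r e = z).card
      = ∑ e : E, if r e = z then 1 else 0 := by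
    intro z
    rw [Finset.card_filter]
  have hT1 : ∀ z, 1 ≤ T z := by
    intro z
    obtain ⟨e, he⟩ := hsourcefree z
    refine le_trans ?_ (hTA z)
    have := Finset.single_le_sum (f := fun e' : E => if r e' = z then 1 else 0)
      (fun i _ => Nat.zero_le _) (Finset.mem_univ e)
    simpa [he] using this
  set w : V → ℕ := fun z => T z - 1 with hw
  have hTw : T = σ + w := by
    funext z
    have h1 := hσ1 z
    have h2 := hT1 z
    simp only [Pi.add_apply, hw]
    omega
  have hloop : f σ = f σ + f w := by
    rw [hfσT]
    nth_rewrite 1 [hTw]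
    rw [map_add, ← hfσT]
  have hiter : ∀ N : ℕ, f σ = f σ + f (N • w) := by
    intro N
    induction N with
    | zero => simp
    | succ k ih =>
      calc f σ = f σ + f w := hloop
        _ = (f σ + f (k • w)) + f w := by rw [← ih]
        _ = f σ + (f (k • w) + f w) := by rw [add_assoc]
        _ = f σ + f (k • w + w) := by rw [map_add]
        _ = f σ + f ((k + 1) • w) := by rw [succ_nsmul]
  -- choose big-indegree ancestors and tokens
  choose u hu2 hur using fun v => reach_big s r hsourcefree hnosourcecycle v
  choose jf hjf using fun v => token_lemma s r (hur v)
  have hwu : ∀ v, 1 ≤ w (u v) := by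
    intro v
    have h1 := hu2 v
    have h2 := hTA (u v)
    have h3 := hcardA (u v)
    simp only [hw]
    omega
  set N := Fintype.card V with hN
  set U : V → ℕ := ∑ v : V, Pi.single (u v) 1 with hU
  have hUle : ∀ z, U z ≤ N * w z := by
    intro z
    have hUz : U z = ∑ v : V, if u v = z then 1 else 0 := by
      rw [hU, Finset.sum_apply]
      refine Finset.sum_congr rfl fun v _ => ?_
      by_cases h : u v = z <;> simp [h, Pi.single_apply, eq_comm]
    by_cases hz : ∃ v, u v = z
    · obtain ⟨v0, hv0⟩ := hz
      have hw1 : 1 ≤ w z := hv0 ▸ hwu v0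
      calc U z ≤ ∑ _v : V, 1 := by
            rw [hUz]
            exact Finset.sum_le_sum fun v _ => by split <;> omega
        _ = N := by simp [hN]
        _ ≤ N * w z := Nat.le_mul_of_pos_right N hw1
    · have : U z = 0 := by
        rw [hUz]
        refine Finset.sum_eq_zero fun v _ => ?_
        have : u v ≠ z := fun h => hz ⟨v, h⟩
        simp [this]
      omega
  set rest : V → ℕ := fun z => N * w z - U z with hrest
  have hNw : N • w = U + rest := by
    funext z
    have := hUle z
    simp only [Pi.smul_apply, smul_eq_mul, Pi.add_apply, hrest]
    omega
  set J : V → ℕ := ∑ v : V, jf v with hJ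
  have hfU : f U = f σ + f J := by
    rw [hU, map_sum]
    calc (∑ v : V, f (Pi.single (u v) 1))
        = ∑ v : V, f (Pi.single v 1 + jf v) := Finset.sum_congr rfl fun v _ => hjf v
      _ = ∑ v : V, (f (Pi.single v 1) + f (jf v)) :=
          Finset.sum_congr rfl fun v _ => map_add _ _ _
      _ = (∑ v : V, f (Pi.single v 1)) + ∑ v : V, f (jf v) := Finset.sum_add_distrib
      _ = f σ + f J := by rw [hσdef, hJ, map_sum, map_sum]
  set x₀ : V → ℕ := J + rest with hx₀
  have hkey : f σ = f σ + f σ + f x₀ := by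
    calc f σ = f σ + f (N • w) := hiter N
      _ = f σ + (f U + f rest) := by rw [hNw, map_add]
      _ = f σ + ((f σ + f J) + f rest) := by rw [hfU]
      _ = f σ + f σ + (f J + f rest) := by abel
      _ = f σ + f σ + f x₀ := by rw [hx₀, map_add]
  have hpow : ∀ k : ℕ, f σ = (k + 1) • f σ + k • f x₀ := by
    intro k
    induction k with
    | zero => simp [zero_nsmul]
    | succ k ih =>
      calc f σ = (k + 1) • f σ + k • f x₀ := ih
        _ = k • f σ + f σ + k • f x₀ := by rw [succ_nsmul]
        _ = k • f σ + (f σ + f σ + f x₀) + k • f x₀ := by rw [← hkey]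
        _ = (k + 2) • f σ + (k + 1) • f x₀ := by
            have h1 : (k + 2) • f σ = k • f σ + f σ + f σ := by
              rw [show k + 2 = k + 1 + 1 from rfl, succ_nsmul, succ_nsmul]
            have h2 : (k + 1) • f x₀ = k • f x₀ + f x₀ := succ_nsmul _ _
            rw [h1, h2]
            abel
  intro m n hn hnm
  obtain ⟨n', rfl⟩ : ∃ n', n = n' + 1 := ⟨n - 1, by omega⟩
  obtain ⟨k, hk, rfl⟩ : ∃ k, 0 < k ∧ m = (n' + 1) + k := ⟨m - (n' + 1), by omega, by omega⟩
  refine ⟨k • x₀, ?_⟩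
  calc ((n' + 1) + k) • f σ + f (k • x₀)
      = (n' + (k + 1)) • f σ + k • f x₀ := by
        rw [map_nsmul, show (n' + 1) + k = n' + (k + 1) from by omega]
    _ = n' • f σ + ((k + 1) • f σ + k • f x₀) := by rw [add_nsmul, add_assoc]
    _ = n' • f σ + f σ := by rw [← hpow k]
    _ = (n' + 1) • f σ := (succ_nsmul _ _).symm
end

section
/- Let E be a finite directed graph and let E = E₀ → E₁ → ⋯ → E_ℓ be a sequence of graphs in which each E_{i+1} is the source elimination graph of E_i at some source, and such that either E_ℓ is source-free or E_ℓ consists of a single vertex with no edges. Then the order-unit [Σ_{v∈E⁰} v] of the graph monoid M_E has Unbounded Generating Number if and only if either some E_i (0 ≤ i ≤ ℓ) contains an isolated vertex, or E_ℓ contains a source cycle. -/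
set_option linter.unusedSectionVars false


variable {V E : Type}

/-- A step-by-step source elimination process, recorded by the vertex sets
`S 0 ⊇ S 1 ⊇ ⋯` of the successive subgraphs: the subgraph with vertex set `S` has edge
set `{e : s e ∈ S}`, and at each step a source of the current subgraph (a vertex
receiving no edge of the subgraph) is deleted together with the edges it emits. -/
def IsElimSeq [Fintype V] [DecidableEq V] (s r : E → V) (ℓ : ℕ) (S : ℕ → Finset V) : Prop :=
  S 0 = Finset.univ ∧
    ∀ i < ℓ, ∃ v ∈ S i, (¬ ∃ e : E, s e ∈ S i ∧ r e = v) ∧ S (i + 1) = (S i).erase v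

section MLEsec
variable {M : Type*} [AddCommMonoid M]

/-- auxiliary order on an `AddCommMonoid` -/
def MLE (a b : M) : Prop := ∃ c, a + c = b

lemma MLE.rfl {a : M} : MLE a a := ⟨0, add_zero a⟩

lemma MLE.of_eq {a b : M} (h : a = b) : MLE a b := ⟨0, by rw [add_zero, h]⟩

lemma MLE.trans {a b c : M} (h1 : MLE a b) (h2 : MLE b c) : MLE a c := by
  obtain ⟨x, hx⟩ := h1; obtain ⟨y, hy⟩ := h2
  exact ⟨x + y, by rw [← add_assoc, hx, hy]⟩

lemma MLE.add {a b c d : M} (h1 : MLE a b) (h2 : MLE c d) : MLE (a + c) (b + d) := by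
  obtain ⟨x, hx⟩ := h1; obtain ⟨y, hy⟩ := h2
  exact ⟨x + y, by rw [← hx, ← hy]; exact add_add_add_comm a x c y ▸ by rw [add_add_add_comm]⟩

lemma MLE.sum {ι : Type*} {t : Finset ι} {f g : ι → M} (h : ∀ i ∈ t, MLE (f i) (g i)) :
    MLE (∑ i ∈ t, f i) (∑ i ∈ t, g i) := by
  classical
  induction t using Finset.induction_on with
  | empty => simpa using MLE.rfl
  | insert _ _ hx ih =>
    rw [Finset.sum_insert hx, Finset.sum_insert hx]
    exact (h _ (Finset.mem_insert_self _ _)).add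
      (ih fun i hi => h i (Finset.mem_insert_of_mem hi))

lemma MLE.mem_sum {ι : Type*} [DecidableEq ι] {t : Finset ι} (f : ι → M) {i : ι} (hi : i ∈ t) :
    MLE (f i) (∑ j ∈ t, f j) := ⟨∑ j ∈ t.erase i, f j, Finset.add_sum_erase t f hi⟩

lemma MLE.smul {a b : M} (k : ℕ) (h : MLE a b) : MLE (k • a) (k • b) := by
  obtain ⟨x, hx⟩ := h; exact ⟨k • x, by rw [← smul_add, hx]⟩

lemma MLE.le_smul {a : M} {k : ℕ} (hk : 1 ≤ k) : MLE a (k • a) := by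
  obtain ⟨m, rfl⟩ := Nat.exists_eq_add_of_le hk
  exact ⟨m • a, by rw [add_nsmul, one_nsmul, add_comm]⟩

end MLEsec

section Graph

variable [Fintype V] [Fintype E] [DecidableEq V] (s r : E → V)

/-- the class of a vertex in the graph monoid -/
def mkv (v : V) : (addConGen (graphRel s r)).Quotient := graphMonoidMk s r (Pi.single v 1)

lemma mkv_rel {v : V} (hv : ∃ e : E, s e = v) :
    mkv s r v = ∑ e ∈ Finset.univ.filter (fun e => s e = v), mkv s r (r e) := by
  have h1 : graphMonoidMk s r (Pi.single v 1) =
      graphMonoidMk s r (∑ e : E, if s e = v then Pi.single (r e) 1 else 0) :=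
    (AddCon.eq _).mpr (AddConGen.Rel.of _ _ ⟨v, hv, rfl, rfl⟩)
  rw [mkv, h1, map_sum, Finset.sum_filter]
  refine Finset.sum_congr rfl fun e _ => ?_
  by_cases h : s e = v <;> simp [h, mkv]

variable {s r} {ℓ : ℕ} {S : ℕ → Finset V}

lemma Sclosed (hseq : IsElimSeq s r ℓ S) : ∀ i ≤ ℓ, ∀ e : E, s e ∈ S i → r e ∈ S i := by
  intro i
  induction i with
  | zero => intro _ e _; rw [hseq.1]; exact Finset.mem_univ _
  | succ i ih =>
    intro hi e he
    obtain ⟨v, hv, hnr, hS⟩ := hseq.2 i (by omega)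
    rw [hS] at he ⊢
    have hei : s e ∈ S i := Finset.mem_of_mem_erase he
    exact Finset.mem_erase.mpr ⟨fun h => hnr ⟨e, hei, h⟩, ih (by omega) e hei⟩

lemma Smono (hseq : IsElimSeq s r ℓ S) : ∀ i j, i ≤ j → j ≤ ℓ → S j ⊆ S i := by
  intro i j
  induction j with
  | zero => intro h _; rw [Nat.le_zero.mp h]
  | succ j ih =>
    intro hij hjl
    rcases Nat.eq_or_lt_of_le hij with h | h
    · rw [h]
    · obtain ⟨v, hv, hnr, hS⟩ := hseq.2 j (by omega)
      rw [hS]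
      exact (Finset.erase_subset _ _).trans (ih (by omega) (by omega))

lemma extend (hseq : IsElimSeq s r ℓ S) (i₀ : ℕ) (hi₀ : i₀ ≤ ℓ) (base : V → ℕ)
    (hbase : ∀ v ∈ S i₀, (∃ e : E, s e = v) →
      base v = ∑ e ∈ Finset.univ.filter (fun e => s e = v), base (r e)) :
    ∃ w : V → ℕ, (∀ v ∈ S i₀, w v = base v) ∧
      ∀ v : V, (∃ e : E, s e = v) →
        w v = ∑ e ∈ Finset.univ.filter (fun e => s e = v), w (r e) := by
  suffices h : ∀ k j, j + k = i₀ → ∃ w : V → ℕ, (∀ v ∈ S i₀, w v = base v) ∧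
      ∀ v ∈ S j, (∃ e : E, s e = v) →
        w v = ∑ e ∈ Finset.univ.filter (fun e => s e = v), w (r e) by
    obtain ⟨w, h1, h2⟩ := h i₀ 0 (Nat.zero_add _)
    exact ⟨w, h1, fun v hv => h2 v (by rw [hseq.1]; exact Finset.mem_univ v) hv⟩
  intro k
  induction k with
  | zero =>
    intro j hj
    have : j = i₀ := by omega
    subst this
    exact ⟨base, fun v _ => Eq.refl _, hbase⟩
  | succ k ih =>
    intro j hj
    obtain ⟨w, hw1, hw2⟩ := ih (j + 1) (by omega)
    have hjl : j < ℓ := by omega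
    obtain ⟨v0, hv0, hnr, hS⟩ := hseq.2 j hjl
    have hranges : ∀ e : E, s e ∈ S j → r e ≠ v0 := fun e he h => hnr ⟨e, he, h⟩
    refine ⟨Function.update w v0
      (∑ e ∈ Finset.univ.filter (fun e => s e = v0), w (r e)), ?_, ?_⟩
    · intro v hv
      have hvS : v ∈ S (j + 1) := Smono hseq (j + 1) i₀ (by omega) hi₀ hv
      rw [hS] at hvS
      rw [Function.update_of_ne (Finset.mem_erase.mp hvS).1]
      exact hw1 v hv
    · intro v hvSj hreg
      by_cases hveq : v = v0
      · subst hveq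
        rw [Function.update_self]
        refine Finset.sum_congr rfl fun e he => ?_
        have hse : s e = v := (Finset.mem_filter.mp he).2
        rw [Function.update_of_ne (hranges e (hse ▸ hvSj))]
      · rw [Function.update_of_ne hveq]
        have hvS1 : v ∈ S (j + 1) := by rw [hS]; exact Finset.mem_erase.mpr ⟨hveq, hvSj⟩
        rw [hw2 v hvS1 hreg]
        refine Finset.sum_congr rfl fun e he => ?_
        have hse : s e = v := (Finset.mem_filter.mp he).2
        rw [Function.update_of_ne (hranges e (hse ▸ hvSj))]

lemma ugn_of_weight (w : V → ℕ)
    (hrel : ∀ v : V, (∃ e : E, s e = v) →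
      w v = ∑ e ∈ Finset.univ.filter (fun e => s e = v), w (r e))
    (v0 : V) (hpos : w v0 ≠ 0) :
    ∀ n n' : ℕ, 0 < n → 0 < n' →
      (∃ z, n • graphMonoidMk s r (∑ v : V, Pi.single v 1) + z =
          n' • graphMonoidMk s r (∑ v : V, Pi.single v 1)) →
        n ≤ n' := by
  classical
  set φ : (V → ℕ) →+ ℕ :=
    { toFun := fun x => ∑ v : V, x v * w v
      map_zero' := by simp
      map_add' := by intro x y; simp [add_mul, Finset.sum_add_distrib] } with hφ
  have hker : addConGen (graphRel s r) ≤ AddCon.ker φ := by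
    refine AddCon.addConGen_le.mpr ?_
    rintro x y ⟨v, hv, rfl, rfl⟩
    show φ _ = φ _
    have h1 : φ (Pi.single v 1) = w v := by
      simp [hφ, Pi.single_apply, Finset.sum_ite_eq]
    have h2 : φ (∑ e : E, if s e = v then Pi.single (r e) 1 else 0) =
        ∑ e ∈ Finset.univ.filter (fun e => s e = v), w (r e) := by
      rw [map_sum, Finset.sum_filter]
      refine Finset.sum_congr rfl fun e _ => ?_
      by_cases h : s e = v <;> simp [h, hφ, Pi.single_apply, Finset.sum_ite_eq]
    rw [h1, h2, hrel v hv]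
  set ψ := (addConGen (graphRel s r)).lift φ hker with hψ
  rintro n n' hn hn' ⟨z, hz⟩
  have hz' := congrArg ψ hz
  rw [map_add, map_nsmul, map_nsmul] at hz'
  have hmk : ψ (graphMonoidMk s r (∑ v : V, Pi.single v 1)) = ∑ v : V, w v := by
    rw [hψ, graphMonoidMk, AddCon.lift_mk']
    have : ∀ u : V, (∑ v : V, Pi.single v (1:ℕ)) u = 1 := by
      intro u; simp [Finset.sum_apply, Pi.single_apply]
    simp only [hφ, AddMonoidHom.coe_mk, ZeroHom.coe_mk]
    refine Finset.sum_congr rfl fun u _ => by rw [this u, one_mul]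
  rw [hmk] at hz'
  have hwpos : 0 < ∑ v : V, w v :=
    lt_of_lt_of_le (Nat.pos_of_ne_zero hpos)
      (Finset.single_le_sum (fun _ _ => Nat.zero_le _) (Finset.mem_univ v0))
  have hle : n * (∑ v : V, w v) ≤ n' * (∑ v : V, w v) := by
    simp only [smul_eq_mul] at hz'
    omega
  exact Nat.le_of_mul_le_mul_right hle hwpos

end Graph

section PartA

variable [Fintype V] [Fintype E] [DecidableEq V] {s r : E → V} {ℓ : ℕ} {S : ℕ → Finset V}

lemma weight_of_isolated (hseq : IsElimSeq s r ℓ S) {i : ℕ} (hi : i ≤ ℓ) {v : V}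
    (hv : v ∈ S i) (hno : ¬ ∃ e : E, s e ∈ S i ∧ s e = v)
    (hni : ¬ ∃ e : E, s e ∈ S i ∧ r e = v) :
    ∃ w : V → ℕ, (∀ u : V, (∃ e : E, s e = u) →
        w u = ∑ e ∈ Finset.univ.filter (fun e => s e = u), w (r e)) ∧ ∃ u, w u ≠ 0 := by
  classical
  have hbase : ∀ u ∈ S i, (∃ e : E, s e = u) →
      (fun u => if u = v then (1:ℕ) else 0) u =
      ∑ e ∈ Finset.univ.filter (fun e => s e = u),
        (fun u => if u = v then (1:ℕ) else 0) (r e) := by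
    intro u huS hreg
    by_cases hu : u = v
    · subst hu
      obtain ⟨e, he⟩ := hreg
      exact absurd ⟨e, by rw [he]; exact huS, he⟩ hno
    · simp only [if_neg hu]
      symm
      refine Finset.sum_eq_zero fun e he => ?_
      have hse : s e = u := (Finset.mem_filter.mp he).2
      have : r e ≠ v := fun h => hni ⟨e, by rw [hse]; exact huS, h⟩
      simp [this]
  obtain ⟨w, hw1, hw2⟩ := extend hseq i hi (fun u => if u = v then 1 else 0) hbase
  exact ⟨w, hw2, ⟨v, by rw [hw1 v hv]; simp⟩⟩

lemma weight_of_cycle (hseq : IsElimSeq s r ℓ S) {c : List E} (hcyc : IsCycle s r c)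
    (hcS : ∀ e ∈ c, s e ∈ S ℓ)
    (hcount : ∀ u ∈ c.map s,
      (Finset.univ.filter fun e : E => s e ∈ S ℓ ∧ r e = u).card = 1) :
    ∃ w : V → ℕ, (∀ u : V, (∃ e : E, s e = u) →
        w u = ∑ e ∈ Finset.univ.filter (fun e => s e = u), w (r e)) ∧ ∃ u, w u ≠ 0 := by
  classical
  obtain ⟨hlen, hcyc2, hnd⟩ := hcyc
  -- key: any edge of E_ℓ whose range is a cycle vertex is a cycle edge
  have hmem : ∀ e : E, s e ∈ S ℓ → r e ∈ c.map s → e ∈ c := by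
    intro e heS het
    rw [List.mem_map] at het
    obtain ⟨a, ha, hsa⟩ := het
    obtain ⟨t, hta⟩ := List.mem_iff_get.mp ha
    have hn0 : 0 < c.length := hlen
    have ht2 : t.1 < c.length := t.2
    obtain ⟨p, hpn, hp1⟩ : ∃ p : ℕ, p < c.length ∧ (p + 1) % c.length = t.1 := by
      rcases Nat.eq_zero_or_pos t.1 with h0 | h0
      · exact ⟨c.length - 1, by omega,
          by rw [Nat.sub_add_cancel (by omega : 1 ≤ c.length), Nat.mod_self, h0]⟩
      · exact ⟨t.1 - 1, by omega,
          by rw [Nat.sub_add_cancel h0, Nat.mod_eq_of_lt ht2]⟩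
    have hre : r (c.get ⟨p, hpn⟩) = s (c.get ⟨(p + 1) % c.length, Nat.mod_lt _ hlen⟩) :=
      hcyc2 p hpn
    have hfin : (⟨(p + 1) % c.length, Nat.mod_lt _ hlen⟩ : Fin c.length) = t := Fin.ext hp1
    rw [hfin, hta, hsa] at hre
    have hu : r e ∈ c.map s := by
      rw [List.mem_map]; exact ⟨a, ha, hsa⟩
    obtain ⟨b, hb⟩ := Finset.card_eq_one.mp (hcount (r e) hu)
    have h1 : e ∈ Finset.univ.filter fun e' : E => s e' ∈ S ℓ ∧ r e' = r e :=
      Finset.mem_filter.mpr ⟨Finset.mem_univ _, heS, Eq.refl _⟩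
    have h2 : c.get ⟨p, hpn⟩ ∈ Finset.univ.filter fun e' : E => s e' ∈ S ℓ ∧ r e' = r e :=
      Finset.mem_filter.mpr ⟨Finset.mem_univ _, hcS _ (c.get_mem _), hre⟩
    rw [hb, Finset.mem_singleton] at h1 h2
    have : e = c.get ⟨p, hpn⟩ := by rw [h1, ← h2]
    rw [this]
    exact c.get_mem _
  have hbase : ∀ u ∈ S ℓ, (∃ e : E, s e = u) →
      (fun u => if u ∈ c.map s then (1:ℕ) else 0) u =
      ∑ e ∈ Finset.univ.filter (fun e => s e = u),
        (fun u => if u ∈ c.map s then (1:ℕ) else 0) (r e) := by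
    intro u huS _
    have hstep : ∑ e ∈ Finset.univ.filter (fun e => s e = u),
        (fun u => if u ∈ c.map s then (1:ℕ) else 0) (r e) =
        ((Finset.univ.filter (fun e => s e = u)).filter (fun e => r e ∈ c.map s)).card := by
      simp only [Finset.sum_boole, Nat.cast_id]
    rw [hstep, Finset.filter_filter]
    have hsets : Finset.univ.filter (fun e : E => s e = u ∧ r e ∈ c.map s) =
        Finset.univ.filter (fun e : E => e ∈ c ∧ s e = u) := by
      ext e
      simp only [Finset.mem_filter, Finset.mem_univ, true_and]
      constructor
      · rintro ⟨h1, h2⟩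
        exact ⟨hmem e (by rw [h1]; exact huS) h2, h1⟩
      · rintro ⟨h1, h2⟩
        refine ⟨h2, ?_⟩
        obtain ⟨t, hta⟩ := List.mem_iff_get.mp h1
        rw [← hta, hcyc2 t.1 t.2]
        exact List.mem_map_of_mem (f := s) (c.get_mem _)
    rw [hsets]
    by_cases hu : u ∈ c.map s
    · simp only [if_pos hu]
      obtain ⟨a0, ha0, hsa0⟩ := List.mem_map.mp hu
      have hinj := List.inj_on_of_nodup_map hnd
      have heq : Finset.univ.filter (fun e : E => e ∈ c ∧ s e = u) = {a0} := by
        ext e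
        simp only [Finset.mem_filter, Finset.mem_univ, true_and, Finset.mem_singleton]
        constructor
        · rintro ⟨h1, h2⟩; exact hinj h1 ha0 (by rw [h2, hsa0])
        · rintro rfl; exact ⟨ha0, hsa0⟩
      rw [heq, Finset.card_singleton]
    · simp only [if_neg hu]
      symm
      rw [Finset.card_eq_zero]
      refine Finset.filter_eq_empty_iff.mpr fun e _ => ?_
      rintro ⟨h1, h2⟩
      exact hu (h2 ▸ List.mem_map_of_mem (f := s) h1)
  obtain ⟨w, hw1, hw2⟩ := extend hseq ℓ le_rfl (fun u => if u ∈ c.map s then 1 else 0) hbase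
  refine ⟨w, hw2, ⟨s (c.get ⟨0, hlen⟩), ?_⟩⟩
  have hu0 : s (c.get ⟨0, hlen⟩) ∈ c.map s := List.mem_map_of_mem (f := s) (c.get_mem _)
  rw [hw1 _ (hcS _ (c.get_mem _)), if_pos hu0]
  exact one_ne_zero

end PartA

section PartB

variable [Fintype V] [Fintype E] [DecidableEq V] {s r : E → V} {ℓ : ℕ} {S : ℕ → Finset V}

lemma edge_le (s r : E → V) (e : E) : MLE (mkv s r (r e)) (mkv s r (s e)) := by
  classical
  rw [mkv_rel s r ⟨e, rfl⟩]
  exact MLE.mem_sum (t := Finset.univ.filter (fun e' => s e' = s e))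
    (fun e' => mkv s r (r e')) (Finset.mem_filter.mpr ⟨Finset.mem_univ _, rfl⟩)

lemma exists_heavy (hsf : ∀ v ∈ S ℓ, ∃ e : E, s e ∈ S ℓ ∧ r e = v)
    (hnsc : ∀ c : List E, IsCycle s r c → (∀ e ∈ c, s e ∈ S ℓ) →
      ∃ u ∈ c.map s, (Finset.univ.filter fun e : E => s e ∈ S ℓ ∧ r e = u).card ≠ 1)
    {v : V} (hv : v ∈ S ℓ) :
    ∃ u ∈ S ℓ, 2 ≤ (Finset.univ.filter fun e : E => s e ∈ S ℓ ∧ r e = u).card ∧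
      MLE (mkv s r v) (mkv s r u) := by
  classical
  have hstep : ∀ x : {v // v ∈ S ℓ}, ∃ y : {v // v ∈ S ℓ} × E,
      s y.2 = y.1.1 ∧ r y.2 = x.1 := by
    rintro ⟨x, hx⟩
    obtain ⟨e, he1, he2⟩ := hsf x hx
    exact ⟨⟨⟨s e, he1⟩, e⟩, rfl, he2⟩
  choose F hF1 hF2 using hstep
  set g : {v // v ∈ S ℓ} → {v // v ∈ S ℓ} := fun x => (F x).1 with hg
  set ed : {v // v ∈ S ℓ} → E := fun x => (F x).2 with hed
  set walk : ℕ → {v // v ∈ S ℓ} := fun n => g^[n] ⟨v, hv⟩ with hwalk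
  have hwsucc : ∀ n, walk (n + 1) = g (walk n) := fun n => Function.iterate_succ_apply' g n _
  have hsed : ∀ j, s (ed (walk j)) = (walk (j + 1)).1 := by
    intro j; rw [hwsucc j]; exact hF1 _
  have hred : ∀ j, r (ed (walk j)) = (walk j).1 := fun j => hF2 _
  have hmono : ∀ a b, a ≤ b → MLE (mkv s r (walk a).1) (mkv s r (walk b).1) := by
    intro a b hab
    induction b with
    | zero => rw [Nat.le_zero.mp hab]; exact MLE.rfl
    | succ b ih =>
      rcases Nat.eq_or_lt_of_le hab with h | h
      · rw [h]; exact MLE.rfl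
      · refine (ih (by omega)).trans ?_
        have h1 : r (ed (walk b)) = (walk b).1 := hred b
        have h2 : s (ed (walk b)) = (walk (b + 1)).1 := hsed b
        rw [← h1, ← h2]
        exact edge_le s r _
  obtain ⟨x0, y0, hxy, hxyeq⟩ := Finite.exists_ne_map_eq_of_infinite walk
  have hex : ∃ b, ∃ a, a < b ∧ walk a = walk b := by
    rcases Nat.lt_or_ge x0 y0 with h | h
    · exact ⟨y0, x0, h, hxyeq⟩
    · exact ⟨x0, y0, by omega, hxyeq.symm⟩
  set b0 := Nat.find hex with hb0
  obtain ⟨a0, ha0lt, ha0eq⟩ := Nat.find_spec hex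
  have hinj : ∀ p q, p < q → q < b0 → walk p ≠ walk q := by
    intro p q h1 h2 heq
    exact Nat.find_min hex h2 ⟨p, h1, heq⟩
  set n := b0 - a0 with hn
  have hn0 : 0 < n := by omega
  have hb0pos : 0 < b0 := by omega
  have hnb0 : n ≤ b0 := by omega
  set c : List E := List.ofFn (fun k : Fin n => ed (walk (b0 - 1 - k.1))) with hc
  have hclen : c.length = n := List.length_ofFn
  have hcget : ∀ (i : ℕ) (hi : i < c.length), c.get ⟨i, hi⟩ = ed (walk (b0 - 1 - i)) := by
    intro i hi
    simp only [List.get_eq_getElem, hc, List.getElem_ofFn]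
  have hwb0 : walk b0 = walk a0 := ha0eq.symm
  have hcyc : IsCycle s r c := by
    refine ⟨by rw [hclen]; exact hn0, ?_, ?_⟩
    · intro i hi
      have hi' : i < n := by rwa [hclen] at hi
      rw [hcget i hi, hcget ((i + 1) % c.length) (Nat.mod_lt _ (by rw [hclen]; exact hn0))]
      rw [hred, hsed]
      rcases Nat.lt_or_ge (i + 1) n with h | h
      · have hmod : (i + 1) % c.length = i + 1 := by rw [hclen]; exact Nat.mod_eq_of_lt h
        rw [hmod]
        have : b0 - 1 - (i + 1) + 1 = b0 - 1 - i := by omega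
        rw [this]
      · have hieq : i + 1 = n := by omega
        have hmod : (i + 1) % c.length = 0 := by rw [hclen, hieq, Nat.mod_self]
        rw [hmod]
        have e1 : b0 - 1 - 0 + 1 = b0 := by omega
        have e2 : b0 - 1 - i = a0 := by omega
        rw [e1, e2, hwb0]
    · rw [hc, List.map_ofFn]
      rw [List.nodup_ofFn]
      have main : ∀ p q : Fin n, p.1 < q.1 →
          walk (b0 - 1 - p.1 + 1) = walk (b0 - 1 - q.1 + 1) → False := by
        intro p q hpq heq
        have hp : p.1 < n := p.2
        have hq : q.1 < n := q.2
        have e1 : b0 - 1 - p.1 + 1 = b0 - p.1 := by omega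
        have e2 : b0 - 1 - q.1 + 1 = b0 - q.1 := by omega
        rw [e1, e2] at heq
        rcases Nat.eq_zero_or_pos p.1 with h0 | h0
        · rw [h0, Nat.sub_zero, hwb0] at heq
          exact hinj a0 (b0 - q.1) (by omega) (by omega) heq
        · exact hinj (b0 - q.1) (b0 - p.1) (by omega) (by omega) heq.symm
      intro k1 k2 heq
      simp only [Function.comp_apply] at heq
      rw [hsed, hsed] at heq
      rcases lt_trichotomy k1.1 k2.1 with h | h | h
      · exact absurd (Subtype.ext heq) (fun hh => main k1 k2 h hh)
      · exact Fin.ext h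
      · exact absurd (Subtype.ext heq.symm) (fun hh => main k2 k1 h hh)
  have hcS : ∀ e ∈ c, s e ∈ S ℓ := by
    intro e he
    rw [hc, List.mem_ofFn] at he
    obtain ⟨k, hk⟩ := he
    rw [← hk, hsed]
    exact (walk _).2
  obtain ⟨u, hu, hcard⟩ := hnsc c hcyc hcS
  obtain ⟨e, hec, hse⟩ := List.mem_map.mp hu
  rw [hc, List.mem_ofFn] at hec
  obtain ⟨k, hk⟩ := hec
  have hue : u = (walk (b0 - 1 - k.1 + 1)).1 := by rw [← hse, ← hk, hsed]
  have huS : u ∈ S ℓ := by rw [hue]; exact (walk _).2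
  have hpos : 0 < (Finset.univ.filter fun e : E => s e ∈ S ℓ ∧ r e = u).card := by
    obtain ⟨e', he1, he2⟩ := hsf u huS
    exact Finset.card_pos.mpr ⟨e', Finset.mem_filter.mpr ⟨Finset.mem_univ _, he1, he2⟩⟩
  refine ⟨u, huS, by omega, ?_⟩
  have hv0 : (walk 0).1 = v := rfl
  rw [hue, ← hv0]
  exact hmono 0 _ (Nat.zero_le _)

end PartB

/-- Let `E` be a finite directed graph and
`E = E₀ → E₁ → ⋯ → E_ℓ` a sequence of source eliminations such that `E_ℓ` is source-free
or `E_ℓ` is a single vertex with no edges.  Then the order-unit `[Σ_{v ∈ E⁰} v]` of the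
graph monoid `M_E` has Unbounded Generating Number (for positive `n, n'`,
`n • d ≤ n' • d → n ≤ n'`, where `x ≤ y` iff `∃ z, x + z = y`) if and only if either
some `E_i` (`0 ≤ i ≤ ℓ`) contains an isolated vertex, or `E_ℓ` contains a source cycle
(a cycle all of whose edges lie in `E_ℓ` and each of whose vertices receives exactly one
edge of `E_ℓ`). -/
theorem stmt_13 [Fintype V] [Fintype E] [DecidableEq V]
    (s r : E → V) (ℓ : ℕ) (S : ℕ → Finset V)
    (hseq : IsElimSeq s r ℓ S)
    (hend : (∀ v ∈ S ℓ, ∃ e : E, s e ∈ S ℓ ∧ r e = v) ∨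
      (∃ v : V, S ℓ = {v} ∧ ¬ ∃ e : E, s e ∈ S ℓ)) :
    ((∀ n n' : ℕ, 0 < n → 0 < n' →
        (∃ z, n • graphMonoidMk s r (∑ v : V, Pi.single v 1) + z =
            n' • graphMonoidMk s r (∑ v : V, Pi.single v 1)) →
          n ≤ n') ↔
      ((∃ i ≤ ℓ, ∃ v ∈ S i,
          (¬ ∃ e : E, s e ∈ S i ∧ s e = v) ∧ ¬ ∃ e : E, s e ∈ S i ∧ r e = v) ∨
        (∃ c : List E, IsCycle s r c ∧ (∀ e ∈ c, s e ∈ S ℓ) ∧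
          ∀ u ∈ c.map s,
            (Finset.univ.filter fun e : E => s e ∈ S ℓ ∧ r e = u).card = 1))) := by
  classical
  constructor
  · -- UGN → combinatorial condition, by contradiction
    intro hL
    by_contra hR
    have hniso : ∀ i ≤ ℓ, ∀ v ∈ S i,
        (¬ ∃ e : E, s e ∈ S i ∧ r e = v) → ∃ e : E, s e = v := by
      intro i hi v hv hni
      by_contra hno
      exact hR (Or.inl ⟨i, hi, v, hv, fun ⟨e, _, he2⟩ => hno ⟨e, he2⟩, hni⟩)
    have hnsc : ∀ c : List E, IsCycle s r c → (∀ e ∈ c, s e ∈ S ℓ) →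
        ∃ u ∈ c.map s, (Finset.univ.filter fun e : E => s e ∈ S ℓ ∧ r e = u).card ≠ 1 := by
      intro c h1 h2
      by_contra h
      push_neg at h
      exact hR (Or.inr ⟨c, h1, h2, h⟩)
    have hsf : ∀ v ∈ S ℓ, ∃ e : E, s e ∈ S ℓ ∧ r e = v := by
      rcases hend with h | ⟨v, hSv, hne⟩
      · exact h
      · exact absurd (Or.inl ⟨ℓ, le_rfl, v, by rw [hSv]; exact Finset.mem_singleton_self v,
          fun ⟨e, he, _⟩ => hne ⟨e, he⟩, fun ⟨e, he, _⟩ => hne ⟨e, he⟩⟩) hR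
    -- abbreviations
    set dl := ∑ v ∈ S ℓ, mkv s r v with hdl
    set x := ∑ v ∈ S ℓ,
        ((Finset.univ.filter fun e : E => s e ∈ S ℓ ∧ r e = v).card - 1) • mkv s r v with hx
    set σ := ∑ v ∈ (S ℓ).filter (fun v => ¬ ∃ e : E, s e = v), mkv s r v with hσ
    have hindeg : ∀ v ∈ S ℓ, 1 ≤ (Finset.univ.filter fun e : E => s e ∈ S ℓ ∧ r e = v).card := by
      intro v hv
      obtain ⟨e, he1, he2⟩ := hsf v hv
      exact Finset.card_pos.mpr ⟨e, Finset.mem_filter.mpr ⟨Finset.mem_univ _, he1, he2⟩⟩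
    -- the basic relation dl = dl + (x + σ)
    have key1 : dl = dl + (x + σ) := by
      have h1 : dl = (∑ v ∈ (S ℓ).filter (fun v => ∃ e : E, s e = v), mkv s r v) + σ :=
        (Finset.sum_filter_add_sum_filter_not (S ℓ) _ _).symm
      have h2 : ∑ v ∈ (S ℓ).filter (fun v => ∃ e : E, s e = v), mkv s r v
          = ∑ e ∈ Finset.univ.filter (fun e : E => s e ∈ S ℓ), mkv s r (r e) := by
        rw [Finset.sum_congr rfl (fun v hvf => mkv_rel s r (Finset.mem_filter.mp hvf).2)]
        rw [Finset.sum_fiberwise_eq_sum_filter]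
        refine Finset.sum_congr ?_ fun _ _ => rfl
        ext e
        simp only [Finset.mem_filter, Finset.mem_univ, true_and]
        exact ⟨fun h => h.1, fun h => ⟨h, e, rfl⟩⟩
      have h4 : ∑ e ∈ Finset.univ.filter (fun e : E => s e ∈ S ℓ), mkv s r (r e)
          = ∑ v ∈ S ℓ,
              (Finset.univ.filter fun e : E => s e ∈ S ℓ ∧ r e = v).card • mkv s r v := by
        have h5 := Finset.sum_fiberwise_eq_sum_filter
          (Finset.univ.filter (fun e : E => s e ∈ S ℓ)) (S ℓ) r (fun e => mkv s r (r e))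
        have h6 : (Finset.univ.filter (fun e : E => s e ∈ S ℓ)).filter (fun e => r e ∈ S ℓ)
            = Finset.univ.filter (fun e : E => s e ∈ S ℓ) := by
          ext e
          simp only [Finset.mem_filter, Finset.mem_univ, true_and, and_iff_left_iff_imp]
          exact fun h => Sclosed hseq ℓ le_rfl e h
        rw [h6] at h5
        rw [← h5]
        refine Finset.sum_congr rfl fun v hv => ?_
        rw [Finset.sum_congr rfl
          (fun e he => by rw [(Finset.mem_filter.mp he).2] : ∀ e ∈ (Finset.univ.filter
            (fun e : E => s e ∈ S ℓ)).filter (fun e => r e = v),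
              mkv s r (r e) = mkv s r v)]
        rw [Finset.sum_const, Finset.filter_filter]
      have h7 : ∑ v ∈ S ℓ,
          (Finset.univ.filter fun e : E => s e ∈ S ℓ ∧ r e = v).card • mkv s r v
          = dl + x := by
        rw [hdl, hx, ← Finset.sum_add_distrib]
        refine Finset.sum_congr rfl fun v hv => ?_
        have h8 := hindeg v hv
        calc (Finset.univ.filter fun e : E => s e ∈ S ℓ ∧ r e = v).card • mkv s r v
            = (1 + ((Finset.univ.filter fun e : E => s e ∈ S ℓ ∧ r e = v).card - 1))
                • mkv s r v := by rw [Nat.add_sub_cancel' h8]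
          _ = mkv s r v + ((Finset.univ.filter fun e : E => s e ∈ S ℓ ∧ r e = v).card - 1)
                • mkv s r v := by rw [add_nsmul, one_nsmul]
      calc dl = (∑ v ∈ (S ℓ).filter (fun v => ∃ e : E, s e = v), mkv s r v) + σ := h1
        _ = (dl + x) + σ := by rw [h2, h4, h7]
        _ = dl + (x + σ) := by rw [add_assoc]
    have hy : ∀ k : ℕ, dl = dl + k • (x + σ) := by
      intro k
      induction k with
      | zero => rw [zero_nsmul, add_zero]
      | succ k ih =>
        calc dl = dl + (x + σ) := key1
          _ = (dl + k • (x + σ)) + (x + σ) := by rw [← ih]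
          _ = dl + (k + 1) • (x + σ) := by rw [add_assoc, succ_nsmul]
    have hvley : ∀ v ∈ S ℓ, MLE (mkv s r v) (x + σ) := by
      intro v hv
      obtain ⟨u, huS, hcard2, hle⟩ := exists_heavy hsf hnsc hv
      refine hle.trans (MLE.trans (MLE.trans ?_ (MLE.mem_sum
        (fun v => ((Finset.univ.filter fun e : E => s e ∈ S ℓ ∧ r e = v).card - 1)
          • mkv s r v) huS)) ⟨σ, rfl⟩)
      exact MLE.le_smul (by omega)
    have hdly : MLE dl ((S ℓ).card • (x + σ)) := by
      have := MLE.sum (t := S ℓ) (f := fun v => mkv s r v) (g := fun _ => x + σ) hvley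
      rwa [Finset.sum_const] at this
    have h2dl : MLE (2 • dl) dl := by
      have h1 : MLE (dl + dl) (dl + (S ℓ).card • (x + σ)) := MLE.rfl.add hdly
      rw [← hy ((S ℓ).card)] at h1
      rwa [two_nsmul]
    have hpow : ∀ k : ℕ, MLE ((k + 1) • dl) dl := by
      intro k
      induction k with
      | zero => rw [one_nsmul]; exact MLE.rfl
      | succ k ih =>
        have h1 : MLE ((k + 2) • dl) (2 • dl) := by
          have h2 : ((k + 2) : ℕ) • dl = (k + 1) • dl + dl := by
            rw [succ_nsmul]
          rw [h2, two_nsmul]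
          exact ih.add MLE.rfl
        exact h1.trans h2dl
    have hbound : ∀ k : ℕ, ∃ K : ℕ, MLE (∑ v ∈ S (ℓ - k), mkv s r v) (K • dl) := by
      intro k
      induction k with
      | zero => exact ⟨1, by rw [Nat.sub_zero, one_nsmul, hdl]; exact MLE.rfl⟩
      | succ k ih =>
        obtain ⟨K, hK⟩ := ih
        rcases Nat.lt_or_ge k ℓ with hkl | hkl
        · have hj1 : (ℓ - (k + 1)) + 1 = ℓ - k := by omega
          have hjl : ℓ - (k + 1) < ℓ := by omega
          obtain ⟨v0, hv0, hnr, hS⟩ := hseq.2 (ℓ - (k + 1)) hjl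
          have hreg : ∃ e : E, s e = v0 := hniso (ℓ - (k + 1)) (by omega) v0 hv0 hnr
          have hsum : mkv s r v0 + ∑ v ∈ S (ℓ - (k + 1) + 1), mkv s r v
              = ∑ v ∈ S (ℓ - (k + 1)), mkv s r v := by
            rw [hS]; exact Finset.add_sum_erase _ _ hv0
          have hrange : ∀ e : E, s e = v0 → r e ∈ S (ℓ - (k + 1) + 1) := by
            intro e he
            have h1 : s e ∈ S (ℓ - (k + 1)) := by rw [he]; exact hv0
            have h2 : r e ∈ S (ℓ - (k + 1)) := Sclosed hseq (ℓ - (k + 1)) (by omega) e h1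
            rw [hS]; exact Finset.mem_erase.mpr ⟨fun hh => hnr ⟨e, h1, hh⟩, h2⟩
          have hT : MLE (∑ v ∈ S (ℓ - (k + 1) + 1), mkv s r v) (K • dl) := by
            rw [hj1]; exact hK
          have hv0le : MLE (mkv s r v0)
              ((Finset.univ.filter (fun e : E => s e = v0)).card
                • ∑ v ∈ S (ℓ - (k + 1) + 1), mkv s r v) := by
            rw [mkv_rel s r hreg]
            have := MLE.sum (t := Finset.univ.filter (fun e : E => s e = v0))
              (f := fun e => mkv s r (r e))
              (g := fun _ => ∑ v ∈ S (ℓ - (k + 1) + 1), mkv s r v)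
              (fun e he => MLE.mem_sum _ (hrange e (Finset.mem_filter.mp he).2))
            rwa [Finset.sum_const] at this
          refine ⟨(Finset.univ.filter (fun e : E => s e = v0)).card * K + K, ?_⟩
          have h3 := (hv0le.trans (MLE.smul _ hT)).add hT
          rw [hsum] at h3
          have harr : (Finset.univ.filter (fun e : E => s e = v0)).card • (K • dl) + K • dl
              = ((Finset.univ.filter (fun e : E => s e = v0)).card * K + K) • dl := by
            rw [add_nsmul, mul_comm, mul_nsmul]
          rwa [harr] at h3
        · have : ℓ - (k + 1) = ℓ - k := by omega
          rw [this]
          exact ⟨K, hK⟩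
    obtain ⟨K, hK⟩ := hbound ℓ
    rw [Nat.sub_self, hseq.1] at hK
    have hqd : graphMonoidMk s r (∑ v : V, Pi.single v 1) = ∑ v : V, mkv s r v := by
      rw [map_sum]; rfl
    have hdld : MLE dl (∑ v : V, mkv s r v) :=
      ⟨∑ v ∈ Finset.univ \ S ℓ, mkv s r v,
        by rw [add_comm]; exact Finset.sum_sdiff (Finset.subset_univ _)⟩
    have hKle : MLE (K • dl) ((K + 1) • dl) := ⟨dl, (succ_nsmul dl K).symm⟩
    have h1 : MLE (∑ v : V, mkv s r v) ((K + 1) • dl) := hK.trans hKle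
    have h2' : MLE (2 • ∑ v : V, mkv s r v) ((2 * (K + 1)) • dl) := by
      have h3 := h1.smul 2
      rw [mul_comm, mul_nsmul]
      exact h3
    have h3 : MLE ((2 * (K + 1)) • dl) dl := by
      have h4 := hpow (2 * (K + 1) - 1)
      have h5 : 2 * (K + 1) - 1 + 1 = 2 * (K + 1) := by omega
      rwa [h5] at h4
    have final : MLE (2 • graphMonoidMk s r (∑ v : V, Pi.single v 1))
        (1 • graphMonoidMk s r (∑ v : V, Pi.single v 1)) := by
      rw [hqd, one_nsmul]
      exact h2'.trans (h3.trans hdld)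
    obtain ⟨z, hz⟩ := final
    have := hL 2 1 (by omega) (by omega) ⟨z, hz⟩
    omega
  · rintro (⟨i, hi, v, hv, hno, hni⟩ | ⟨c, hcyc, hcS, hcount⟩) n n' hn hn' hle
    · obtain ⟨w, hrel, u, hu⟩ := weight_of_isolated hseq hi hv hno hni
      exact ugn_of_weight (s := s) (r := r) w hrel u hu n n' hn hn' hle
    · obtain ⟨w, hrel, u, hu⟩ := weight_of_cycle hseq hcyc hcS hcount
      exact ugn_of_weight (s := s) (r := r) w hrel u hu n n' hn hn' hle
end

section
/- Let E be a finite directed graph and let F(E) be its Cohn companion graph. Then the order-unit [Σ_{w∈F(E)⁰} w] of the graph monoid M_{F(E)} has Unbounded Generating Number if and only if E contains a source or E contains a source cycle. -/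
variable {V E : Type}

/-- The vertices of the Cohn companion graph `F(E)`: the vertices of `E` together with a
disjoint copy `v'` of each regular vertex `v` (a vertex emitting at least one edge). -/
abbrev cohnV (s : E → V) : Type := V ⊕ {v : V // ∃ e : E, s e = v}

/-- The edges of the Cohn companion graph `F(E)`: the edges of `E` together with a new
edge `e'` for each edge `e` whose range is a regular vertex. -/
abbrev cohnE (s r : E → V) : Type := E ⊕ {e : E // ∃ f : E, s f = r e}

/-- The source map of `F(E)`: `s(e) = s_E(e)` and `s(e') = s_E(e)`. -/
def cohnS (s r : E → V) : cohnE s r → cohnV s :=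
  Sum.elim (fun e => Sum.inl (s e)) fun e => Sum.inl (s e.1)

/-- The range map of `F(E)`: `r(e) = r_E(e)` and `r(e') = (r_E(e))'`. -/
def cohnR (s r : E → V) : cohnE s r → cohnV s :=
  Sum.elim (fun e => Sum.inl (r e)) fun e => Sum.inr ⟨r e.1, e.2⟩



section
variable [Fintype V] [Fintype E] [DecidableEq V] [DecidableEq E] (s r : E → V)

lemma mk_rel (v : V) (h : ∃ e : E, s e = v) :
    graphMonoidMk s r (Pi.single v 1) =
      graphMonoidMk s r (∑ e : E, if s e = v then Pi.single (r e) 1 else 0) :=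
  (AddCon.eq _).mpr (AddConGen.Rel.of _ _ ⟨v, h, rfl, rfl⟩)

lemma mkh_le_of_le {x y : V → ℕ} (h : x ≤ y) :
    ∃ z, graphMonoidMk s r x + z = graphMonoidMk s r y := by
  refine ⟨graphMonoidMk s r (y - x), ?_⟩
  rw [← map_add]
  congr 1
  funext i
  have := Pi.le_def.mp h i
  simp only [Pi.add_apply, Pi.sub_apply]
  omega

lemma sum_mle {M : Type} [AddCommMonoid M] {ι : Type} (t : Finset ι) (f g : ι → M)
    (h : ∀ i ∈ t, ∃ z, f i + z = g i) :
    ∃ z, (∑ i ∈ t, f i) + z = ∑ i ∈ t, g i := by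
  choose z hz using h
  refine ⟨∑ i ∈ t.attach, z i i.2, ?_⟩
  rw [← Finset.sum_attach t f, ← Finset.sum_attach t g, ← Finset.sum_add_distrib]
  exact Finset.sum_congr rfl fun i _ => hz i i.2

end

section
set_option linter.unusedSectionVars false
variable [Fintype V] [Fintype E] [DecidableEq V] [DecidableEq E] (s r : E → V)

/-- The linear functional on the free abelian monoid given by weights `w`. -/
def wt (w : V → ℕ) : (V → ℕ) →+ ℕ where
  toFun x := ∑ v, x v * w v
  map_zero' := by simp
  map_add' x y := by simp [add_mul, Finset.sum_add_distrib]

lemma wt_single (w : V → ℕ) (a : V) : wt w (Pi.single a 1) = w a := by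
  simp [wt, Pi.single_apply, Finset.sum_ite_eq]

lemma ugn_of_weights (w : V → ℕ)
    (hcompat : ∀ v : V, (∃ e : E, s e = v) →
      w v = ∑ e : E, if s e = v then w (r e) else 0)
    (hpos : ∃ x, w x ≠ 0) :
    ∀ n n' : ℕ, 0 < n → 0 < n' →
      (∃ z, n • graphMonoidMk s r (∑ v : V, Pi.single v 1) + z =
          n' • graphMonoidMk s r (∑ v : V, Pi.single v 1)) → n ≤ n' := by
  have hker : addConGen (graphRel s r) ≤ AddCon.ker (wt w) := by
    refine AddCon.addConGen_le.mpr ?_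
    rintro x y ⟨v, hv, rfl, rfl⟩
    show wt w (Pi.single v 1) = wt w _
    rw [wt_single, map_sum, hcompat v hv]
    refine Finset.sum_congr rfl fun e _ => ?_
    split
    · exact (wt_single w _).symm
    · exact (map_zero (wt w)).symm
  intro n n' hn hn' ⟨z, hz⟩
  obtain ⟨z₀, rfl⟩ := AddCon.mk'_surjective (c := addConGen (graphRel s r)) z
  have hq : graphMonoidMk s r (n • (∑ v : V, Pi.single v 1) + z₀) =
      graphMonoidMk s r (n' • (∑ v : V, Pi.single v 1)) := by
    rw [map_add, map_nsmul, map_nsmul]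
    exact hz
  have hrel : addConGen (graphRel s r) (n • (∑ v : V, Pi.single v 1) + z₀)
      (n' • (∑ v : V, Pi.single v 1)) := (AddCon.eq _).mp hq
  have hw : wt w (n • (∑ v : V, Pi.single v 1) + z₀) =
      wt w (n' • (∑ v : V, Pi.single v 1)) := hker hrel
  rw [map_add, map_nsmul, map_nsmul] at hw
  have hD : 0 < wt w (∑ v : V, Pi.single v 1) := by
    obtain ⟨x, hx⟩ := hpos
    rw [map_sum]
    refine Finset.sum_pos' (fun i _ => Nat.zero_le _) ⟨x, Finset.mem_univ x, ?_⟩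
    rw [wt_single]
    omega
  have h2 : n * wt w (∑ v : V, Pi.single v 1) ≤ n' * wt w (∑ v : V, Pi.single v 1) := by
    simp only [smul_eq_mul] at hw
    omega
  exact Nat.le_of_mul_le_mul_right h2 hD

end


section
set_option linter.unusedSectionVars false
variable [Fintype V] [Fintype E] [DecidableEq V] [DecidableEq E] (s r : E → V)

lemma src_form (v : cohnV s) (h : ∃ e : cohnE s r, cohnS s r e = v) :
    ∃ u : V, (∃ f : E, s f = u) ∧ v = Sum.inl u := by
  obtain ⟨e, he⟩ := h
  cases e with
  | inl e₀ => exact ⟨s e₀, ⟨e₀, rfl⟩, he.symm⟩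
  | inr e₀ => exact ⟨s e₀.1, ⟨e₀.1, rfl⟩, he.symm⟩

lemma compat_of_source (v₀ : V) (hv₀ : ¬ ∃ e : E, r e = v₀) :
    ∃ w : cohnV s → ℕ,
      (∀ v : cohnV s, (∃ e : cohnE s r, cohnS s r e = v) →
        w v = ∑ e : cohnE s r, if cohnS s r e = v then w (cohnR s r e) else 0) ∧
      (∃ x, w x ≠ 0) := by
  by_cases hreg : ∃ e : E, s e = v₀
  · refine ⟨Pi.single (Sum.inr ⟨v₀, hreg⟩ : cohnV s) 1, fun v hv => ?_, ?_⟩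
    · obtain ⟨u, hu, rfl⟩ := src_form s r v hv
      rw [Pi.single_eq_of_ne (by simp)]
      refine (Finset.sum_eq_zero fun e _ => ?_).symm
      rcases e with e₀ | e₀
      · simp only [cohnS, cohnR, Sum.elim_inl]
        rw [Pi.single_eq_of_ne (by simp)]; exact ite_self _
      · simp only [cohnS, cohnR, Sum.elim_inr]
        rw [Pi.single_eq_of_ne]; exact ite_self _
        intro hEq
        rw [Sum.inr.injEq, Subtype.mk.injEq] at hEq
        exact hv₀ ⟨e₀.1, hEq⟩
    · exact ⟨_, by rw [Pi.single_eq_same]; omega⟩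
  · refine ⟨Pi.single (Sum.inl v₀ : cohnV s) 1, fun v hv => ?_, ?_⟩
    · obtain ⟨u, hu, rfl⟩ := src_form s r v hv
      rw [Pi.single_eq_of_ne (by simp only [ne_eq, Sum.inl.injEq]; rintro rfl; exact hreg hu)]
      refine (Finset.sum_eq_zero fun e _ => ?_).symm
      rcases e with e₀ | e₀
      · simp only [cohnS, cohnR, Sum.elim_inl]
        rw [Pi.single_eq_of_ne]; exact ite_self _
        simp only [ne_eq, Sum.inl.injEq]
        intro hEq
        exact hv₀ ⟨e₀, hEq⟩
      · simp only [cohnS, cohnR, Sum.elim_inr]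
        rw [Pi.single_eq_of_ne (by simp)]; exact ite_self _
    · exact ⟨_, by rw [Pi.single_eq_same]; omega⟩

end

section
set_option linter.unusedSectionVars false
variable [Fintype V] [Fintype E] [DecidableEq V] [DecidableEq E] (s r : E → V)

lemma cycle_src_inj (c : List E) (hnd : (c.map s).Nodup)
    (k k' : ℕ) (hk : k < c.length) (hk' : k' < c.length)
    (h : s (c.get ⟨k, hk⟩) = s (c.get ⟨k', hk'⟩)) : k = k' := by
  have h1 : (c.map s).get ⟨k, by simpa using hk⟩ = (c.map s).get ⟨k', by simpa using hk'⟩ := by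
    simp only [List.get_eq_getElem, List.getElem_map]
    simpa using h
  have := hnd.get_inj_iff.mp h1
  simpa using congrArg Fin.val this

lemma cycle_edge_of_range_mem (c : List E) (hc : IsCycle s r c)
    (hcard : ∀ v ∈ c.map s, (Finset.univ.filter fun e => r e = v).card = 1)
    (f : E) (hf : r f ∈ c.map s) :
    ∃ (k : ℕ) (hk : k < c.length), f = c.get ⟨k, hk⟩ := by
  obtain ⟨hlen, hcyc, hnd⟩ := hc
  obtain ⟨a, ha, hra⟩ := List.mem_map.mp hf
  obtain ⟨⟨j, hj⟩, rfl⟩ := List.mem_iff_get.mp ha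
  set k := (j + c.length - 1) % c.length with hkdef
  have hk : k < c.length := Nat.mod_lt _ hlen
  have hidx : (k + 1) % c.length = j := by
    rw [hkdef, Nat.mod_add_mod]
    have : j + c.length - 1 + 1 = j + c.length := by omega
    rw [this, Nat.add_mod_right, Nat.mod_eq_of_lt hj]
  have hr2 : r (c.get ⟨k, hk⟩) = s (c.get ⟨j, hj⟩) := by
    rw [hcyc k hk]
    exact congrArg (fun i => s (c.get i)) (Fin.mk_eq_mk.mpr hidx)
  have hmem : s (c.get ⟨j, hj⟩) ∈ c.map s := List.mem_map_of_mem (f := s) (c.get_mem _)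
  have hcard1 := hcard _ hmem
  have hle : (Finset.univ.filter fun e => r e = s (c.get ⟨j, hj⟩)).card ≤ 1 := le_of_eq hcard1
  refine ⟨k, hk, Finset.card_le_one.mp hle f ?_ _ ?_⟩
  · simp only [Finset.mem_filter, Finset.mem_univ, true_and]
    exact hra.symm
  · simp only [Finset.mem_filter, Finset.mem_univ, true_and]
    exact hr2

lemma cycle_card_filter (c : List E) (hc : IsCycle s r c)
    (hcard : ∀ v ∈ c.map s, (Finset.univ.filter fun e => r e = v).card = 1) (u : V) :
    (Finset.univ.filter fun e : E => s e = u ∧ r e ∈ c.map s).card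
      = if u ∈ c.map s then 1 else 0 := by
  obtain ⟨hlen, hcyc, hnd⟩ := hc
  by_cases hu : u ∈ c.map s
  · rw [if_pos hu]
    obtain ⟨a, ha, hra⟩ := List.mem_map.mp hu
    obtain ⟨⟨j, hj⟩, rfl⟩ := List.mem_iff_get.mp ha
    have : (Finset.univ.filter fun e : E => s e = u ∧ r e ∈ c.map s) = {c.get ⟨j, hj⟩} := by
      refine Finset.eq_singleton_iff_unique_mem.mpr ⟨?_, ?_⟩
      · simp only [Finset.mem_filter, Finset.mem_univ, true_and]
        refine ⟨hra, ?_⟩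
        rw [hcyc j hj]
        exact List.mem_map_of_mem (f := s) (c.get_mem _)
      · intro e he
        simp only [Finset.mem_filter, Finset.mem_univ, true_and] at he
        obtain ⟨k, hk, rfl⟩ := cycle_edge_of_range_mem s r c ⟨hlen, hcyc, hnd⟩ hcard e he.2
        have : k = j := cycle_src_inj s c hnd k j hk hj (by rw [he.1, hra])
        subst this
        rfl
    rw [this, Finset.card_singleton]
  · rw [if_neg hu]
    rw [Finset.card_eq_zero, Finset.filter_eq_empty_iff]
    intro e _
    rintro ⟨hse, hre⟩
    obtain ⟨k, hk, rfl⟩ := cycle_edge_of_range_mem s r c ⟨hlen, hcyc, hnd⟩ hcard e hre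
    exact hu (hse ▸ List.mem_map_of_mem (f := s) (c.get_mem _))

lemma compat_of_cycle (c : List E) (hc : IsCycle s r c)
    (hcard : ∀ v ∈ c.map s, (Finset.univ.filter fun e => r e = v).card = 1) :
    ∃ w : cohnV s → ℕ,
      (∀ v : cohnV s, (∃ e : cohnE s r, cohnS s r e = v) →
        w v = ∑ e : cohnE s r, if cohnS s r e = v then w (cohnR s r e) else 0) ∧
      (∃ x, w x ≠ 0) := by
  classical
  refine ⟨fun x => Sum.elim (fun u => if u ∈ c.map s then 1 else 0) (fun _ => 0) x,
    fun v hv => ?_, ?_⟩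
  · obtain ⟨u, hu, rfl⟩ := src_form s r v hv
    rw [Fintype.sum_sum_type]
    have h2 : ∀ e₀ : {e : E // ∃ f : E, s f = r e},
        (if cohnS s r (Sum.inr e₀) = Sum.inl u
          then Sum.elim (fun u => if u ∈ c.map s then 1 else 0) (fun _ => 0)
            (cohnR s r (Sum.inr e₀)) else 0) = 0 := by
      intro e₀
      simp [cohnS, cohnR]
    rw [Finset.sum_congr rfl (fun e₀ _ => h2 e₀), Finset.sum_const, smul_zero, add_zero]
    have h1 : ∀ e₀ : E,
        (if cohnS s r (Sum.inl e₀) = Sum.inl u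
          then Sum.elim (fun u => if u ∈ c.map s then 1 else 0) (fun _ => 0)
            (cohnR s r (Sum.inl e₀)) else 0)
        = if s e₀ = u ∧ r e₀ ∈ c.map s then 1 else 0 := by
      intro e₀
      simp only [cohnS, cohnR, Sum.elim_inl, Sum.inl.injEq]
      rw [ite_and]
    rw [Finset.sum_congr rfl (fun e₀ _ => h1 e₀), ← Finset.card_filter]
    exact (cycle_card_filter s r c hc hcard u).symm
  · obtain ⟨hlen, _, _⟩ := hc
    refine ⟨Sum.inl (s (c.get ⟨0, hlen⟩)), ?_⟩
    have h0 : (if s (c.get ⟨0, hlen⟩) ∈ c.map s then 1 else 0) = 1 :=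
      if_pos (List.mem_map_of_mem (f := s) (c.get_mem _))
    simp only [Sum.elim_inl, h0]
    omega

end

section
set_option linter.unusedSectionVars false
variable [Fintype V] [Fintype E] [DecidableEq V] [DecidableEq E] (s r : E → V)

lemma exists_hub (hns : ∀ v : V, ∃ e : E, r e = v)
    (hnc : ∀ c : List E, IsCycle s r c →
      ∃ v ∈ c.map s, (Finset.univ.filter fun e => r e = v).card ≠ 1) (u : V) :
    ∃ w : V, 2 ≤ (Finset.univ.filter fun e => r e = w).card ∧
      Relation.ReflTransGen (fun a b => ∃ e : E, s e = a ∧ r e = b) w u := by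
  classical
  by_contra hcon
  push_neg at hcon
  set step : V → V → Prop := fun a b => ∃ e : E, s e = a ∧ r e = b with hstep
  set pred : V → V := fun v => s (hns v).choose with hpred
  set g : ℕ → V := fun t => pred^[t] u with hg
  have hgsucc : ∀ t, g (t + 1) = pred (g t) := by
    intro t
    simp only [hg, Function.iterate_succ_apply']
  have hshift : ∀ m k, g (m + k) = pred^[k] (g m) := by
    intro m k
    simp only [hg, ← Function.iterate_add_apply]
    congr 1
    omega
  have hreach : ∀ t, Relation.ReflTransGen step (g t) u := by
    intro t
    induction t with
    | zero => exact Relation.ReflTransGen.refl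
    | succ t ih =>
      rw [hgsucc t]
      exact Relation.ReflTransGen.head
        ⟨(hns (g t)).choose, rfl, (hns (g t)).choose_spec⟩ ih
  have hone : ∀ t, (Finset.univ.filter fun e => r e = g t).card = 1 := by
    intro t
    have h1 : 0 < (Finset.univ.filter fun e => r e = g t).card := by
      obtain ⟨e, he⟩ := hns (g t)
      exact Finset.card_pos.mpr ⟨e, by simp [he]⟩
    have h2 := hcon (g t)
    by_contra hne
    have : 2 ≤ (Finset.univ.filter fun e => r e = g t).card := by omega
    exact absurd (hreach t) (h2 this)
  -- pigeonhole: g is not injective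
  obtain ⟨i', j', hne, heq⟩ := Finite.exists_ne_map_eq_of_infinite g
  -- wlog i < j
  obtain ⟨i, j, hij, hgij⟩ : ∃ i j : ℕ, i < j ∧ g i = g j := by
    rcases lt_or_gt_of_ne hne with h | h
    · exact ⟨i', j', h, heq⟩
    · exact ⟨j', i', h, heq.symm⟩
  have hex : ∃ t, 0 < t ∧ g (i + t) = g i := by
    refine ⟨j - i, by omega, ?_⟩
    rw [show i + (j - i) = j by omega]
    exact hgij.symm
  set p := Nat.find hex with hpdef
  obtain ⟨hppos, hper⟩ : 0 < p ∧ g (i + p) = g i := Nat.find_spec hex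
  have hmin : ∀ t, t < p → ¬(0 < t ∧ g (i + t) = g i) := fun t ht => Nat.find_min hex ht
  have hdistinct : ∀ a b, 0 < a → a < b → b ≤ p → g (i + a) ≠ g (i + b) := by
    intro a b ha hab hbp hgab
    have h1 : g (i + (a + (p - b))) = g i := by
      have e1 : g (i + a + (p - b)) = g (i + b + (p - b)) := by
        rw [hshift (i + a) (p - b), hshift (i + b) (p - b), hgab]
      have e2 : i + b + (p - b) = i + p := by omega
      calc g (i + (a + (p - b))) = g (i + a + (p - b)) := by rw [← Nat.add_assoc]
        _ = g (i + b + (p - b)) := e1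
        _ = g (i + p) := by rw [e2]
        _ = g i := hper
    exact hmin (a + (p - b)) (by omega) ⟨by omega, h1⟩
  -- build the cycle
  set ch : V → E := fun v => (hns v).choose with hch
  have hch_r : ∀ v, r (ch v) = v := fun v => (hns v).choose_spec
  have hch_s : ∀ v, s (ch v) = pred v := fun v => rfl
  set c : List E := List.ofFn (fun k : Fin p => ch (g (i + (p - 1 - k.1)))) with hcdef
  have hclen : c.length = p := List.length_ofFn
  have hcget : ∀ (k : ℕ) (hk : k < c.length),
      c.get ⟨k, hk⟩ = ch (g (i + (p - 1 - k))) := by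
    intro k hk
    exact List.get_ofFn (fun k : Fin p => ch (g (i + (p - 1 - k.1))))
      ⟨k, by rw [List.length_ofFn]; exact hclen ▸ hk⟩
  have hcyc : IsCycle s r c := by
    refine ⟨by omega, ?_, ?_⟩
    · intro k hk
      rw [hcget k hk, hcget _ (Nat.mod_lt _ (by omega))]
      rw [hch_r, hch_s, hclen]
      by_cases hkp : k + 1 < p
      · rw [Nat.mod_eq_of_lt hkp]
        have : i + (p - 1 - (k + 1)) + 1 = i + (p - 1 - k) := by omega
        rw [← hgsucc, this]
      · have hk1 : k + 1 = p := by rw [hclen] at hk; omega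
        rw [hk1, Nat.mod_self]
        have h1 : p - 1 - k = 0 := by omega
        have h2 : i + (p - 1 - 0) + 1 = i + p := by omega
        rw [h1, ← hgsucc, h2, hper]
        simp
    · rw [hcdef, List.map_ofFn]
      rw [List.nodup_ofFn]
      intro k k' hkk'
      simp only [Function.comp_apply, hch_s] at hkk'
      have hkk'2 : g (i + (p - k.1)) = g (i + (p - k'.1)) := by
        have e1 : ∀ m : ℕ, m < p → pred (g (i + (p - 1 - m))) = g (i + (p - m)) := by
          intro m hm
          rw [← hgsucc]
          congr 1
          omega
        rw [e1 k.1 k.2, e1 k'.1 k'.2] at hkk'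
        exact hkk'
      by_contra hne2
      have hne3 : k.1 ≠ k'.1 := fun h => hne2 (Fin.ext h)
      rcases Nat.lt_or_ge k.1 k'.1 with h | h
      · exact hdistinct (p - k'.1) (p - k.1) (by omega) (by omega) (by omega) hkk'2.symm
      · exact hdistinct (p - k.1) (p - k'.1) (by omega) (by omega) (by omega) hkk'2
  obtain ⟨v, hv, hvcard⟩ := hnc c hcyc
  rw [hcdef, List.map_ofFn] at hv
  obtain ⟨k, hk⟩ := List.mem_ofFn.mp hv
  simp only [Function.comp_apply, hch_s] at hk
  have : v = g (i + (p - k.1)) := by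
    rw [← hk, ← hgsucc]
    congr 1
    omega
  exact hvcard (this ▸ hone (i + (p - k.1)))

end

section
set_option linter.unusedSectionVars false
variable [Fintype V] [Fintype E] [DecidableEq V] [DecidableEq E] (s r : E → V)

lemma cohnS_inl (e : cohnE s r) : ∃ u : V, cohnS s r e = Sum.inl u ∧ (∃ f : E, s f = u) := by
  rcases e with e₀ | e₀
  · exact ⟨s e₀, rfl, ⟨e₀, rfl⟩⟩
  · exact ⟨s e₀.1, rfl, ⟨e₀.1, rfl⟩⟩

lemma step_le (e₀ : E) :
    ∃ z, graphMonoidMk (cohnS s r) (cohnR s r) (Pi.single (Sum.inl (r e₀) : cohnV s) 1) + z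
      = graphMonoidMk (cohnS s r) (cohnR s r) (Pi.single (Sum.inl (s e₀) : cohnV s) 1) := by
  have h1 := mk_rel (cohnS s r) (cohnR s r) (Sum.inl (s e₀)) ⟨Sum.inl e₀, rfl⟩
  have hle : (Pi.single (Sum.inl (r e₀) : cohnV s) 1 : cohnV s → ℕ) ≤
      ∑ e : cohnE s r, if cohnS s r e = Sum.inl (s e₀) then Pi.single (cohnR s r e) 1 else 0 := by
    rw [Pi.le_def]
    intro x
    rw [Finset.sum_apply]
    have hterm : (Pi.single (Sum.inl (r e₀) : cohnV s) 1 : cohnV s → ℕ) x =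
        (if cohnS s r (Sum.inl e₀ : cohnE s r) = Sum.inl (s e₀)
          then Pi.single (cohnR s r (Sum.inl e₀ : cohnE s r)) 1 else (0 : cohnV s → ℕ)) x := by
      simp [cohnS, cohnR]
    rw [hterm]
    exact Finset.single_le_sum (f := fun e : cohnE s r =>
        (if cohnS s r e = Sum.inl (s e₀) then Pi.single (cohnR s r e) 1 else 0) x)
      (fun i _ => Nat.zero_le _) (Finset.mem_univ (Sum.inl e₀))
  obtain ⟨z, hz⟩ := mkh_le_of_le (cohnS s r) (cohnR s r) hle
  exact ⟨z, by rw [hz, ← h1]⟩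

lemma reach_le {a b : V} (h : Relation.ReflTransGen (fun a b => ∃ e : E, s e = a ∧ r e = b) a b) :
    ∃ z, graphMonoidMk (cohnS s r) (cohnR s r) (Pi.single (Sum.inl b : cohnV s) 1) + z
      = graphMonoidMk (cohnS s r) (cohnR s r) (Pi.single (Sum.inl a : cohnV s) 1) := by
  induction h with
  | refl => exact ⟨0, add_zero _⟩
  | tail hab hbc ih =>
    obtain ⟨e₀, hs, hr⟩ := hbc
    obtain ⟨z₁, hz₁⟩ := step_le s r e₀
    obtain ⟨z₂, hz₂⟩ := ih
    rw [hs, hr] at hz₁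
    exact ⟨z₁ + z₂, by rw [← add_assoc, hz₁, hz₂]⟩

lemma not_ugn (hns : ∀ v : V, ∃ e : E, r e = v)
    (hnc : ∀ c : List E, IsCycle s r c →
      ∃ v ∈ c.map s, (Finset.univ.filter fun e => r e = v).card ≠ 1) :
    ∃ z, (2 : ℕ) • graphMonoidMk (cohnS s r) (cohnR s r) (∑ w : cohnV s, Pi.single w 1) + z
      = (1 : ℕ) • graphMonoidMk (cohnS s r) (cohnR s r) (∑ w : cohnV s, Pi.single w 1) := by
  classical
  set Mk := graphMonoidMk (cohnS s r) (cohnR s r) with hMk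
  set D : cohnV s → ℕ := ∑ w : cohnV s, Pi.single w 1 with hD
  set T1 : cohnV s → ℕ := ∑ e : cohnE s r, Pi.single (cohnR s r e) 1 with hT1
  set T2 : cohnV s → ℕ :=
    ∑ u : V, if (∃ e : E, s e = u) then (0 : cohnV s → ℕ) else Pi.single (Sum.inl u) 1 with hT2
  set T3 : cohnV s → ℕ :=
    ∑ v : {v : V // ∃ e : E, s e = v}, Pi.single (Sum.inr v : cohnV s) 1 with hT3
  -- Step A : Mk D = Mk (T1 + T2 + T3)
  have hA : Mk D = Mk (T1 + T2 + T3) := by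
    have hsplit : D = (∑ u : V, Pi.single (Sum.inl u : cohnV s) 1) + T3 := by
      rw [hD, hT3]
      exact Fintype.sum_sum_type _
    have hBu : ∀ u : V, Mk (Pi.single (Sum.inl u : cohnV s) 1) =
        Mk ((∑ e : cohnE s r, if cohnS s r e = Sum.inl u then Pi.single (cohnR s r e) 1 else 0)
          + (if (∃ e : E, s e = u) then 0 else Pi.single (Sum.inl u) 1)) := by
      intro u
      by_cases h : ∃ e : E, s e = u
      · rw [if_pos h, add_zero]
        exact mk_rel (cohnS s r) (cohnR s r) (Sum.inl u)
          ⟨Sum.inl h.choose, by simp [cohnS, h.choose_spec]⟩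
      · rw [if_neg h]
        have hz : (∑ e : cohnE s r,
            if cohnS s r e = Sum.inl u then Pi.single (cohnR s r e) 1
            else (0 : cohnV s → ℕ)) = 0 := by
          refine Finset.sum_eq_zero fun e _ => ?_
          rw [if_neg]
          intro hC
          obtain ⟨u', hu', hreg⟩ := cohnS_inl s r e
          rw [hu', Sum.inl.injEq] at hC
          exact h (hC ▸ hreg)
        rw [hz, zero_add]
    have hsum1 : (∑ u : V, ∑ e : cohnE s r,
        if cohnS s r e = Sum.inl u then Pi.single (cohnR s r e) 1 else 0) = T1 := by
      rw [Finset.sum_comm, hT1]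
      refine Finset.sum_congr rfl fun e _ => ?_
      obtain ⟨u', hu', _⟩ := cohnS_inl s r e
      have hcond : ∀ u : V, (cohnS s r e = Sum.inl u) ↔ (u = u') := by
        intro u
        rw [hu', Sum.inl.injEq, eq_comm]
      calc (∑ u : V, if cohnS s r e = Sum.inl u then Pi.single (cohnR s r e) 1 else 0)
          = ∑ u : V, if u = u' then Pi.single (cohnR s r e) 1 else 0 :=
            Finset.sum_congr rfl fun u _ => if_congr (hcond u) rfl rfl
        _ = Pi.single (cohnR s r e) 1 := by rw [Finset.sum_ite_eq']; simp
    calc Mk D = Mk (∑ u : V, Pi.single (Sum.inl u : cohnV s) 1) + Mk T3 := by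
          rw [hsplit, map_add]
      _ = (∑ u : V, Mk (Pi.single (Sum.inl u : cohnV s) 1)) + Mk T3 := by rw [map_sum]
      _ = (∑ u : V, Mk ((∑ e : cohnE s r,
            if cohnS s r e = Sum.inl u then Pi.single (cohnR s r e) 1 else 0)
            + (if (∃ e : E, s e = u) then 0 else Pi.single (Sum.inl u) 1))) + Mk T3 := by
          rw [Finset.sum_congr rfl fun u _ => hBu u]
      _ = Mk ((∑ u : V, ((∑ e : cohnE s r,
            if cohnS s r e = Sum.inl u then Pi.single (cohnR s r e) 1 else 0)
            + (if (∃ e : E, s e = u) then 0 else Pi.single (Sum.inl u) 1)))) + Mk T3 := by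
          congr 1
          exact (map_sum Mk _ Finset.univ).symm
      _ = Mk (T1 + T2) + Mk T3 := by
          rw [Finset.sum_add_distrib, hsum1, hT2]
      _ = Mk (T1 + T2 + T3) := by rw [← map_add]
  -- pointwise facts
  have hD1 : ∀ x : cohnV s, D x = 1 := by
    intro x
    rw [hD, Finset.sum_apply]
    simp [Pi.single_apply]
  have hT1card : ∀ x : cohnV s, ∀ e : cohnE s r, cohnR s r e = x →
      1 ≤ T1 x := by
    intro x e he
    rw [hT1, Finset.sum_apply]
    have h1 : (1 : ℕ) = (Pi.single (cohnR s r e) 1 : cohnV s → ℕ) x := by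
      rw [he, Pi.single_eq_same]
    refine le_trans (le_of_eq h1) ?_
    exact Finset.single_le_sum
      (f := fun e : cohnE s r => (Pi.single (cohnR s r e) 1 : cohnV s → ℕ) x)
      (fun i _ => Nat.zero_le _) (Finset.mem_univ e)
  have hT3v : ∀ v : {v : V // ∃ e : E, s e = v}, T3 (Sum.inr v) = 1 := by
    intro v
    rw [hT3, Finset.sum_apply]
    simp [Pi.single_apply]
  have hTge1 : ∀ x : cohnV s, 1 ≤ (T1 + T2 + T3) x := by
    intro x
    rcases x with u | v
    · have h1 : 1 ≤ T1 (Sum.inl u) := by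
        obtain ⟨e₀, he₀⟩ := hns u
        exact hT1card (Sum.inl u) (Sum.inl e₀) (by simp [cohnR, he₀])
      calc (1:ℕ) ≤ T1 (Sum.inl u) := h1
        _ ≤ (T1 + T2 + T3) (Sum.inl u) := by simp only [Pi.add_apply]; omega
    · calc (1:ℕ) = T3 (Sum.inr v) := (hT3v v).symm
        _ ≤ (T1 + T2 + T3) (Sum.inr v) := by simp only [Pi.add_apply]; omega
  -- X and absorption
  set X : cohnV s → ℕ := T1 + T2 + T3 - D with hX
  have hTDX : T1 + T2 + T3 = D + X := by
    funext x
    have h1 := hTge1 x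
    have h2 := hD1 x
    simp only [Pi.add_apply] at h1
    simp only [hX, Pi.add_apply, Pi.sub_apply]
    omega
  have hEq : Mk D = Mk D + Mk X := by
    conv_lhs => rw [hA, hTDX, map_add]
  have hIter : ∀ k : ℕ, Mk D = Mk D + k • Mk X := by
    intro k
    induction k with
    | zero => rw [zero_nsmul, add_zero]
    | succ k ih =>
      calc Mk D = Mk D + Mk X := hEq
        _ = (Mk D + k • Mk X) + Mk X := by rw [← ih]
        _ = Mk D + (k + 1) • Mk X := by rw [add_assoc, succ_nsmul]
  -- single ≤ X bounds
  have hsingle_le : ∀ a : cohnV s, 1 ≤ X a → Pi.single a 1 ≤ X := by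
    intro a ha
    rw [Pi.le_def]
    intro x
    rcases eq_or_ne x a with rfl | hne
    · rwa [Pi.single_eq_same]
    · rw [Pi.single_eq_of_ne hne]
      exact Nat.zero_le _
  have hXinr : ∀ v : {v : V // ∃ e : E, s e = v}, 1 ≤ X (Sum.inr v) := by
    intro v
    obtain ⟨e₀, he₀⟩ := hns v.1
    have hreg : ∃ f : E, s f = r e₀ := by rw [he₀]; exact v.2
    have h1 : 1 ≤ T1 (Sum.inr v) :=
      hT1card (Sum.inr v) (Sum.inr ⟨e₀, hreg⟩)
        (by simp only [cohnR, Sum.elim_inr]; exact congrArg Sum.inr (Subtype.ext he₀))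
    have h3 := hT3v v
    have hd := hD1 (Sum.inr v : cohnV s)
    simp only [hX, Pi.sub_apply, Pi.add_apply]
    omega
  have hXhub : ∀ w : V, 2 ≤ (Finset.univ.filter fun e => r e = w).card →
      1 ≤ X (Sum.inl w) := by
    intro w hw
    obtain ⟨e₁, he₁, e₂, he₂, hne⟩ := Finset.one_lt_card.mp hw
    simp only [Finset.mem_filter, Finset.mem_univ, true_and] at he₁ he₂
    have h2 : 2 ≤ T1 (Sum.inl w) := by
      rw [hT1, Finset.sum_apply]
      have hsub : ({Sum.inl e₁, Sum.inl e₂} : Finset (cohnE s r)) ⊆ Finset.univ :=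
        Finset.subset_univ _
      have hpair : ∑ e ∈ ({Sum.inl e₁, Sum.inl e₂} : Finset (cohnE s r)),
          (Pi.single (cohnR s r e) 1 : cohnV s → ℕ) (Sum.inl w) = 2 := by
        rw [Finset.sum_pair (by simpa using hne)]
        simp only [cohnR, Sum.elim_inl]
        rw [he₁, he₂, Pi.single_eq_same]
      rw [← hpair]
      exact Finset.sum_le_sum_of_subset hsub
    have hd := hD1 (Sum.inl w : cohnV s)
    simp only [hX, Pi.sub_apply, Pi.add_apply]
    have : T1 (Sum.inl w) ≤ T1 (Sum.inl w) + T2 (Sum.inl w) + T3 (Sum.inl w) := by omega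
    omega
  -- every generator is ≤ Mk X
  have hgen : ∀ x : cohnV s, ∃ z, Mk (Pi.single x 1) + z = Mk X := by
    intro x
    rcases x with u | v
    · obtain ⟨w, hw2, hwreach⟩ := exists_hub s r hns hnc u
      obtain ⟨z₁, hz₁⟩ := reach_le s r hwreach
      obtain ⟨z₂, hz₂⟩ := mkh_le_of_le (cohnS s r) (cohnR s r)
        (hsingle_le _ (hXhub w hw2))
      exact ⟨z₁ + z₂, by rw [← add_assoc, hz₁, hz₂]⟩
    · exact mkh_le_of_le (cohnS s r) (cohnR s r) (hsingle_le _ (hXinr v))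
  -- D ≤ N • X
  set N := Fintype.card (cohnV s) with hN
  have hDle : ∃ z, Mk D + z = N • Mk X := by
    have hmap : Mk D = ∑ x : cohnV s, Mk (Pi.single x 1) := by rw [hD, map_sum]
    obtain ⟨z, hz⟩ := sum_mle Finset.univ (fun x : cohnV s => Mk (Pi.single x 1))
      (fun _ => Mk X) (fun x _ => hgen x)
    refine ⟨z, ?_⟩
    rw [hmap, hz, Finset.sum_const, Finset.card_univ]
  -- conclude
  obtain ⟨z, hz⟩ := hDle
  have hfinal : Mk D + (Mk D + z) = Mk D := by
    rw [hz]
    exact (hIter N).symm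
  exact ⟨z, by rw [two_nsmul, one_nsmul, add_assoc]; exact hfinal⟩

end

/-- Let `E` be a finite directed graph and `F(E)` its Cohn companion
graph.  The order-unit `[Σ_{w ∈ F(E)⁰} w]` of the graph monoid `M_{F(E)}` has Unbounded
Generating Number (for positive `n, n'`, `n • d ≤ n' • d → n ≤ n'`, where `x ≤ y` iff
`∃ z, x + z = y`) if and only if `E` contains a source (a vertex `v` with
`r⁻¹(v) = ∅`) or `E` contains a source cycle (a cycle `c` with `|r⁻¹(v)| = 1` for all
vertices `v` of `c`). -/
theorem stmt_14 [Fintype V] [Fintype E] [DecidableEq V] [DecidableEq E]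
    (s r : E → V) :
    ((∀ n n' : ℕ, 0 < n → 0 < n' →
        (∃ z, n • graphMonoidMk (cohnS s r) (cohnR s r)
              (∑ w : cohnV s, Pi.single w 1) + z =
            n' • graphMonoidMk (cohnS s r) (cohnR s r)
              (∑ w : cohnV s, Pi.single w 1)) →
          n ≤ n') ↔
      ((∃ v : V, ¬ ∃ e : E, r e = v) ∨
        ∃ c : List E, IsCycle s r c ∧
          ∀ v ∈ c.map s, (Finset.univ.filter fun e => r e = v).card = 1)) := by
  constructor
  · intro hUGN
    by_contra hrhs
    push_neg at hrhs
    obtain ⟨hns, hnc⟩ := hrhs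
    obtain ⟨z, hz⟩ := not_ugn s r hns hnc
    have := hUGN 2 1 (by norm_num) (by norm_num) ⟨z, hz⟩
    omega
  · rintro (⟨v₀, hv₀⟩ | ⟨c, hc, hcard⟩)
    · obtain ⟨w, hcompat, hpos⟩ := compat_of_source s r v₀ hv₀
      exact ugn_of_weights (cohnS s r) (cohnR s r) w hcompat hpos
    · obtain ⟨w, hcompat, hpos⟩ := compat_of_cycle s r c hc hcard
      exact ugn_of_weights (cohnS s r) (cohnR s r) w hcompat hpos
end

section
/- Every stably finite unital ring has Unbounded Generating Number: if R is a unital ring such that for every positive integer n and every right R-module K, R^n ≅ R^n ⊕ K implies K = 0, then for all positive integers m and n and every right R-module K, R^n ≅ R^m ⊕ K implies n ≥ m. -/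
/-- Every stably finite unital (nonzero) ring has Unbounded Generating
Number: if for every positive integer `n` and every right `R`-module `K`,
`R^n ≅ R^n ⊕ K` implies `K = 0`, then for all positive integers `m`, `n` and every right
`R`-module `K`, `R^n ≅ R^m ⊕ K` implies `n ≥ m`.  Right `R`-modules are modules over
`Rᵐᵒᵖ`, and `K = 0` is expressed as `Subsingleton K`. -/
theorem stmt_16 (R : Type) [Ring R] [Nontrivial R]
    (hsf : ∀ n : ℕ, 0 < n → ∀ (K : Type) [AddCommGroup K] [Module Rᵐᵒᵖ K],
      Nonempty ((Fin n → R) ≃ₗ[Rᵐᵒᵖ] ((Fin n → R) × K)) → Subsingleton K) :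
    ∀ m n : ℕ, 0 < m → 0 < n → ∀ (K : Type) [AddCommGroup K] [Module Rᵐᵒᵖ K],
      Nonempty ((Fin n → R) ≃ₗ[Rᵐᵒᵖ] ((Fin m → R) × K)) → m ≤ n := by
  intro m n hm hn K _ _ ⟨e⟩
  by_contra h
  push_neg at h
  -- n < m, so m = n + (m - n) with m - n > 0
  have hsplit : (Fin m → R) ≃ₗ[Rᵐᵒᵖ] (Fin n → R) × (Fin (m - n) → R) := by
    refine (LinearEquiv.funCongrLeft Rᵐᵒᵖ R ?_).symm.trans
      (LinearEquiv.sumArrowLequivProdArrow _ _ Rᵐᵒᵖ R)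
    exact (finSumFinEquiv.trans (finCongr (show n + (m - n) = m by omega))).symm
  have e2 : (Fin n → R) ≃ₗ[Rᵐᵒᵖ] (Fin n → R) × ((Fin (m - n) → R) × K) :=
    e.trans ((hsplit.prodCongr (LinearEquiv.refl Rᵐᵒᵖ K)).trans
      (LinearEquiv.prodAssoc Rᵐᵒᵖ _ _ _))
  have hsub := hsf n hn _ ⟨e2⟩
  have : Subsingleton R := by
    constructor
    intro a b
    have := hsub.elim ((fun _ => a, 0) : (Fin (m - n) → R) × K)
      ((fun _ => b, 0) : (Fin (m - n) → R) × K)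
    have := congrFun (congrArg Prod.fst this) ⟨0, by omega⟩
    exact this
  exact (not_subsingleton R) this
end

section
/- Let E be a finite no-exit directed graph (no cycle of E has an exit). Then the graph monoid M_E is a cancellative monoid: for all a, b, c ∈ M_E, a + c = b + c implies a = b. -/
open scoped Classical


variable {V E : Type}

/-- An exit for the cycle `c`: an edge `f` with `s f = s eᵢ` and `f ≠ eᵢ` for some edge
`eᵢ` of `c`. -/
def HasExit (s r : E → V) (c : List E) : Prop :=
  ∃ (f : E) (i : ℕ) (hi : i < c.length), s f = s (c.get ⟨i, hi⟩) ∧ f ≠ c.get ⟨i, hi⟩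

def GStep (s r : E → V) (v w : V) : Prop := ∃ e, s e = v ∧ r e = w

def GCyclic (s r : E → V) (v : V) : Prop :=
  ∃ w, GStep s r v w ∧ Relation.ReflTransGen (GStep s r) w v

def GChain (s r : E → V) : V → List E → V → Prop
  | v, [], w => v = w
  | v, e :: p, w => s e = v ∧ GChain s r (r e) p w

namespace GAux

variable (s r : E → V)

theorem gchain_append (p q : List E) (v w : V) :
    GChain s r v (p ++ q) w ↔ ∃ u, GChain s r v p u ∧ GChain s r u q w := by
  induction p generalizing v with
  | nil =>
    constructor
    · intro h; exact ⟨v, rfl, h⟩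
    · rintro ⟨u, h1, h2⟩; cases h1; exact h2
  | cons e p ih =>
    constructor
    · rintro ⟨h1, h2⟩
      obtain ⟨u, hu1, hu2⟩ := (ih (r e)).1 h2
      exact ⟨u, ⟨h1, hu1⟩, hu2⟩
    · rintro ⟨u, ⟨h1, h2⟩, h3⟩
      exact ⟨h1, (ih (r e)).2 ⟨u, h2, h3⟩⟩

theorem reflTransGen_iff_gchain (v w : V) :
    Relation.ReflTransGen (GStep s r) v w ↔ ∃ c, GChain s r v c w := by
  constructor
  · intro h
    induction h with
    | refl => exact ⟨[], rfl⟩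
    | tail _ hstep ih =>
      obtain ⟨c, hc⟩ := ih
      obtain ⟨e, he1, he2⟩ := hstep
      refine ⟨c ++ [e], (gchain_append s r c [e] _ _).2 ⟨_, hc, he1, he2⟩⟩
  · rintro ⟨c, hc⟩
    induction c generalizing v with
    | nil => cases hc; exact .refl
    | cons e p ih =>
      obtain ⟨h1, h2⟩ := hc
      exact .head ⟨e, h1, rfl⟩ (ih _ h2)

theorem gchain_start {v w : V} {e : E} {p : List E} (h : GChain s r v (e :: p) w) :
    s e = v := h.1

theorem gchain_take_drop {c : List E} {v w : V} (h : GChain s r v c w) (k : ℕ)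
    (hk : k < c.length) :
    GChain s r v (c.take k) (s (c.get ⟨k, hk⟩)) ∧
      GChain s r (s (c.get ⟨k, hk⟩)) (c.drop k) w := by
  induction c generalizing v k with
  | nil => simp at hk
  | cons e p ih =>
    obtain ⟨h1, h2⟩ := h
    cases k with
    | zero => exact ⟨h1.symm, rfl, h2⟩
    | succ k =>
      have hk' : k < p.length := by simpa using hk
      obtain ⟨ha, hb⟩ := ih h2 k hk'
      exact ⟨⟨h1, ha⟩, hb⟩

theorem gchain_drop_cons {c : List E} {v w : V} (h : GChain s r v c w) (k : ℕ)
    (hk : k < c.length) :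
    GChain s r (r (c.get ⟨k, hk⟩)) (c.drop (k + 1)) w := by
  have h2 := (gchain_take_drop s r h k hk).2
  rw [List.drop_eq_getElem_cons hk] at h2
  exact h2.2

theorem isCycle_of_gchain {c : List E} {v : V} (hne : c ≠ []) (h : GChain s r v c v)
    (hnd : (c.map s).Nodup) : IsCycle s r c := by
  have h0 : 0 < c.length := List.length_pos_iff.2 hne
  refine ⟨h0, fun i hi => ?_, hnd⟩
  have hs0 : s (c.get ⟨0, h0⟩) = v := by
    have := h
    rw [← List.drop_zero (l := c), List.drop_eq_getElem_cons h0] at this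
    exact this.1
  rcases lt_or_eq_of_le (Nat.succ_le_of_lt hi) with h1 | h1
  · have hmod : (i + 1) % c.length = i + 1 := Nat.mod_eq_of_lt h1
    have hd := gchain_drop_cons s r h i hi
    rw [List.drop_eq_getElem_cons h1] at hd
    simp only [hmod]
    exact hd.1.symm
  · have h1' : i + 1 = c.length := h1
    have hd := gchain_drop_cons s r h i hi
    rw [h1', List.drop_length] at hd
    have hmod : (i + 1) % c.length = 0 := by simp [← h1']
    simp only [hmod]
    rw [hs0, ← hd]

theorem exists_cycle_at {v : V} {c : List E} (hne : c ≠ []) (h : GChain s r v c v) :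
    ∃ c', c' ≠ [] ∧ GChain s r v c' v ∧ ((c' : List E).map s).Nodup := by
  suffices H : ∀ n (c : List E), c.length = n → c ≠ [] → GChain s r v c v →
      ∃ c', c' ≠ [] ∧ GChain s r v c' v ∧ ((c' : List E).map s).Nodup by
    exact H _ c rfl hne h
  intro n
  induction n using Nat.strong_induction_on with
  | _ n ih =>
  intro c hn hne h
  subst hn
  by_cases hnd : (c.map s).Nodup
  · exact ⟨c, hne, h, hnd⟩
  · rw [List.nodup_iff_injective_get] at hnd
    simp only [Function.Injective, not_forall] at hnd
    obtain ⟨i, j, hij, hne'⟩ := hnd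
    -- wlog i < j
    obtain ⟨i, j, hlt, hij⟩ : ∃ i j : Fin (c.map s).length, i < j ∧
        (c.map s).get i = (c.map s).get j := by
      rcases lt_or_gt_of_ne hne' with hl | hl
      · exact ⟨i, j, hl, hij⟩
      · exact ⟨j, i, hl, hij.symm⟩
    have hjlen : (j : ℕ) < c.length := by simpa using j.2
    have hilen : (i : ℕ) < c.length := by simpa using i.2
    have hss : s (c.get ⟨i, hilen⟩) = s (c.get ⟨j, hjlen⟩) := by
      simpa using hij
    have hij2 : (i : ℕ) < (j : ℕ) := hlt
    have h1 : GChain s r v (c.take i) (s (c.get ⟨i, hilen⟩)) :=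
      (gchain_take_drop s r h i hilen).1
    have h2 : GChain s r (s (c.get ⟨j, hjlen⟩)) (c.drop j) v :=
      (gchain_take_drop s r h j hjlen).2
    rw [hss] at h1
    have hch : GChain s r v (c.take i ++ c.drop j) v :=
      (gchain_append s r _ _ _ _).2 ⟨_, h1, h2⟩
    have hlen : (c.take i ++ c.drop j).length < c.length := by
      rw [List.length_append, List.length_take, List.length_drop]
      omega
    have hne2 : c.take i ++ c.drop j ≠ [] := by
      intro hcon
      have hlc : (c.take i ++ c.drop j).length = 0 := by rw [hcon]; rfl
      rw [List.length_append, List.length_drop] at hlc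
      omega
    exact ih _ hlen _ rfl hne2 hch

theorem uniq_out (hnoexit : ∀ c : List E, IsCycle s r c → ¬ HasExit s r c)
    {v : V} (hv : GCyclic s r v) : ∀ e₁ e₂, s e₁ = v → s e₂ = v → e₁ = e₂ := by
  obtain ⟨w, ⟨e, he1, he2⟩, hwv⟩ := hv
  obtain ⟨p, hp⟩ := (reflTransGen_iff_gchain s r w v).1 hwv
  have hch : GChain s r v (e :: p) v := ⟨he1, he2 ▸ hp⟩
  obtain ⟨c, hcne, hcch, hcnd⟩ := exists_cycle_at s r (List.cons_ne_nil e p) hch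
  have hcyc := isCycle_of_gchain s r hcne hcch hcnd
  have h0 : 0 < c.length := List.length_pos_iff.2 hcne
  have hs0 : s (c.get ⟨0, h0⟩) = v := by
    have := hcch
    rw [← List.drop_zero (l := c), List.drop_eq_getElem_cons h0] at this
    exact this.1
  have key : ∀ f, s f = v → f = c.get ⟨0, h0⟩ := by
    intro f hf
    by_contra hne'
    exact hnoexit c hcyc ⟨f, 0, h0, by rw [hs0, hf], hne'⟩
  intro e₁ e₂ h₁ h₂
  rw [key e₁ h₁, key e₂ h₂]

theorem gcyclic_next (hnoexit : ∀ c : List E, IsCycle s r c → ¬ HasExit s r c)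
    {v : V} (hv : GCyclic s r v) {e : E} (he : s e = v) :
    Relation.ReflTransGen (GStep s r) (r e) v ∧ GCyclic s r (r e) := by
  obtain ⟨w, ⟨e', he'1, he'2⟩, hwv⟩ := hv
  have he'e : e' = e := uniq_out s r hnoexit ⟨w, ⟨e', he'1, he'2⟩, hwv⟩ e' e he'1 he
  have hrw : r e = w := he'e ▸ he'2
  subst hrw
  refine ⟨hwv, ?_⟩
  rcases hwv.cases_head with h | ⟨u, hsu, huv⟩
  · rw [h]; exact ⟨r e, ⟨e, he, rfl⟩, hwv⟩
  · exact ⟨u, hsu, huv.trans (Relation.ReflTransGen.single ⟨e, he, rfl⟩)⟩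

def GEquiv (v w : V) : Prop :=
  Relation.ReflTransGen (GStep s r) v w ∧ Relation.ReflTransGen (GStep s r) w v

theorem gequiv_refl (v : V) : GEquiv s r v v := ⟨.refl, .refl⟩

theorem gequiv_symm {v w : V} (h : GEquiv s r v w) : GEquiv s r w v := ⟨h.2, h.1⟩

theorem gequiv_trans {u v w : V} (h1 : GEquiv s r u v) (h2 : GEquiv s r v w) :
    GEquiv s r u w := ⟨h1.1.trans h2.1, h2.2.trans h1.2⟩

noncomputable def grep [Fintype V] (v : V) : V :=
  letI : LinearOrder V := LinearOrder.lift' (Fintype.equivFin V) (Fintype.equivFin V).injective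
  (Finset.univ.filter (fun w => GEquiv s r v w)).min'
    ⟨v, by simp only [Finset.mem_filter, Finset.mem_univ, true_and]; exact gequiv_refl s r v⟩

theorem grep_mem [Fintype V] (v : V) : GEquiv s r v (grep s r v) := by
  letI : LinearOrder V := LinearOrder.lift' (Fintype.equivFin V) (Fintype.equivFin V).injective
  have := Finset.min'_mem (Finset.univ.filter (fun w => GEquiv s r v w))
    ⟨v, by simp only [Finset.mem_filter, Finset.mem_univ, true_and]; exact gequiv_refl s r v⟩
  simp only [Finset.mem_filter, Finset.mem_univ, true_and] at this
  exact this

theorem grep_eq [Fintype V] {v w : V} (h : GEquiv s r v w) : grep s r v = grep s r w := by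
  have hset : (Finset.univ.filter (fun u => GEquiv s r v u)) =
      (Finset.univ.filter (fun u => GEquiv s r w u)) := by
    ext u
    simp only [Finset.mem_filter, Finset.mem_univ, true_and]
    exact ⟨fun hu => gequiv_trans s r (gequiv_symm s r h) hu,
      fun hu => gequiv_trans s r h hu⟩
  simp only [grep]
  congr 1

noncomputable def gm [Fintype V] (v : V) : ℕ :=
  (Finset.univ.filter (fun w => Relation.ReflTransGen (GStep s r) v w)).card

theorem gm_pos [Fintype V] (v : V) : 0 < gm s r v :=
  Finset.card_pos.2 ⟨v, by
    simp only [Finset.mem_filter, Finset.mem_univ, true_and]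
    exact Relation.ReflTransGen.refl⟩

theorem gm_le_card [Fintype V] (v : V) : gm s r v ≤ Fintype.card V := by
  classical
  exact Finset.card_filter_le Finset.univ
    (fun w => Relation.ReflTransGen (GStep s r) v w)

theorem gm_lt [Fintype V] {v : V} (hnc : ¬ GCyclic s r v) {w : V} (hstep : GStep s r v w) :
    gm s r w < gm s r v := by
  apply Finset.card_lt_card
  constructor
  · intro u hu
    simp only [Finset.mem_filter, Finset.mem_univ, true_and] at hu ⊢
    exact (Relation.ReflTransGen.single hstep).trans hu
  · intro hsub
    have hv : v ∈ Finset.univ.filter (fun u => Relation.ReflTransGen (GStep s r) v u) := by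
      simp only [Finset.mem_filter, Finset.mem_univ, true_and]
      exact Relation.ReflTransGen.refl
    have := hsub hv
    simp only [Finset.mem_filter, Finset.mem_univ, true_and] at this
    exact hnc ⟨w, hstep, this⟩

end GAux

noncomputable def phiAux (s r : E → V) [Fintype V] [Fintype E] [DecidableEq V] :
    ℕ → V → V → ℕ
  | 0, v => Pi.single v 1
  | n+1, v =>
    if GCyclic s r v then Pi.single (GAux.grep s r v) 1
    else if ∃ e, s e = v then ∑ e, if s e = v then phiAux s r n (r e) else 0
    else Pi.single v 1

namespace GAux2

variable (s r : E → V) [Fintype V] [Fintype E] [DecidableEq V]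

open GAux

theorem phiAux_stab : ∀ n k (v : V), gm s r v ≤ k → k ≤ n →
    phiAux s r k v = phiAux s r n v := by
  intro n
  induction n using Nat.strong_induction_on with
  | _ n ih =>
  intro k v hk hkn
  rcases Nat.eq_or_lt_of_le hkn with rfl | hlt
  · rfl
  have hk1 : 0 < k := lt_of_lt_of_le (gm_pos s r v) hk
  obtain ⟨k', rfl⟩ : ∃ k', k = k' + 1 := ⟨k - 1, by omega⟩
  obtain ⟨n', rfl⟩ : ∃ n', n = n' + 1 := ⟨n - 1, by omega⟩
  show phiAux s r (k' + 1) v = phiAux s r (n' + 1) v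
  rw [phiAux, phiAux]
  by_cases hc : GCyclic s r v
  · rw [if_pos hc, if_pos hc]
  rw [if_neg hc, if_neg hc]
  by_cases hreg : ∃ e, s e = v
  · rw [if_pos hreg, if_pos hreg]
    refine Finset.sum_congr rfl fun e _ => ?_
    by_cases he : s e = v
    · rw [if_pos he, if_pos he]
      have hlt' : gm s r (r e) < gm s r v := gm_lt s r hc ⟨e, he, rfl⟩
      have h1 : gm s r (r e) ≤ k' := by omega
      have h2 : phiAux s r k' (r e) = phiAux s r n' (r e) := by
        rcases Nat.lt_or_ge k' n' with h | h
        · exact ih n' (by omega) k' (r e) h1 (by omega)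
        · have : k' = n' := by omega
          rw [this]
      exact h2
    · rw [if_neg he, if_neg he]
  · rw [if_neg hreg, if_neg hreg]

noncomputable def gphi (v : V) : V → ℕ := phiAux s r (Fintype.card V + 1) v

theorem gphi_cyclic {v : V} (hv : GCyclic s r v) :
    gphi s r v = Pi.single (grep s r v) 1 := by
  rw [gphi, phiAux, if_pos hv]

theorem gphi_sink {v : V} (hv : ¬ ∃ e, s e = v) : gphi s r v = Pi.single v 1 := by
  have hnc : ¬ GCyclic s r v := by
    rintro ⟨w, ⟨e, he, -⟩, -⟩
    exact hv ⟨e, he⟩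
  rw [gphi, phiAux, if_neg hnc, if_neg hv]

theorem gphi_rec {v : V} (hnc : ¬ GCyclic s r v) (hreg : ∃ e, s e = v) :
    gphi s r v = ∑ e, if s e = v then gphi s r (r e) else 0 := by
  rw [gphi, phiAux, if_neg hnc, if_pos hreg]
  refine Finset.sum_congr rfl fun e _ => ?_
  by_cases he : s e = v
  · rw [if_pos he, if_pos he]
    have hlt' : gm s r (r e) < gm s r v := gm_lt s r hnc ⟨e, he, rfl⟩
    have hle : gm s r v ≤ Fintype.card V := gm_le_card s r v
    exact phiAux_stab s r (Fintype.card V + 1) (Fintype.card V) (r e) (by omega) (by omega)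
  · rw [if_neg he, if_neg he]

theorem gphi_rel (hnoexit : ∀ c : List E, IsCycle s r c → ¬ HasExit s r c)
    {v : V} (hreg : ∃ e, s e = v) :
    gphi s r v = ∑ e, if s e = v then gphi s r (r e) else 0 := by
  by_cases hv : GCyclic s r v
  · obtain ⟨e₀, he₀⟩ := hreg
    have huniq := uniq_out s r hnoexit hv
    rw [Finset.sum_eq_single e₀]
    · rw [if_pos he₀, gphi_cyclic s r hv,
        gphi_cyclic s r (gcyclic_next s r hnoexit hv he₀).2]
      have : GEquiv s r v (r e₀) :=
        ⟨Relation.ReflTransGen.single ⟨e₀, he₀, rfl⟩, (gcyclic_next s r hnoexit hv he₀).1⟩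
      rw [grep_eq s r this]
    · intro b _ hb
      rw [if_neg fun hbv => hb (huniq b e₀ hbv he₀)]
    · intro h
      exact absurd (Finset.mem_univ e₀) h
  · exact gphi_rec s r hv hreg

end GAux2


namespace GAux3

variable (s r : E → V) [Fintype V] [Fintype E] [DecidableEq V]

open GAux GAux2

noncomputable def Phi0 : (V → ℕ) →+ (V → ℕ) where
  toFun x := ∑ w, x w • gphi s r w
  map_zero' := by simp
  map_add' x y := by
    simp only [Pi.add_apply, add_smul, Finset.sum_add_distrib]

theorem Phi0_single (v : V) : Phi0 s r (Pi.single v 1) = gphi s r v := by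
  show (∑ w, Pi.single v 1 w • gphi s r w) = _
  rw [Finset.sum_eq_single v]
  · rw [Pi.single_eq_same, one_smul]
  · intro b _ hb
    rw [Pi.single_eq_of_ne hb, zero_smul]
  · intro h; exact absurd (Finset.mem_univ v) h

theorem Phi0_rel (hnoexit : ∀ c : List E, IsCycle s r c → ¬ HasExit s r c) :
    ∀ x y, graphRel s r x y → Phi0 s r x = Phi0 s r y := by
  rintro x y ⟨v, hreg, rfl, rfl⟩
  rw [Phi0_single, map_sum, gphi_rel s r hnoexit hreg]
  refine Finset.sum_congr rfl fun e _ => ?_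
  by_cases he : s e = v
  · rw [if_pos he, if_pos he, Phi0_single]
  · rw [if_neg he, if_neg he, map_zero]

noncomputable def Phi (hnoexit : ∀ c : List E, IsCycle s r c → ¬ HasExit s r c) :
    (addConGen (graphRel s r)).Quotient →+ (V → ℕ) :=
  AddCon.lift _ (Phi0 s r)
    (AddCon.addConGen_le.2 fun x y h => (AddCon.ker_rel _).2 (Phi0_rel s r hnoexit x y h))

theorem mk_rel {v : V} (hreg : ∃ e, s e = v) :
    (AddCon.mk' (addConGen (graphRel s r))) (Pi.single v 1) =
      (AddCon.mk' (addConGen (graphRel s r)))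
        (∑ e, if s e = v then Pi.single (r e) 1 else 0) :=
  by
  simp only [AddCon.coe_mk']
  exact (AddCon.eq _).2 (AddConGen.Rel.of _ _ ⟨v, hreg, rfl, rfl⟩)

theorem sum_out_unique (hnoexit : ∀ c : List E, IsCycle s r c → ¬ HasExit s r c)
    {v : V} (hcyc : GCyclic s r v) {e₀ : E} (he₀ : s e₀ = v)
    {α : Type*} [AddCommMonoid α] (f : E → α) :
    (∑ e, if s e = v then f e else 0) = f e₀ := by
  rw [Finset.sum_eq_single e₀]
  · rw [if_pos he₀]
  · intro b _ hb
    rw [if_neg fun hbv => hb (uniq_out s r hnoexit hcyc b e₀ hbv he₀)]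
  · intro h; exact absurd (Finset.mem_univ e₀) h

theorem mk_single_reach (hnoexit : ∀ c : List E, IsCycle s r c → ¬ HasExit s r c)
    {v w : V} (hv : GCyclic s r v) (h : Relation.ReflTransGen (GStep s r) v w) :
    (AddCon.mk' (addConGen (graphRel s r))) (Pi.single v 1) =
      (AddCon.mk' (addConGen (graphRel s r))) (Pi.single w 1) := by
  suffices H : ∀ u, Relation.ReflTransGen (GStep s r) u w → GCyclic s r u →
      (AddCon.mk' (addConGen (graphRel s r))) (Pi.single u 1) =
        (AddCon.mk' (addConGen (graphRel s r))) (Pi.single w 1) from H v h hv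
  intro u hu
  induction hu using Relation.ReflTransGen.head_induction_on with
  | refl => intro _; rfl
  | head hstep htail ih =>
    intro hcu
    obtain ⟨e, he, hre⟩ := hstep
    have hnext := gcyclic_next s r hnoexit hcu he
    have step1 := mk_rel s r ⟨e, he⟩
    rw [sum_out_unique s r hnoexit hcu he] at step1
    rw [step1, hre]
    exact ih (hre ▸ hnext.2)

theorem mk_gphi (hnoexit : ∀ c : List E, IsCycle s r c → ¬ HasExit s r c) (v : V) :
    (AddCon.mk' (addConGen (graphRel s r))) (gphi s r v) =
      (AddCon.mk' (addConGen (graphRel s r))) (Pi.single v 1) := by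
  suffices H : ∀ n (v : V), gm s r v ≤ n →
      (AddCon.mk' (addConGen (graphRel s r))) (gphi s r v) =
        (AddCon.mk' (addConGen (graphRel s r))) (Pi.single v 1) from
    H (gm s r v) v le_rfl
  intro n
  induction n using Nat.strong_induction_on with
  | _ n ih =>
  intro v hv
  by_cases hc : GCyclic s r v
  · rw [gphi_cyclic s r hc]
    exact (mk_single_reach s r hnoexit hc (grep_mem s r v).1).symm
  by_cases hreg : ∃ e, s e = v
  · rw [gphi_rec s r hc hreg, mk_rel s r hreg, map_sum, map_sum]
    refine Finset.sum_congr rfl fun e _ => ?_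
    by_cases he : s e = v
    · rw [if_pos he, if_pos he]
      have hlt : gm s r (r e) < gm s r v := gm_lt s r hc ⟨e, he, rfl⟩
      have hn : 0 < n := lt_of_lt_of_le (gm_pos s r v) hv
      exact ih (n - 1) (by omega) (r e) (by omega)
    · rw [if_neg he, if_neg he]
  · rw [gphi_sink s r hreg]

theorem mk_Phi (hnoexit : ∀ c : List E, IsCycle s r c → ¬ HasExit s r c)
    (q : (addConGen (graphRel s r)).Quotient) :
    (AddCon.mk' (addConGen (graphRel s r))) (Phi s r hnoexit q) = q := by
  induction q using AddCon.induction_on with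
  | H x =>
  have h1 : Phi s r hnoexit x = Phi0 s r x := AddCon.lift_coe _ x
  rw [h1]
  show (AddCon.mk' (addConGen (graphRel s r))) (∑ w, x w • gphi s r w) = _
  rw [map_sum]
  have h2 : ∀ w : V, (AddCon.mk' (addConGen (graphRel s r))) (x w • gphi s r w) =
      x w • (AddCon.mk' (addConGen (graphRel s r))) (Pi.single w 1) := by
    intro w
    rw [map_nsmul, mk_gphi s r hnoexit]
  rw [Finset.sum_congr rfl fun w _ => h2 w, ← Finset.sum_congr rfl
    fun w _ => map_nsmul (AddCon.mk' (addConGen (graphRel s r))) (x w) (Pi.single w 1),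
    ← map_sum]
  have h3 : (∑ w : V, x w • (Pi.single w 1 : V → ℕ)) = x := by
    funext u
    rw [Finset.sum_apply]
    have hw : ∀ w : V, (x w • (Pi.single w 1 : V → ℕ)) = Pi.single w (x w) := by
      intro w
      rw [← Pi.single_smul, smul_eq_mul, mul_one]
    rw [Finset.sum_congr rfl fun w _ => congrFun (hw w) u, ← Finset.sum_apply,
      Finset.univ_sum_single]
  rw [h3]
  rfl

end GAux3

/-- Let `E` be a finite no-exit directed graph (no cycle of `E` has an
exit).  Then the graph monoid `M_E` is cancellative: `a + c = b + c` implies `a = b`. -/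
theorem stmt_17 [Fintype V] [Fintype E] [DecidableEq V]
    (s r : E → V)
    (hnoexit : ∀ c : List E, IsCycle s r c → ¬ HasExit s r c) :
    ∀ a b c : (addConGen (graphRel s r)).Quotient, a + c = b + c → a = b := by
  intro a b c h
  have h2 : GAux3.Phi s r hnoexit a + GAux3.Phi s r hnoexit c =
      GAux3.Phi s r hnoexit b + GAux3.Phi s r hnoexit c := by
    rw [← map_add, ← map_add, h]
  have h3 : GAux3.Phi s r hnoexit a = GAux3.Phi s r hnoexit b := add_right_cancel h2
  rw [← GAux3.mk_Phi s r hnoexit a, ← GAux3.mk_Phi s r hnoexit b, h3]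
end

section
/- Let M be the quotient of the free abelian monoid on two generators x, y by the monoid congruence generated by the single relation x = 2x + 2y. Then: (a) for all positive integers m and n, n·[x + y] = m·[x + y] in M implies n = m; and (b) [x + y] = 2·[x + y] + [y] in M (so the order-unit [x + y] does not have Unbounded Generating Number, although it has the Invariant Basis Number property). -/
/-- The free abelian monoid on generators `x`, `y`, realized as `ℕ × ℕ`
(`x = (1,0)`, `y = (0,1)`), with the single defining relation `x = 2x + 2y`. -/
def relXY : ℕ × ℕ → ℕ × ℕ → Prop := fun a b => a = (1, 0) ∧ b = (2, 2)

/-- The invariant `(p, q) ↦ q - 2p`, which respects the relation `x = 2x + 2y`. -/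
def invXY : ℕ × ℕ →+ ℤ where
  toFun a := (a.2 : ℤ) - 2 * a.1
  map_zero' := by simp
  map_add' a b := by push_cast [Prod.fst_add, Prod.snd_add]; ring

lemma addConGen_le_ker : addConGen relXY ≤ AddCon.ker invXY := by
  refine AddCon.addConGen_le.mpr ?_
  rintro a b ⟨rfl, rfl⟩
  show invXY (1, 0) = invXY (2, 2)
  simp [invXY]

/-- Let `M` be the quotient of the free abelian monoid on `x`, `y` by the
monoid congruence generated by `x = 2x + 2y`.  Then
(a) for all positive integers `m`, `n`, `n • [x + y] = m • [x + y]` implies `n = m`; and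
(b) `[x + y] = 2 • [x + y] + [y]` in `M`. -/
theorem stmt_18 :
    (∀ m n : ℕ, 0 < m → 0 < n →
        n • (addConGen relXY).mk' (1, 1) = m • (addConGen relXY).mk' (1, 1) → n = m) ∧
      (addConGen relXY).mk' (1, 1) =
        2 • (addConGen relXY).mk' (1, 1) + (addConGen relXY).mk' (0, 1) := by
  constructor
  · intro m n _ _ h
    rw [← map_nsmul, ← map_nsmul] at h
    have h' : addConGen relXY (n • ((1:ℕ), (1:ℕ))) (m • ((1:ℕ), (1:ℕ))) := (AddCon.eq _).mp h
    have h2 : invXY (n • ((1 : ℕ), (1 : ℕ))) = invXY (m • ((1 : ℕ), (1 : ℕ))) :=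
      addConGen_le_ker h'
    rw [map_nsmul, map_nsmul] at h2
    have : invXY (1, 1) = -1 := by simp [invXY]
    rw [this, nsmul_eq_mul, nsmul_eq_mul] at h2
    omega
  · rw [← map_nsmul, ← map_add]
    refine (AddCon.eq _).mpr ?_
    have hbase : addConGen relXY (1, 0) (2, 2) :=
      AddConGen.Rel.of _ _ ⟨rfl, rfl⟩
    have := (addConGen relXY).add hbase ((addConGen relXY).refl (0, 1))
    convert this using 2
    all_goals rfl
end

section
/- Let M be the quotient of the free abelian monoid on three generators v₁, v₂, v₃ by the monoid congruence generated by the relations v₁ = 2v₁ + v₂ and v₂ = v₃. Then for all positive integers m > n, [(6m − 5n)·v₁ + m·v₂ + (5m − 4n)·v₃] = [n·v₁ + n·v₂ + n·v₃] in M; equivalently, m·[v₁ + v₂ + v₃] + [5(m−n)·v₁ + 4(m−n)·v₃] = n·[v₁ + v₂ + v₃], so the order-unit [v₁ + v₂ + v₃] of M does not have Unbounded Generating Number. -/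
/-- The free abelian monoid on generators `v₁`, `v₂`, `v₃`, realized as `ℕ × ℕ × ℕ`
(`v₁ = (1,0,0)`, `v₂ = (0,1,0)`, `v₃ = (0,0,1)`), with the defining relations
`v₁ = 2v₁ + v₂` and `v₂ = v₃`. -/
def relV : ℕ × ℕ × ℕ → ℕ × ℕ × ℕ → Prop := fun a b =>
  (a = (1, 0, 0) ∧ b = (2, 1, 0)) ∨ (a = (0, 1, 0) ∧ b = (0, 0, 1))

lemma relV_pump (a b c k : ℕ) :
    (addConGen relV) (a + 1, b, c) (a + 1 + k, b + k, c) := by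
  induction k with
  | zero => exact (addConGen relV).refl _
  | succ k ih =>
    refine (addConGen relV).trans ih ?_
    have h := (addConGen relV).add ((addConGen relV).refl ((a + k, b + k, c) : ℕ × ℕ × ℕ))
      (AddConGen.Rel.of _ _ (Or.inl ⟨rfl, rfl⟩))
    have e1 : ((a + k, b + k, c) : ℕ × ℕ × ℕ) + (1, 0, 0) = (a + 1 + k, b + k, c) := by
      simp [Prod.ext_iff]; omega
    have e2 : ((a + k, b + k, c) : ℕ × ℕ × ℕ) + (2, 1, 0) = (a + 1 + (k+1), b + (k+1), c) := by
      simp [Prod.ext_iff]; omega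
    rw [e1, e2] at h
    exact h

lemma relV_shift (a b c k : ℕ) :
    (addConGen relV) (a, b + k, c) (a, b, c + k) := by
  induction k with
  | zero => exact (addConGen relV).refl _
  | succ k ih =>
    refine (addConGen relV).trans ?_ ((addConGen relV).add ih ((addConGen relV).refl ((0,0,1) : ℕ × ℕ × ℕ)))
    have h := (addConGen relV).add ((addConGen relV).refl ((a, b + k, c) : ℕ × ℕ × ℕ))
      (AddConGen.Rel.of _ _ (Or.inr ⟨rfl, rfl⟩))
    have e1 : ((a, b + k, c) : ℕ × ℕ × ℕ) + (0, 1, 0) = (a, b + (k+1), c) := by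
      simp [Prod.ext_iff]; omega
    rw [e1] at h
    exact h

/-- Let `M` be the quotient of the free abelian monoid on `v₁, v₂, v₃` by
the monoid congruence generated by `v₁ = 2v₁ + v₂` and `v₂ = v₃`.  Then for all positive
integers `m > n`, `[(6m − 5n)v₁ + m v₂ + (5m − 4n)v₃] = [n v₁ + n v₂ + n v₃]` in `M`;
equivalently `m • [v₁ + v₂ + v₃] + [5(m−n) v₁ + 4(m−n) v₃] = n • [v₁ + v₂ + v₃]`
(so the order-unit `[v₁ + v₂ + v₃]` does not have Unbounded Generating Number). -/
theorem stmt_19 (m n : ℕ) (hn : 0 < n) (hmn : n < m) :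
    (addConGen relV).mk' (6 * m - 5 * n, m, 5 * m - 4 * n) =
        (addConGen relV).mk' (n, n, n) ∧
      m • (addConGen relV).mk' (1, 1, 1) +
          (addConGen relV).mk' (5 * (m - n), 0, 4 * (m - n)) =
        n • (addConGen relV).mk' (1, 1, 1) := by
  set c := addConGen relV
  obtain ⟨d, hd, rfl⟩ : ∃ d, 0 < d ∧ m = n + d := ⟨m - n, by omega, by omega⟩
  have h1 : c (n, n, n) (n + 6 * d, n + 6 * d, n) := by
    have := relV_pump (n - 1) n n (6 * d)
    have e : n - 1 + 1 = n := by omega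
    rw [e] at this
    exact this
  have h2 : c (n + 6 * d, n + 6 * d, n) (n + 6 * d, n + d, n + 5 * d) := by
    have := relV_shift (n + 6 * d) (n + d) n (5 * d)
    have e : n + d + 5 * d = n + 6 * d := by omega
    rw [e] at this
    exact this
  have hmain : c (6 * (n + d) - 5 * n, n + d, 5 * (n + d) - 4 * n) (n, n, n) := by
    have e1 : 6 * (n + d) - 5 * n = n + 6 * d := by omega
    have e2 : 5 * (n + d) - 4 * n = n + 5 * d := by omega
    rw [e1, e2]
    exact c.symm (c.trans h1 h2)
  have first : c.mk' (6 * (n + d) - 5 * n, n + d, 5 * (n + d) - 4 * n) = c.mk' (n, n, n) :=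
    (AddCon.eq c).mpr hmain
  refine ⟨first, ?_⟩
  have smul_mk : ∀ (k : ℕ) (x : ℕ × ℕ × ℕ), k • c.mk' x = c.mk' (k • x) := by
    intro k x
    exact (c.mk'.map_nsmul k x).symm
  rw [smul_mk, smul_mk, ← map_add]
  have earg : (n + d : ℕ) • ((1,1,1) : ℕ × ℕ × ℕ) + (5 * (n + d - n), 0, 4 * (n + d - n))
      = (6 * (n + d) - 5 * n, n + d, 5 * (n + d) - 4 * n) := by
    simp [Prod.ext_iff, smul_eq_mul]; omega
  rw [earg, first]
  congr 1
  simp [Prod.ext_iff, smul_eq_mul]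
end
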